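/- arXiv:1512.05261 — 10 statements merged into one kernel-verified Lean document; each statement's English description precedes it below -/
import Mathlib

section
/- For positive integers n_1, …, n_t, the integer N = n_1 + ∑_{i=2}^t (n_i − 1) is the least integer such that every t-coloring of the elements of the Boolean lattice B_N contains either a copy of the Boolean lattice B_{n_1} in color 1 or, for some i ∈ {2,…,t}, a chain of n_i subsets all of color i. (That is, BR^1(B_{n_1}, C_{n_2}, …, C_{n_t}) = n_1 + ∑_{i=2}^t (n_i − 1).) -/
open Finset

variable {α : Type*} [DecidableEq α]

/-- Length of the longest "blue" chain of subsets of `B`. -/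
def bHeight (blue : Finset α → Bool) (B : Finset α) : ℕ :=
  (if blue B then 1 else 0) + B.attach.sup (fun b => bHeight blue (B.erase b.1))
termination_by B.card
decreasing_by exact Finset.card_erase_lt_of_mem b.2

theorem bHeight_mono (blue : Finset α → Bool) :
    ∀ {B B' : Finset α}, B ⊆ B' → bHeight blue B ≤ bHeight blue B' := by
  intro B B'
  induction B' using Finset.strongInduction with
  | _ B' ih =>
    intro hBB'
    rcases eq_or_ne B B' with rfl | hne
    · exact le_rfl
    · obtain ⟨b, hbB', hbB⟩ := Finset.exists_of_ssubset (lt_of_le_of_ne hBB' hne)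
      have h1 : B ⊆ B'.erase b := Finset.subset_erase.2 ⟨hBB', hbB⟩
      have h2 : bHeight blue B ≤ bHeight blue (B'.erase b) :=
        ih _ (Finset.erase_ssubset hbB') h1
      refine h2.trans ?_
      conv_rhs => rw [bHeight]
      have : bHeight blue (B'.erase b) ≤
          B'.attach.sup (fun x => bHeight blue (B'.erase x.1)) :=
        Finset.le_sup (f := fun x : {x // x ∈ B'} => bHeight blue (B'.erase x.1))
          (Finset.mem_attach _ ⟨b, hbB'⟩)
      omega

theorem bHeight_erase_le (blue : Finset α → Bool) {B : Finset α} {b : α} (hb : b ∈ B) :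
    bHeight blue (B.erase b) ≤ bHeight blue B := bHeight_mono blue (Finset.erase_subset _ _)

theorem one_le_bHeight (blue : Finset α → Bool) {B : Finset α} (hB : blue B) :
    1 ≤ bHeight blue B := by
  rw [bHeight, if_pos hB]; omega

theorem bHeight_lt_of_ssubset (blue : Finset α → Bool) {B B' : Finset α}
    (hB : blue B) (hsub : B' ⊆ B) (hne : B' ≠ B) :
    bHeight blue B' < bHeight blue B := by
  obtain ⟨b, hbB, hbB'⟩ := Finset.exists_of_ssubset (lt_of_le_of_ne hsub hne)
  have h1 : B' ⊆ B.erase b := Finset.subset_erase.2 ⟨hsub, hbB'⟩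
  have h2 : bHeight blue B' ≤ bHeight blue (B.erase b) := bHeight_mono blue h1
  have h3 : bHeight blue (B.erase b) ≤
      B.attach.sup (fun x => bHeight blue (B.erase x.1)) :=
    Finset.le_sup (f := fun x : {x // x ∈ B} => bHeight blue (B.erase x.1))
      (Finset.mem_attach _ ⟨b, hbB⟩)
  have h4 : bHeight blue B =
      1 + B.attach.sup (fun x => bHeight blue (B.erase x.1)) := by
    rw [bHeight, if_pos hB]
  omega

theorem strictMono_snoc {k : ℕ} {β : Type*} [Preorder β] (A : Fin k → β) (top : β)
    (hA : StrictMono A) (htop : ∀ j, A j < top) : StrictMono (Fin.snoc A top) := by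
  intro i j hij
  rcases Fin.eq_castSucc_or_eq_last j with ⟨j', rfl⟩ | rfl
  · obtain ⟨i', rfl⟩ : ∃ i', i = Fin.castSucc i' := by
      refine Fin.eq_castSucc_or_eq_last i |>.resolve_right ?_
      rintro rfl
      exact absurd (hij.trans (Fin.castSucc_lt_last j')) (lt_irrefl _)
    simp only [Fin.snoc_castSucc]
    exact hA (by exact_mod_cast hij)
  · rcases Fin.eq_castSucc_or_eq_last i with ⟨i', rfl⟩ | rfl
    · simp only [Fin.snoc_castSucc, Fin.snoc_last]
      exact htop i'
    · exact absurd hij (lt_irrefl _)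

theorem bHeight_chain (blue : Finset α → Bool) (B : Finset α) :
    ∃ A : Fin (bHeight blue B) → Finset α,
      StrictMono A ∧ (∀ j, blue (A j)) ∧ (∀ j, A j ⊆ B) := by
  induction B using Finset.strongInduction with
  | _ B ih =>
    rcases B.eq_empty_or_nonempty with rfl | hB
    · have hs : (∅ : Finset α).attach.sup
          (fun x => bHeight blue ((∅ : Finset α).erase x.1)) = 0 := by
        simp
      by_cases hb : blue ∅
      · have h1 : bHeight blue (∅ : Finset α) = 1 := by rw [bHeight, if_pos hb, hs]
        rw [h1]
        refine ⟨fun _ => ∅, ?_, fun _ => hb, fun _ => le_rfl⟩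
        intro i j hij
        have := hij; omega
      · have h1 : bHeight blue (∅ : Finset α) = 0 := by
          rw [bHeight, if_neg hb, hs]
        rw [h1]
        exact ⟨Fin.elim0, fun i => i.elim0, fun i => i.elim0, fun i => i.elim0⟩
    · obtain ⟨b, _, hbsup⟩ := Finset.exists_mem_eq_sup B.attach
        (Finset.attach_nonempty_iff.2 hB)
        (fun x : {x // x ∈ B} => bHeight blue (B.erase x.1))
      obtain ⟨A', hA'mono, hA'blue, hA'sub⟩ := ih _ (Finset.erase_ssubset b.2)
      have hsubB : ∀ j, A' j ⊆ B := fun j => (hA'sub j).trans (Finset.erase_subset _ _)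
      by_cases hb : blue B
      · have h1 : bHeight blue B = bHeight blue (B.erase b.1) + 1 := by
          rw [bHeight, if_pos hb, ← hbsup]; omega
        rw [h1]
        refine ⟨Fin.snoc A' B, strictMono_snoc A' B hA'mono ?_, ?_, ?_⟩
        · intro j
          refine lt_of_le_of_ne (hsubB j) ?_
          intro hEq
          have := hA'sub j
          rw [hEq] at this
          exact absurd (this b.2) (Finset.notMem_erase _ _)
        · intro j
          rcases Fin.eq_castSucc_or_eq_last j with ⟨j', rfl⟩ | rfl
          · rw [Fin.snoc_castSucc]; exact hA'blue j'
          · rw [Fin.snoc_last]; exact hb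
        · intro j
          rcases Fin.eq_castSucc_or_eq_last j with ⟨j', rfl⟩ | rfl
          · rw [Fin.snoc_castSucc]; exact hsubB j'
          · rw [Fin.snoc_last]
      · have h1 : bHeight blue B = bHeight blue (B.erase b.1) := by
          rw [bHeight, if_neg hb, ← hbsup]; omega
        rw [h1]
        exact ⟨A', hA'mono, hA'blue, hsubB⟩

theorem bHeight_le_of_no_chain {m : ℕ} (blue : Finset α → Bool)
    (hno : ¬ ∃ A : Fin (m + 1) → Finset α, StrictMono A ∧ ∀ j, blue (A j))
    (B : Finset α) : bHeight blue B ≤ m := by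
  by_contra h
  push_neg at h
  obtain ⟨A, hmono, hblue, -⟩ := bHeight_chain blue B
  have hle : m + 1 ≤ bHeight blue B := h
  exact hno ⟨fun j => A (Fin.castLE hle j),
    hmono.comp (Fin.strictMono_castLE hle), fun j => hblue _⟩

section Embed

variable {n0 m : ℕ} (blue : Finset (Fin (n0 + m)) → Bool)

private def lowEmb : Fin n0 ↪ Fin (n0 + m) :=
  ⟨Fin.castAdd m, (Fin.strictMono_castAdd m).injective⟩

private def fullSet (A : Finset (Fin n0)) (j : ℕ) : Finset (Fin (n0 + m)) :=
  A.map lowEmb ∪ Finset.univ.filter (fun k : Fin (n0 + m) => (k : ℕ) < n0 + j ∧ n0 ≤ (k : ℕ))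

private theorem fullSet_mono {A A' : Finset (Fin n0)} {j j' : ℕ}
    (hA : A ⊆ A') (hj : j ≤ j') : (fullSet A j : Finset (Fin (n0 + m))) ⊆ fullSet A' j' := by
  refine Finset.union_subset_union (Finset.map_subset_map.2 hA) ?_
  intro k hk
  simp only [Finset.mem_filter, Finset.mem_univ, true_and] at hk ⊢
  omega

private theorem mem_fullSet_low {A : Finset (Fin n0)} {j : ℕ} {k : Fin (n0 + m)}
    (hk : k ∈ (fullSet A j : Finset (Fin (n0 + m)))) (hlow : (k : ℕ) < n0) :
    ∃ a ∈ A, lowEmb a = k := by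
  rcases Finset.mem_union.1 hk with h | h
  · obtain ⟨a, ha, rfl⟩ := Finset.mem_map.1 h
    exact ⟨a, ha, rfl⟩
  · simp only [Finset.mem_filter] at h
    omega

theorem embed_boolean (hno : ∀ B : Finset (Fin (n0 + m)), bHeight blue B ≤ m) :
    ∃ f : Finset (Fin n0) → Finset (Fin (n0 + m)),
      Function.Injective f ∧ (∀ S T, S ⊆ T → f S ⊆ f T) ∧ ∀ S, blue (f S) = false := by
  have hex : ∀ A : Finset (Fin n0), ∃ j, bHeight blue (fullSet A j) ≤ j :=
    fun A => ⟨m, hno _⟩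
  refine ⟨fun A => fullSet A (Nat.find (hex A)), ?_, ?_, ?_⟩
  · -- injective
    intro A A' hEq
    simp only at hEq
    have key : ∀ (B B' : Finset (Fin n0)),
        (fullSet B (Nat.find (hex B)) : Finset (Fin (n0 + m))) = fullSet B' (Nat.find (hex B')) → B ⊆ B' := by
      intro B B' h a ha
      have hk : lowEmb a ∈ (fullSet B' (Nat.find (hex B')) : Finset (Fin (n0 + m))) := by
        rw [← h]
        exact Finset.mem_union_left _ (Finset.mem_map_of_mem _ ha)
      have hlow : ((lowEmb a : Fin (n0 + m)) : ℕ) < n0 := a.2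
      obtain ⟨a', ha', haa⟩ := mem_fullSet_low hk hlow
      have : a' = a := lowEmb.injective haa
      rwa [← this]
    exact Finset.Subset.antisymm (key _ _ hEq) (key _ _ hEq.symm)
  · -- monotone
    intro S T hST
    show fullSet S (Nat.find (hex S)) ⊆ fullSet T (Nat.find (hex T))
    refine fullSet_mono hST ?_
    exact Nat.find_mono (fun j hj => le_trans (bHeight_mono blue (fullSet_mono hST le_rfl)) hj)
  · -- color
    intro A
    show blue (fullSet A (Nat.find (hex A))) = false
    by_contra hblue
    rw [Bool.not_eq_false] at hblue
    have hPj : bHeight blue (fullSet A (Nat.find (hex A))) ≤ Nat.find (hex A) :=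
      Nat.find_spec (hex A)
    have hj1 : 1 ≤ Nat.find (hex A) := le_trans (one_le_bHeight blue hblue) hPj
    have hjm : Nat.find (hex A) ≤ m := Nat.find_min' (hex A) (hno _)
    have hPj' : ¬ bHeight blue (fullSet A (Nat.find (hex A) - 1)) ≤ Nat.find (hex A) - 1 :=
      Nat.find_min (hex A) (by omega)
    have hxval : n0 + (Nat.find (hex A) - 1) < n0 + m := by omega
    have hxin : (⟨n0 + (Nat.find (hex A) - 1), hxval⟩ : Fin (n0 + m)) ∈
        (fullSet A (Nat.find (hex A)) : Finset (Fin (n0 + m))) := by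
      refine Finset.mem_union_right _ ?_
      simp only [Finset.mem_filter, Finset.mem_univ, true_and]
      refine ⟨?_, ?_⟩
      · show n0 + (Nat.find (hex A) - 1) < n0 + Nat.find (hex A); omega
      · show n0 ≤ n0 + (Nat.find (hex A) - 1); omega
    have hxout : (⟨n0 + (Nat.find (hex A) - 1), hxval⟩ : Fin (n0 + m)) ∉
        (fullSet A (Nat.find (hex A) - 1) : Finset (Fin (n0 + m))) := by
      intro hmem
      rcases Finset.mem_union.1 hmem with h | h
      · obtain ⟨a, _, ha⟩ := Finset.mem_map.1 h
        have h2 : ((lowEmb a : Fin (n0 + m)) : ℕ) < n0 := a.2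
        rw [ha] at h2
        simp only at h2
        omega
      · simp only [Finset.mem_filter] at h
        omega
    have hsub : (fullSet A (Nat.find (hex A) - 1) : Finset (Fin (n0 + m))) ⊆
        fullSet A (Nat.find (hex A)) :=
      fullSet_mono le_rfl (by omega)
    have hne : (fullSet A (Nat.find (hex A) - 1) : Finset (Fin (n0 + m))) ≠
        fullSet A (Nat.find (hex A)) := by
      intro hEq; rw [hEq] at hxout; exact hxout hxin
    have := bHeight_lt_of_ssubset blue hblue hsub hne
    omega

end Embed

theorem card_growth {β : Type*} {k : ℕ} (hk : 0 < k) (A : Fin k → Finset β)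
    (hA : StrictMono A) (j : Fin k) : (A ⟨0, hk⟩).card + (j : ℕ) ≤ (A j).card := by
  suffices h : ∀ v (j : Fin k), (j : ℕ) = v → (A ⟨0, hk⟩).card + (j : ℕ) ≤ (A j).card by
    exact h (j : ℕ) j rfl
  intro v
  induction v with
  | zero =>
    intro j hj
    have : j = ⟨0, hk⟩ := Fin.ext hj
    rw [this]
    simp
  | succ v ihv =>
    intro j hj
    have hv : v < k := by omega
    have hlt : (⟨v, hv⟩ : Fin k) < j := Fin.lt_def.2 (show v < (j : ℕ) by omega)
    have hcard : (A ⟨v, hv⟩).card < (A j).card :=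
      Finset.card_lt_card (hA hlt)
    have h2 := ihv ⟨v, hv⟩ rfl
    have hvv : ((⟨v, hv⟩ : Fin k) : ℕ) = v := rfl
    omega

theorem pigeonhole_chain {t : ℕ} (n : Fin (t + 1) → ℕ) (hn : ∀ i, 1 ≤ n i) {N : ℕ}
    (c : Finset (Fin N) → Fin (t + 1))
    (A : Fin (∑ i : Fin t, (n i.succ - 1) + 1) → Finset (Fin N))
    (hA : StrictMono A) (hne : ∀ j, c (A j) ≠ 0) :
    ∃ i : Fin t, ∃ A' : Fin (n i.succ) → Finset (Fin N),
      StrictMono A' ∧ ∀ j, c (A' j) = i.succ := by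
  have hval : ∀ j, 1 ≤ (c (A j) : ℕ) := by
    intro j
    have h0 : (c (A j) : ℕ) ≠ 0 := by
      exact fun h => hne j (Fin.ext (by simp [h]))
    omega
  set idx : Fin (∑ i : Fin t, (n i.succ - 1) + 1) → Fin t := fun j =>
    ⟨(c (A j) : ℕ) - 1, by have := (c (A j)).2; have := hval j; omega⟩ with hidx
  have hcidx : ∀ j, c (A j) = (idx j).succ := by
    intro j
    apply Fin.ext
    have := hval j
    simp only [hidx, Fin.val_succ]
    omega
  have hsum : ∑ i : Fin t, (Finset.univ.filter (fun j => idx j = i)).card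
      = ∑ i : Fin t, (n i.succ - 1) + 1 := by
    rw [← Finset.card_eq_sum_card_fiberwise (fun j _ => Finset.mem_univ (idx j))]
    simp
  have hex : ∃ i : Fin t, n i.succ - 1 < (Finset.univ.filter (fun j => idx j = i)).card := by
    by_contra hcon
    push_neg at hcon
    have h1 := Finset.sum_le_sum (fun i (_ : i ∈ Finset.univ) => hcon i)
    rw [hsum] at h1
    omega
  obtain ⟨i, hi⟩ := hex
  set s := Finset.univ.filter (fun j => idx j = i) with hs
  have hcard : n i.succ ≤ s.card := by have := hn i.succ; omega
  refine ⟨i, fun j => A (s.orderEmbOfFin rfl (Fin.castLE hcard j)), ?_, ?_⟩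
  · intro j j' hjj'
    exact hA ((s.orderEmbOfFin rfl).strictMono (Fin.strictMono_castLE hcard hjj'))
  · intro j
    have hmem := Finset.orderEmbOfFin_mem s rfl (Fin.castLE hcard j)
    have hmem2 : idx (s.orderEmbOfFin rfl (Fin.castLE hcard j)) = i :=
      (Finset.mem_filter.1 hmem).2
    exact (hcidx _).trans (by rw [hmem2])

section Lower

variable (t : ℕ) (n : Fin (t + 1) → ℕ)

def fnat : ℕ → ℕ := fun k => if h : k < t then n (Fin.succ ⟨k, h⟩) - 1 else 0

def sig : ℕ → ℕ := fun i => n 0 + ∑ k ∈ Finset.range i, fnat t n k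

theorem sig_t_eq : sig t n t = n 0 + ∑ i : Fin t, (n i.succ - 1) := by
  unfold sig
  congr 1
  rw [← Fin.sum_univ_eq_sum_range]
  apply Finset.sum_congr rfl
  intro i _
  simp [fnat, i.2]

theorem sig_mono {i j : ℕ} (h : i ≤ j) : sig t n i ≤ sig t n j := by
  unfold sig
  have := Finset.sum_le_sum_of_subset (Finset.range_subset_range.2 h)
    (f := fnat t n)
  omega

theorem sig_succ (i : ℕ) : sig t n (i + 1) = sig t n i + fnat t n i := by
  unfold sig
  rw [Finset.sum_range_succ]
  omega

theorem hexP (s : ℕ) : ∃ i, t ≤ i ∨ s < sig t n (i + 1) := ⟨t, Or.inl le_rfl⟩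

open Fin.NatCast in
def colNat : ℕ → Fin (t + 1) := fun s =>
  if s < n 0 then 0 else ((Nat.find (hexP t n s) + 1 : ℕ) : Fin (t + 1))

theorem colNat_small {s : ℕ} (h : s < n 0) : colNat t n s = 0 := if_pos h

open Fin.NatCast in
theorem colNat_big {s : ℕ} (h1 : n 0 ≤ s) (h2 : s < sig t n t) :
    Nat.find (hexP t n s) < t ∧
    (colNat t n s : ℕ) = Nat.find (hexP t n s) + 1 ∧
    sig t n (Nat.find (hexP t n s)) ≤ s ∧
    s < sig t n (Nat.find (hexP t n s) + 1) := by
  have ht : 1 ≤ t := by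
    by_contra h
    have : t = 0 := by omega
    subst this
    have : sig 0 n 0 = n 0 := by simp [sig]
    omega
  have hfind_lt : Nat.find (hexP t n s) < t := by
    have : Nat.find (hexP t n s) ≤ t - 1 :=
      Nat.find_min' _ (Or.inr (by
        have : t - 1 + 1 = t := by omega
        rw [this]; exact h2))
    omega
  have hspec := Nat.find_spec (hexP t n s)
  have hupper : s < sig t n (Nat.find (hexP t n s) + 1) := by
    rcases hspec with h | h
    · omega
    · exact h
  have hlower : sig t n (Nat.find (hexP t n s)) ≤ s := by
    rcases Nat.eq_zero_or_pos (Nat.find (hexP t n s)) with h0 | h0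
    · rw [h0]
      have : sig t n 0 = n 0 := by simp [sig]
      omega
    · have hmin := Nat.find_min (hexP t n s) (show Nat.find (hexP t n s) - 1 < _ by omega)
      push_neg at hmin
      have := hmin.2
      have heq : Nat.find (hexP t n s) - 1 + 1 = Nat.find (hexP t n s) := by omega
      rw [heq] at this
      omega
  refine ⟨hfind_lt, ?_, hlower, hupper⟩
  unfold colNat
  rw [if_neg (not_lt.2 h1)]
  exact Fin.val_cast_of_lt (n := t + 1) (by omega)

end Lower

/-- `BR^1(B_{n 0}, C_{n 1}, …, C_{n t}) = n 0 + ∑_{i=1}^{t} (n i − 1)`: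
the stated value is the least `N` such that every `(t+1)`-coloring of the elements
of the Boolean lattice `B_N` contains either a copy of the Boolean lattice `B_{n 0}`
in color `0`, or a chain of `n i` subsets all of color `i` for some `i ≥ 1`. -/
theorem boolean_ramsey_boolean_vs_chains
    (t : ℕ) (n : Fin (t + 1) → ℕ) (hn : ∀ i, 1 ≤ n i) :
    IsLeast
      {N : ℕ | ∀ c : Finset (Fin N) → Fin (t + 1),
        (∃ f : Finset (Fin (n 0)) → Finset (Fin N),
            Function.Injective f ∧
            (∀ S T : Finset (Fin (n 0)), S ⊆ T → f S ⊆ f T) ∧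
            (∀ S, c (f S) = 0)) ∨
        (∃ i : Fin t, ∃ A : Fin (n i.succ) → Finset (Fin N),
            StrictMono A ∧ ∀ j, c (A j) = i.succ)}
      (n 0 + ∑ i : Fin t, (n i.succ - 1)) := by
  constructor
  · -- membership
    intro c
    by_cases hch : ∃ i : Fin t,
        ∃ A : Fin (n i.succ) → Finset (Fin (n 0 + ∑ i : Fin t, (n i.succ - 1))),
          StrictMono A ∧ ∀ j, c (A j) = i.succ
    · exact Or.inr hch
    · left
      set blue : Finset (Fin (n 0 + ∑ i : Fin t, (n i.succ - 1))) → Bool :=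
        fun B => decide (c B ≠ 0) with hblue
      have hno : ∀ B, bHeight blue B ≤ ∑ i : Fin t, (n i.succ - 1) := by
        apply bHeight_le_of_no_chain
        rintro ⟨A, hmono, hb⟩
        apply hch
        refine pigeonhole_chain n hn c A hmono ?_
        intro j
        have h1 := hb j
        simpa [hblue] using h1
      obtain ⟨f, hinj, hmono, hcol⟩ := embed_boolean blue hno
      refine ⟨f, hinj, hmono, ?_⟩
      intro S
      have h1 := hcol S
      simpa [hblue] using h1
  · -- lower bound
    intro N' hN'
    by_contra hlt
    push_neg at hlt
    have hsig : N' < sig t n t := by rw [sig_t_eq]; exact hlt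
    set c : Finset (Fin N') → Fin (t + 1) := fun A => colNat t n A.card with hc
    have hcardle : ∀ A : Finset (Fin N'), A.card ≤ N' := by
      intro A
      have := Finset.card_le_univ A
      simpa using this
    rcases hN' c with ⟨f, hinj, hmono, hcol⟩ | ⟨i, A, hA, hcolA⟩
    · -- color-0 Boolean cube: contradiction
      set F : Fin (n 0 + 1) → Finset (Fin (n 0)) :=
        fun k => Finset.univ.filter (fun x : Fin (n 0) => (x : ℕ) < (k : ℕ)) with hF
      set g : Fin (n 0 + 1) → Finset (Fin N') := fun k => f (F k) with hg
      have hgmono : StrictMono g := by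
        intro k k' hkk'
        have hsub : F k ⊆ F k' := by
          intro x hx
          simp only [hF, Finset.mem_filter, Finset.mem_univ, true_and] at hx ⊢
          have : (k : ℕ) < (k' : ℕ) := hkk'
          omega
        have hne : F k ≠ F k' := by
          have hx : (k : ℕ) < n 0 := by
            have h1 : (k : ℕ) < (k' : ℕ) := hkk'
            have h2 : (k' : ℕ) < n 0 + 1 := k'.2
            omega
          intro hEq
          have hmem : (⟨(k : ℕ), hx⟩ : Fin (n 0)) ∈ F k' := by
            simp only [hF, Finset.mem_filter, Finset.mem_univ, true_and]
            exact hkk'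
          rw [← hEq] at hmem
          simp only [hF, Finset.mem_filter, Finset.mem_univ, true_and] at hmem
          omega
        exact lt_of_le_of_ne (hmono _ _ hsub) (fun hEq => hne (hinj hEq))
      have hsmall : ∀ k, (g k).card < n 0 := by
        intro k
        by_contra hbig
        push_neg at hbig
        have h2 : (g k).card < sig t n t := lt_of_le_of_lt (hcardle _) hsig
        have hb := colNat_big t n hbig h2
        have h0 : colNat t n (g k).card = 0 := hcol (F k)
        rw [h0] at hb
        simp at hb
      have hgrow := card_growth (Nat.succ_pos _) g hgmono ⟨n 0, by omega⟩
      have h1 := hsmall ⟨0, Nat.succ_pos _⟩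
      have h2 := hsmall ⟨n 0, by omega⟩
      simp only at hgrow
      omega
    · -- monochromatic chain in color i.succ: contradiction
      have hrange : ∀ j, sig t n (i : ℕ) ≤ (A j).card ∧
          (A j).card < sig t n ((i : ℕ) + 1) := by
        intro j
        have hcj : colNat t n (A j).card = i.succ := hcolA j
        have hge : n 0 ≤ (A j).card := by
          by_contra hsm
          push_neg at hsm
          rw [colNat_small t n hsm] at hcj
          exact (Fin.succ_ne_zero i) hcj.symm
        have h2 : (A j).card < sig t n t := lt_of_le_of_lt (hcardle _) hsig
        obtain ⟨hflt, hval, hlow, hhigh⟩ := colNat_big t n hge h2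
        have hival : Nat.find (hexP t n (A j).card) = (i : ℕ) := by
          have : (colNat t n (A j).card : ℕ) = (i : ℕ) + 1 := by
            rw [hcj]; rfl
          omega
        rw [hival] at hlow hhigh
        exact ⟨hlow, hhigh⟩
      have hpos : 0 < n i.succ := hn i.succ
      have hgrow := card_growth hpos A hA ⟨n i.succ - 1, by omega⟩
      have h1 := hrange ⟨0, hpos⟩
      have h2 := hrange ⟨n i.succ - 1, by omega⟩
      have hwin : sig t n ((i : ℕ) + 1) = sig t n (i : ℕ) + (n i.succ - 1) := by
        rw [sig_succ]
        congr 1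
        unfold fnat
        rw [dif_pos i.2]
      simp only at hgrow
      omega
end

section
/- Let P_1, …, P_t be finite posets and let M be an integer such that every t-coloring of the elements of the Boolean lattice B_M contains a copy of P_i in color i for some i ∈ {1,…,t}. Then for all positive integers n_1, …, n_s, every (t+s)-coloring of the elements of B_{M + ∑_{j=1}^s (n_j − 1)} contains either a copy of P_i in color i for some i ∈ {1,…,t}, or a chain of n_j subsets all of color t+j for some j ∈ {1,…,s}. (That is, BR^1(P_1,…,P_t,C_{n_1},…,C_{n_s}) ≤ BR^1(P_1,…,P_t) + ∑_{j=1}^s (n_j − 1).) -/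
/-! Auxiliary machinery: longest monochromatic chains inside a set. -/

/-- `Qch c j S m`: there is a strictly increasing chain of `m` subsets of `S`,
all of color `Sum.inr j`. -/
def Qch {N t s : ℕ} (c : Finset (Fin N) → Fin t ⊕ Fin s) (j : Fin s)
    (S : Finset (Fin N)) (m : ℕ) : Prop :=
  ∃ A : Fin m → Finset (Fin N), StrictMono A ∧ (∀ l, c (A l) = Sum.inr j) ∧ ∀ l, A l ⊆ S

lemma Qch_zero {N t s : ℕ} (c : Finset (Fin N) → Fin t ⊕ Fin s) (j : Fin s)
    (S : Finset (Fin N)) : Qch c j S 0 :=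
  ⟨fun l => l.elim0, fun a => a.elim0, fun l => l.elim0, fun l => l.elim0⟩

lemma Qch_le {N t s : ℕ} {c : Finset (Fin N) → Fin t ⊕ Fin s} {j : Fin s}
    {S : Finset (Fin N)} {m : ℕ} (h : Qch c j S m) : m ≤ 2 ^ N := by
  obtain ⟨A, hA, -, -⟩ := h
  calc m = Fintype.card (Fin m) := (Fintype.card_fin m).symm
    _ ≤ Fintype.card (Finset (Fin N)) := Fintype.card_le_of_injective A hA.injective
    _ = 2 ^ N := by simp [Fintype.card_finset]

lemma Qch_mono_m {N t s : ℕ} {c : Finset (Fin N) → Fin t ⊕ Fin s} {j : Fin s}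
    {S : Finset (Fin N)} {m m' : ℕ} (hm : m' ≤ m) (h : Qch c j S m) : Qch c j S m' := by
  obtain ⟨A, hA, hc, hs⟩ := h
  exact ⟨fun l => A (Fin.castLE hm l), fun a b hab => hA hab, fun l => hc _, fun l => hs _⟩

lemma Qch_subset {N t s : ℕ} {c : Finset (Fin N) → Fin t ⊕ Fin s} {j : Fin s}
    {S S' : Finset (Fin N)} {m : ℕ} (hss : S ⊆ S') (h : Qch c j S m) : Qch c j S' m := by
  obtain ⟨A, hA, hc, hs⟩ := h
  exact ⟨A, hA, hc, fun l => (hs l).trans hss⟩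

open Classical in
/-- The length of the longest chain of subsets of `S` all of color `Sum.inr j`. -/
noncomputable def dch {N t s : ℕ} (c : Finset (Fin N) → Fin t ⊕ Fin s) (j : Fin s)
    (S : Finset (Fin N)) : ℕ :=
  Nat.findGreatest (Qch c j S) (2 ^ N)

lemma dch_spec {N t s : ℕ} (c : Finset (Fin N) → Fin t ⊕ Fin s) (j : Fin s)
    (S : Finset (Fin N)) : Qch c j S (dch c j S) :=
  open Classical in Nat.findGreatest_spec (Nat.zero_le _) (Qch_zero c j S)

lemma le_dch {N t s : ℕ} {c : Finset (Fin N) → Fin t ⊕ Fin s} {j : Fin s}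
    {S : Finset (Fin N)} {m : ℕ} (h : Qch c j S m) : m ≤ dch c j S :=
  open Classical in Nat.le_findGreatest (Qch_le h) h

lemma dch_mono {N t s : ℕ} {c : Finset (Fin N) → Fin t ⊕ Fin s} {j : Fin s}
    {S S' : Finset (Fin N)} (hss : S ⊆ S') : dch c j S ≤ dch c j S' :=
  le_dch (Qch_subset hss (dch_spec c j S))

lemma dch_append {N t s : ℕ} {c : Finset (Fin N) → Fin t ⊕ Fin s} {j : Fin s}
    {S S' : Finset (Fin N)} (hc : c S' = Sum.inr j) (hss : S ⊂ S') :
    dch c j S + 1 ≤ dch c j S' := by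
  apply le_dch
  obtain ⟨A, hA, hcl, hsub⟩ := dch_spec c j S
  refine ⟨fun l => if h : l.val < dch c j S then A ⟨l.val, h⟩ else S', ?_, ?_, ?_⟩
  · intro a b hab
    have hab' : a.val < b.val := hab
    have hb : b.val < dch c j S + 1 := b.isLt
    by_cases ha : a.val < dch c j S
    · by_cases hbd : b.val < dch c j S
      · simp only [dif_pos ha, dif_pos hbd]
        exact hA (Fin.mk_lt_mk.mpr hab')
      · simp only [dif_pos ha, dif_neg hbd]
        exact Finset.lt_iff_ssubset.mpr (ssubset_of_subset_of_ssubset (hsub _) hss)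
    · exfalso; omega
  · intro l
    by_cases h : l.val < dch c j S
    · simp only [dif_pos h]; exact hcl _
    · simp only [dif_neg h]; exact hc
  · intro l
    by_cases h : l.val < dch c j S
    · simp only [dif_pos h]; exact (hsub _).trans hss.subset
    · simp only [dif_neg h]; exact subset_rfl

lemma dch_le_of_no_chain {N t s : ℕ} {c : Finset (Fin N) → Fin t ⊕ Fin s} {j : Fin s}
    {n : ℕ} (H : ∀ A : Fin n → Finset (Fin N), StrictMono A → ∃ l, c (A l) ≠ Sum.inr j)
    (S : Finset (Fin N)) : dch c j S ≤ n - 1 := by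
  by_contra h
  have hn : n ≤ dch c j S := by omega
  obtain ⟨A, hA, hc, -⟩ := Qch_mono_m hn (dch_spec c j S)
  obtain ⟨l, hl⟩ := H A hA
  exact hl (hc l)

/-- The sum over all chain-colors of the longest monochromatic chain inside `S`. -/
noncomputable def Dch {N t s : ℕ} (c : Finset (Fin N) → Fin t ⊕ Fin s)
    (S : Finset (Fin N)) : ℕ :=
  ∑ j, dch c j S

lemma Dch_mono {N t s : ℕ} {c : Finset (Fin N) → Fin t ⊕ Fin s}
    {S S' : Finset (Fin N)} (hss : S ⊆ S') : Dch c S ≤ Dch c S' :=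
  Finset.sum_le_sum fun j _ => dch_mono hss

lemma dch_le_Dch {N t s : ℕ} (c : Finset (Fin N) → Fin t ⊕ Fin s) (j : Fin s)
    (S : Finset (Fin N)) : dch c j S ≤ Dch c S := by
  unfold Dch
  exact Finset.single_le_sum (f := fun j => dch c j S) (fun _ _ => Nat.zero_le _)
    (Finset.mem_univ j)

lemma Dch_step {N t s : ℕ} {c : Finset (Fin N) → Fin t ⊕ Fin s} {j : Fin s}
    {S S' : Finset (Fin N)} (hc : c S' = Sum.inr j) (hss : S ⊂ S') :
    Dch c S < Dch c S' :=
  Finset.sum_lt_sum (fun j' _ => dch_mono hss.subset)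
    ⟨j, Finset.mem_univ j, Nat.lt_of_succ_le (dch_append hc hss)⟩

/-! Embedding of `B_M` into `B_{M+L}` together with an extra chain. -/

def embML (M L : ℕ) : Fin M ↪ Fin (M + L) :=
  ⟨fun p => ⟨p.val, Nat.lt_of_lt_of_le p.isLt (Nat.le_add_right M L)⟩,
   fun a b hab => by
    apply Fin.val_injective
    have h := congrArg Fin.val hab
    exact h⟩

@[simp] lemma embML_val {M L : ℕ} (p : Fin M) : (embML M L p).val = p.val := rfl

def TML (M L : ℕ) (k : ℕ) : Finset (Fin (M + L)) :=
  Finset.univ.filter (fun q => M ≤ q.val ∧ q.val < M + k)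

lemma mem_TML {M L k : ℕ} (q : Fin (M + L)) :
    q ∈ TML M L k ↔ M ≤ q.val ∧ q.val < M + k := by
  simp [TML]

def EML (M L : ℕ) (X : Finset (Fin M)) (k : ℕ) : Finset (Fin (M + L)) :=
  X.map (embML M L) ∪ TML M L k

lemma mem_map_embML {M L : ℕ} {X : Finset (Fin M)} {q : Fin (M + L)}
    (h : q ∈ X.map (embML M L)) : q.val < M := by
  obtain ⟨p, hp, rfl⟩ := Finset.mem_map.mp h
  simpa using p.isLt

lemma EML_mono {M L : ℕ} {X Y : Finset (Fin M)} {k k' : ℕ} (hXY : X ⊆ Y) (hk : k ≤ k') :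
    EML M L X k ⊆ EML M L Y k' := by
  apply Finset.union_subset_union (Finset.map_subset_map.mpr hXY)
  intro q hq
  rw [mem_TML] at hq ⊢
  omega

lemma mem_EML_emb {M L : ℕ} (X : Finset (Fin M)) (k : ℕ) (p : Fin M) :
    embML M L p ∈ EML M L X k ↔ p ∈ X := by
  unfold EML
  rw [Finset.mem_union]
  constructor
  · rintro (h | h)
    · exact (Finset.mem_map' _).mp h
    · rw [mem_TML] at h
      have h1 := p.isLt
      have h2 : (embML M L p).val = p.val := rfl
      omega
  · exact fun h => Or.inl ((Finset.mem_map' _).mpr h)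

lemma EML_inj {M L : ℕ} {X Y : Finset (Fin M)} {k k' : ℕ}
    (h : EML M L X k = EML M L Y k') : X = Y := by
  ext p
  rw [← mem_EML_emb X k p, h, mem_EML_emb]

lemma EML_ssubset {M L : ℕ} (X : Finset (Fin M)) {k k' : ℕ} (hk : k < k') (hk' : k' ≤ L) :
    EML M L X k ⊂ EML M L X k' := by
  have hMk : M + k < M + L := by omega
  have hv : ((⟨M + k, hMk⟩ : Fin (M + L))).val = M + k := rfl
  rw [Finset.ssubset_iff_of_subset (EML_mono subset_rfl hk.le)]
  refine ⟨⟨M + k, hMk⟩, ?_, ?_⟩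
  · unfold EML
    rw [Finset.mem_union, mem_TML, hv]
    exact Or.inr ⟨by omega, by omega⟩
  · intro hmem
    unfold EML at hmem
    rw [Finset.mem_union, mem_TML, hv] at hmem
    rcases hmem with h | h
    · have h2 := mem_map_embML h
      omega
    · omega

/-- `BR^1(P_1,…,P_t,C_{n_1},…,C_{n_s}) ≤ BR^1(P_1,…,P_t) + ∑_j (n_j − 1)`.
If every `t`-coloring of `B_M` contains a copy of `P i` in color `i` for some `i`,
then every `(t+s)`-coloring (colors `Sum.inl i` and `Sum.inr j`) of
`B_{M + ∑_j (n_j − 1)}` contains a copy of `P i` in color `inl i` for some `i`,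
or a chain of `nn j` subsets all of color `inr j` for some `j`. -/
theorem boolean_ramsey_append_chains
    (t s : ℕ) (P : Fin t → Type) [∀ i, PartialOrder (P i)] [∀ i, Fintype (P i)]
    (M : ℕ)
    (hM : ∀ c : Finset (Fin M) → Fin t,
      ∃ (i : Fin t) (f : P i → Finset (Fin M)),
        Function.Injective f ∧
        (∀ x y : P i, x ≤ y → f x ⊆ f y) ∧
        (∀ x : P i, c (f x) = i))
    (nn : Fin s → ℕ) (hnn : ∀ j, 1 ≤ nn j) :
    ∀ c : Finset (Fin (M + ∑ j, (nn j - 1))) → (Fin t ⊕ Fin s),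
      (∃ (i : Fin t) (f : P i → Finset (Fin (M + ∑ j, (nn j - 1)))),
        Function.Injective f ∧
        (∀ x y : P i, x ≤ y → f x ⊆ f y) ∧
        (∀ x : P i, c (f x) = Sum.inl i)) ∨
      (∃ (j : Fin s) (A : Fin (nn j) → Finset (Fin (M + ∑ j, (nn j - 1)))),
        StrictMono A ∧ ∀ l, c (A l) = Sum.inr j) := by
  intro c
  by_cases H : ∃ (j : Fin s) (A : Fin (nn j) → Finset (Fin (M + ∑ j, (nn j - 1)))),
      StrictMono A ∧ ∀ l, c (A l) = Sum.inr j
  · exact Or.inr H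
  left
  push_neg at H
  classical
  have hD_le : ∀ S : Finset (Fin (M + ∑ j, (nn j - 1))), Dch c S ≤ ∑ j, (nn j - 1) := by
    intro S
    exact Finset.sum_le_sum fun j _ => dch_le_of_no_chain (H j) S
  have exK : ∀ X : Finset (Fin M), ∃ k, k ≤ (∑ j, (nn j - 1)) ∧
      Dch c (EML M (∑ j, (nn j - 1)) X k) ≤ k :=
    fun X => ⟨∑ j, (nn j - 1), le_rfl, hD_le _⟩
  let kk : Finset (Fin M) → ℕ := fun X => Nat.find (exK X)
  have hkk_spec : ∀ X, kk X ≤ (∑ j, (nn j - 1)) ∧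
      Dch c (EML M (∑ j, (nn j - 1)) X (kk X)) ≤ kk X :=
    fun X => Nat.find_spec (exK X)
  have hkk_mono : ∀ {X Y : Finset (Fin M)}, X ⊆ Y → kk X ≤ kk Y := by
    intro X Y hXY
    exact Nat.find_min' (exK X) ⟨(hkk_spec Y).1,
      le_trans (Dch_mono (EML_mono hXY le_rfl)) (hkk_spec Y).2⟩
  have hcolor : ∀ X : Finset (Fin M),
      ∃ i, c (EML M (∑ j, (nn j - 1)) X (kk X)) = Sum.inl i := by
    intro X
    cases hcl : c (EML M (∑ j, (nn j - 1)) X (kk X)) with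
    | inl i => exact ⟨i, rfl⟩
    | inr j =>
      exfalso
      have hsp := hkk_spec X
      rcases Nat.eq_zero_or_pos (kk X) with h0 | hpos
      · rw [h0] at hsp hcl
        have h1 : 1 ≤ dch c j (EML M (∑ j, (nn j - 1)) X 0) := by
          apply le_dch
          refine ⟨fun _ => EML M (∑ j, (nn j - 1)) X 0, ?_, fun _ => hcl,
            fun _ => subset_rfl⟩
          intro a b hab
          rw [Subsingleton.elim a b] at hab
          exact absurd hab (lt_irrefl _)
        have h2 := le_trans h1 (dch_le_Dch c j (EML M (∑ j, (nn j - 1)) X 0))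
        have h3 := hsp.2
        omega
      · obtain ⟨k', hk'⟩ : ∃ k', kk X = k' + 1 := ⟨kk X - 1, by omega⟩
        have hmin := Nat.find_min (exK X) (show k' < kk X by omega)
        have hk'L : k' ≤ ∑ j, (nn j - 1) := by have := hsp.1; omega
        have hDk' : k' + 1 ≤ Dch c (EML M (∑ j, (nn j - 1)) X k') := by
          by_contra hcon
          exact hmin ⟨hk'L, by omega⟩
        have hss : EML M (∑ j, (nn j - 1)) X k' ⊂ EML M (∑ j, (nn j - 1)) X (kk X) :=
          EML_ssubset X (by omega) hsp.1
        have hstep : Dch c (EML M (∑ j, (nn j - 1)) X k')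
            < Dch c (EML M (∑ j, (nn j - 1)) X (kk X)) := Dch_step hcl hss
        have h3 := hsp.2
        omega
  let c' : Finset (Fin M) → Fin t := fun X => (hcolor X).choose
  have hc' : ∀ X, c (EML M (∑ j, (nn j - 1)) X (kk X)) = Sum.inl (c' X) :=
    fun X => (hcolor X).choose_spec
  obtain ⟨i, g, hg_inj, hg_mono, hg_col⟩ := hM c'
  refine ⟨i, fun x => EML M (∑ j, (nn j - 1)) (g x) (kk (g x)), ?_, ?_, ?_⟩
  · intro x y hxy
    exact hg_inj (EML_inj hxy)
  · intro x y hxy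
    exact EML_mono (hg_mono x y hxy) (hkk_mono (hg_mono x y hxy))
  · intro x
    rw [hc' (g x), hg_col x]
end

section
/- Let P_1, …, P_t be finite posets, n a positive integer, and L_1, …, L_t real numbers such that for each i, every P_i-free family F of subsets of {1,…,n} satisfies lu_n(F) = ∑_{F∈F} 1/binom(n,|F|) ≤ L_i. If ∑_{i=1}^t L_i < n + 1, then every t-coloring of the elements of the Boolean lattice B_n contains a copy of P_i in color i for some i ∈ {1,…,t}. -/
/-- the Lubell-function bound for 1-uniform Boolean Ramsey numbers.
If for each `i`, every `P i`-free family `𝓕` of subsets of `{1,…,n}` satisfies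
`lu_n(𝓕) = ∑_{F ∈ 𝓕} 1/(n choose |F|) ≤ L i`, and `∑ i, L i < n + 1`, then every
`t`-coloring of the elements of the Boolean lattice `B_n` contains a copy of
`P i` in color `i` for some `i`. -/
theorem boolean_ramsey_lubell_bound
    (t n : ℕ) (hn : 1 ≤ n)
    (P : Fin t → Type) [∀ i, PartialOrder (P i)] [∀ i, Fintype (P i)]
    (L : Fin t → ℝ)
    (hL : ∀ (i : Fin t) (𝓕 : Finset (Finset (Fin n))),
      (¬ ∃ f : P i → Finset (Fin n),
          Function.Injective f ∧
          (∀ x y : P i, x ≤ y → f x ⊆ f y) ∧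
          (∀ x : P i, f x ∈ 𝓕)) →
      ∑ F ∈ 𝓕, (1 : ℝ) / (n.choose F.card) ≤ L i)
    (hsum : ∑ i, L i < n + 1) :
    ∀ c : Finset (Fin n) → Fin t,
      ∃ (i : Fin t) (f : P i → Finset (Fin n)),
        Function.Injective f ∧
        (∀ x y : P i, x ≤ y → f x ⊆ f y) ∧
        (∀ x : P i, c (f x) = i) := by
  intro c
  by_contra h
  push_neg at h
  -- key identity: total Lubell mass of the cube is n+1
  have key : ∑ F : Finset (Fin n), (1 : ℝ) / (n.choose F.card) = n + 1 := by
    have := Finset.sum_powerset_apply_card (x := (Finset.univ : Finset (Fin n)))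
      (fun m => (1 : ℝ) / (n.choose m))
    rw [Finset.powerset_univ] at this
    rw [this]
    simp only [Finset.card_univ, Fintype.card_fin]
    have : ∀ m ∈ Finset.range (n + 1),
        n.choose m • ((1 : ℝ) / (n.choose m)) = 1 := by
      intro m hm
      rw [Finset.mem_range, Nat.lt_succ_iff] at hm
      rw [nsmul_eq_mul, mul_one_div,
        div_self (by exact_mod_cast (Nat.choose_pos hm).ne')]
    rw [Finset.sum_congr rfl this, Finset.sum_const, Finset.card_range, nsmul_eq_mul, mul_one]
    push_cast; ring
  -- partition the cube by color
  have part : ∑ F : Finset (Fin n), (1 : ℝ) / (n.choose F.card)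
      = ∑ i : Fin t, ∑ F ∈ Finset.univ.filter (fun F => c F = i),
          (1 : ℝ) / (n.choose F.card) :=
    (Finset.sum_fiberwise _ c _).symm
  have bound : ∀ i : Fin t,
      ∑ F ∈ Finset.univ.filter (fun F => c F = i), (1 : ℝ) / (n.choose F.card) ≤ L i := by
    intro i
    apply hL
    rintro ⟨f, hinj, hmono, hmem⟩
    obtain ⟨x, hx⟩ := h i f hinj hmono
    exact hx (Finset.mem_filter.1 (hmem x)).2
  have : (n : ℝ) + 1 ≤ ∑ i, L i := by
    rw [← key, part]
    exact Finset.sum_le_sum fun i _ => bound i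
  linarith
end

section
/- Let r ≥ 1 be an integer, let m = ⌈log_2(r+2)⌉, and suppose 2^{m−1} − 1 ≤ r ≤ 2^m − binom(m, ⌊m/2⌋) − 1. Then for every t ≥ 1, the least integer N such that every t-coloring of the elements of the Boolean lattice B_N contains a monochromatic copy of the r-diamond poset is exactly tm. (That is, BR^1_t(⋄_r) = tm.) -/
open Finset
namespace BRDaux

lemma choose_mono_left {d j k : ℕ} (hjk : j ≤ k) (h2k : 2 * k ≤ d) :
    d.choose j ≤ d.choose k := by
  induction k with
  | zero => simp [Nat.le_zero.mp hjk]
  | succ k ih =>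
    rcases Nat.lt_or_ge j (k+1) with h | h
    · have h1 : d.choose j ≤ d.choose k := ih (by omega) (by omega)
      have h2 : d.choose k ≤ d.choose (k+1) :=
        Nat.choose_le_succ_of_lt_half_left (by omega)
      omega
    · have : j = k + 1 := by omega
      simp [this]

lemma choose_ge_middle {d j h : ℕ} (h1 : h ≤ j) (h2 : j ≤ d - h) (h3 : 2 * h ≤ d) :
    d.choose h ≤ d.choose j := by
  rcases le_or_gt (2 * j) d with hj | hj
  · exact choose_mono_left h1 hj
  · have hjd : j ≤ d := by omega
    have : d.choose (d - j) = d.choose j := Nat.choose_symm hjd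
    rw [← this]
    exact choose_mono_left (by omega) (by omega)

lemma range_split (h : ℕ) (f : ℕ → ℕ) (hh : 1 ≤ h) :
    ∑ j ∈ range h, f j = f 0 + ∑ j ∈ Ico 1 h, f j := by
  rw [Finset.range_eq_Ico, Finset.sum_eq_sum_Ico_succ_bot hh]

lemma tail_reflect (m h : ℕ) (hhm : h ≤ m) :
    ∑ j ∈ Ico (m + 1 - h) (m + 1), m.choose j = ∑ j ∈ range h, m.choose j := by
  refine Finset.sum_nbij' (fun j => m - j) (fun j => m - j) ?_ ?_ ?_ ?_ ?_
  · intro a ha; rw [mem_Ico] at ha; rw [mem_range]; omega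
  · intro a ha; rw [mem_range] at ha; rw [mem_Ico]; omega
  · intro a ha; rw [mem_Ico] at ha; omega
  · intro a ha; rw [mem_range] at ha; omega
  · intro a ha; rw [mem_Ico] at ha
    exact (Nat.choose_symm (by omega : a ≤ m)).symm

lemma parity_identity (m : ℕ) (hm : 2 ≤ m) :
    2 ^ m ≤ (m - 2 * (m / 2)) * m.choose (m / 2)
      + 2 * (∑ j ∈ Ico 1 (m / 2), m.choose j) + m.choose (m / 2) + 2 := by
  set h := m / 2 with hh
  have hh1 : 1 ≤ h := by omega
  have hsplit : ∑ j ∈ range h, m.choose j = 1 + ∑ j ∈ Ico 1 h, m.choose j := by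
    rw [range_split h _ hh1, Nat.choose_zero_right]
  rcases Nat.even_or_odd m with hpar | hpar
  · obtain ⟨w, hw⟩ := hpar
    have hwh : h = w := by omega
    have key : 2 ^ m = ∑ j ∈ range (m + 1), m.choose j := (Nat.sum_range_choose m).symm
    have hsum : ∑ j ∈ range (m + 1), m.choose j
        = ∑ j ∈ range (h + 1), m.choose j + ∑ j ∈ Ico (h + 1) (m + 1), m.choose j := by
      rw [Finset.range_eq_Ico, ← Finset.sum_Ico_consecutive _ (by omega : 0 ≤ h + 1) (by omega : h + 1 ≤ m + 1), Finset.range_eq_Ico]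
    have htail : ∑ j ∈ Ico (h + 1) (m + 1), m.choose j = ∑ j ∈ range h, m.choose j := by
      have : m + 1 - h = h + 1 := by omega
      rw [← this]
      exact tail_reflect m h (by omega)
    have htop : ∑ j ∈ range (h + 1), m.choose j
        = ∑ j ∈ range h, m.choose j + m.choose h := Finset.sum_range_succ _ _
    omega
  · obtain ⟨w, hw⟩ := hpar
    have hwh : h = w := by omega
    have key : ∑ j ∈ range (w + 1), (2 * w + 1).choose j = 4 ^ w :=
      Nat.sum_range_choose_halfway w
    rw [← hw] at key
    have h4 : (4 : ℕ) ^ w = 2 ^ (2 * w) := by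
      rw [show (4 : ℕ) = 2 ^ 2 by norm_num, ← pow_mul]
    have htop : ∑ j ∈ range (h + 1), m.choose j
        = ∑ j ∈ range h, m.choose j + m.choose h := Finset.sum_range_succ _ _
    have hpow : 2 ^ m = 2 * 2 ^ (2 * w) := by
      rw [hw]; ring
    rw [hwh] at htop hsplit ⊢
    have hone : m - 2 * w = 1 := by omega
    rw [hone, one_mul]
    omega


lemma kcl_main (m d r : ℕ) (hm : 2 ≤ m) (hd : m ≤ d)
    (h2 : r + m.choose (m / 2) + 1 ≤ 2 ^ m) (hr : 1 ≤ r)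
    (g : ℕ → ℕ) (hg : ∀ j, g j ≤ d.choose j)
    (hsum : (∑ j ∈ Ico 1 d, g j) + 1 ≤ r) :
    (∑ j ∈ Ico 1 d, g j * (j.factorial * (d - j).factorial)) ≤ (m - 2) * d.factorial := by
  set h := m / 2 with hhdef
  have hh1 : 1 ≤ h := by omega
  have h2h : 2 * h ≤ m := by omega
  have h2hd : 2 * h ≤ d := by omega
  set w : ℕ → ℕ := fun j => j.factorial * (d - j).factorial with hw
  have fw : ∀ j, j ≤ d → d.choose j * w j = d.factorial := by
    intro j hj
    rw [hw]; dsimp only; rw [← mul_assoc]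
    exact Nat.choose_mul_factorial_mul_factorial hj
  have hchd := fw h (by omega)
  have cancel : ∀ j, j ≤ d → d.choose j ≤ d.choose h → w h ≤ w j := by
    intro j hj hc
    have hpos : 0 < d.choose j := Nat.choose_pos hj
    have hle : d.choose j * w h ≤ d.choose j * w j := by
      calc d.choose j * w h ≤ d.choose h * w h := Nat.mul_le_mul_right _ hc
        _ = d.factorial := hchd
        _ = d.choose j * w j := (fw j hj).symm
    exact Nat.le_of_mul_le_mul_left hle hpos
  have cancel2 : ∀ j, j ≤ d → d.choose h ≤ d.choose j → w j ≤ w h := by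
    intro j hj hc
    have hpos : 0 < d.choose h := Nat.choose_pos (by omega)
    have hle : d.choose h * w j ≤ d.choose h * w h := by
      calc d.choose h * w j ≤ d.choose j * w j := Nat.mul_le_mul_right _ hc
        _ = d.factorial := fw j hj
        _ = d.choose h * w h := hchd.symm
    exact Nat.le_of_mul_le_mul_left hle hpos
  set L := (Ico 1 d).filter (fun j => j < h ∨ d - h < j) with hL
  set Hi := (Ico 1 d).filter (fun j => ¬(j < h ∨ d - h < j)) with hHi
  have memL : ∀ j ∈ L, 1 ≤ j ∧ j < d ∧ (j < h ∨ d - h < j) := by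
    intro j hj; rw [hL, mem_filter, mem_Ico] at hj; tauto
  have memHi : ∀ j ∈ Hi, h ≤ j ∧ j ≤ d - h := by
    intro j hj; rw [hHi, mem_filter, mem_Ico] at hj
    push_neg at hj; omega
  have hLchoose : ∀ j ∈ L, d.choose j ≤ d.choose h := by
    intro j hj
    obtain ⟨hj1, hj2, hj3⟩ := memL j hj
    rcases hj3 with hc | hc
    · exact choose_mono_left (by omega) h2hd
    · have hsymm : d.choose (d - j) = d.choose j := Nat.choose_symm (by omega)
      rw [← hsymm]
      exact choose_mono_left (by omega) h2hd
  have hHchoose : ∀ j ∈ Hi, d.choose h ≤ d.choose j := by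
    intro j hj
    obtain ⟨hj1, hj2⟩ := memHi j hj
    exact choose_ge_middle hj1 hj2 h2hd
  have hsplitW : ∀ f : ℕ → ℕ, ∑ j ∈ Ico 1 d, f j = ∑ j ∈ L, f j + ∑ j ∈ Hi, f j := by
    intro f; rw [hL, hHi]; exact (Finset.sum_filter_add_sum_filter_not _ _ _).symm
  -- step inequality
  have step1 : ∀ j ∈ L, g j * w j + d.choose j * w h ≤ d.choose j * w j + g j * w h := by
    intro j hj
    have hwj : w h ≤ w j := cancel j (by have := memL j hj; omega) (hLchoose j hj)
    have := mul_add_mul_le_mul_add_mul (hg j) hwj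
    calc g j * w j + d.choose j * w h ≤ g j * w h + d.choose j * w j := this
      _ = d.choose j * w j + g j * w h := by ring
  have step2 : ∀ j ∈ Hi, g j * w j ≤ g j * w h := by
    intro j hj
    have hwj : w j ≤ w h := cancel2 j (by have := memHi j hj; omega) (hHchoose j hj)
    exact Nat.mul_le_mul_left _ hwj
  have main1 : (∑ j ∈ Ico 1 d, g j * w j) + ∑ j ∈ L, d.choose j * w h
      ≤ ∑ j ∈ L, d.choose j * w j + ∑ j ∈ Ico 1 d, g j * w h := by
    rw [hsplitW (fun j => g j * w j), hsplitW (fun j => g j * w h)]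
    have A : ∑ j ∈ L, (g j * w j + d.choose j * w h)
        ≤ ∑ j ∈ L, (d.choose j * w j + g j * w h) := Finset.sum_le_sum step1
    rw [Finset.sum_add_distrib, Finset.sum_add_distrib] at A
    have B : ∑ j ∈ Hi, g j * w j ≤ ∑ j ∈ Hi, g j * w h := Finset.sum_le_sum step2
    omega
  -- structure of L
  have hLeq : L = Ico 1 h ∪ Ico (d - h + 1) d := by
    ext j
    rw [hL, mem_filter, mem_Ico, mem_union, mem_Ico, mem_Ico]
    constructor
    · rintro ⟨⟨ha, hb⟩, hc | hc⟩
      · left; omega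
      · right; omega
    · rintro (⟨ha, hb⟩ | ⟨ha, hb⟩)
      · exact ⟨⟨by omega, by omega⟩, Or.inl (by omega)⟩
      · exact ⟨⟨by omega, by omega⟩, Or.inr (by omega)⟩
  have hdisj : Disjoint (Ico 1 h) (Ico (d - h + 1) d) := by
    rw [Finset.disjoint_left]
    intro j hj1 hj2
    rw [mem_Ico] at hj1 hj2
    omega
  have hLcard : L.card = 2 * (h - 1) := by
    rw [hLeq, Finset.card_union_of_disjoint hdisj, Nat.card_Ico, Nat.card_Ico]
    omega
  have hreflect : ∑ j ∈ Ico (d - h + 1) d, d.choose j = ∑ j ∈ Ico 1 h, d.choose j := by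
    refine Finset.sum_nbij' (fun j => d - j) (fun j => d - j) ?_ ?_ ?_ ?_ ?_
    · intro a ha; rw [mem_Ico] at ha; rw [mem_Ico]; omega
    · intro a ha; rw [mem_Ico] at ha; rw [mem_Ico]; omega
    · intro a ha; rw [mem_Ico] at ha; omega
    · intro a ha; rw [mem_Ico] at ha; omega
    · intro a ha; rw [mem_Ico] at ha
      exact (Nat.choose_symm (by omega : a ≤ d)).symm
  have hSL : ∑ j ∈ L, d.choose j = 2 * ∑ j ∈ Ico 1 h, d.choose j := by
    rw [hLeq, Finset.sum_union hdisj, hreflect]; ring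
  have hLdfac : ∑ j ∈ L, d.choose j * w j = L.card * d.factorial := by
    rw [Finset.sum_congr rfl (fun j hj => fw j (by have := memL j hj; omega))]
    rw [Finset.sum_const, smul_eq_mul]
  -- the key numeric inequality
  have hkey : L.card * d.choose h + (∑ j ∈ Ico 1 d, g j)
      ≤ (m - 2) * d.choose h + ∑ j ∈ L, d.choose j := by
    rw [hLcard, hSL]
    have hpar := parity_identity m hm
    rw [← hhdef] at hpar
    have hmono : ∑ j ∈ Ico 1 h, m.choose j ≤ ∑ j ∈ Ico 1 h, d.choose j :=
      Finset.sum_le_sum (fun j _ => Nat.choose_le_choose j hd)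
    have hch : m.choose h ≤ d.choose h := Nat.choose_le_choose h hd
    have e1 : (m - 2) * d.choose h = (m - 2 * h) * d.choose h + 2 * (h - 1) * d.choose h := by
      rw [← add_mul]; congr 1; omega
    rw [e1]
    have e2 : (m - 2 * h) * m.choose h ≤ (m - 2 * h) * d.choose h :=
      Nat.mul_le_mul_left _ hch
    have e3 : r + m.choose h + 1 ≤ (m - 2 * h) * m.choose h
        + 2 * (∑ j ∈ Ico 1 h, m.choose j) + m.choose h + 2 := le_trans h2 hpar
    have e4 : ∑ j ∈ Ico 1 d, g j + 1 ≤ r := hsum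
    omega
  -- assemble
  have eqL : ∑ j ∈ L, d.choose j * w h = (∑ j ∈ L, d.choose j) * w h :=
    (Finset.sum_mul _ _ _).symm
  have eqG : ∑ j ∈ Ico 1 d, g j * w h = (∑ j ∈ Ico 1 d, g j) * w h :=
    (Finset.sum_mul _ _ _).symm
  have expand : ∀ x y : ℕ, (x * d.choose h + y) * w h = x * d.factorial + y * w h := by
    intro x y
    rw [add_mul, mul_assoc, hchd]
  have final2 := Nat.mul_le_mul_right (w h) hkey
  rw [expand, expand] at final2
  rw [eqL, eqG, hLdfac] at main1
  have final3 : (∑ j ∈ Ico 1 d, g j * w j) + (∑ j ∈ L, d.choose j) * w h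
      ≤ (m - 2) * d.factorial + (∑ j ∈ L, d.choose j) * w h := by
    calc (∑ j ∈ Ico 1 d, g j * w j) + (∑ j ∈ L, d.choose j) * w h
        ≤ L.card * d.factorial + (∑ j ∈ Ico 1 d, g j) * w h := main1
      _ ≤ (m - 2) * d.factorial + (∑ j ∈ L, d.choose j) * w h := final2
  exact Nat.le_of_add_le_add_right final3

lemma kcl_small (m d : ℕ) (hm : 2 ≤ m) (hd : d < m)
    (g : ℕ → ℕ) (hg : ∀ j, g j ≤ d.choose j) :
    (∑ j ∈ Ico 1 d, g j * (j.factorial * (d - j).factorial)) ≤ (m - 2) * d.factorial := by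
  calc ∑ j ∈ Ico 1 d, g j * (j.factorial * (d - j).factorial)
      ≤ ∑ j ∈ Ico 1 d, d.factorial := by
        refine Finset.sum_le_sum ?_
        intro j hj
        rw [mem_Ico] at hj
        calc g j * (j.factorial * (d - j).factorial)
            ≤ d.choose j * (j.factorial * (d - j).factorial) :=
              Nat.mul_le_mul_right _ (hg j)
          _ = d.factorial := by
              rw [← mul_assoc]; exact Nat.choose_mul_factorial_mul_factorial (by omega)
    _ = (d - 1) * d.factorial := by rw [Finset.sum_const, Nat.card_Ico, smul_eq_mul]
    _ ≤ (m - 2) * d.factorial := Nat.mul_le_mul_right _ (by omega)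



lemma card_fin_band (n l u : ℕ) (hu : u ≤ n) :
    ((univ : Finset (Fin n)).filter (fun p : Fin n => l ≤ (p : ℕ) ∧ (p : ℕ) < u)).card = u - l := by
  rw [← Nat.card_Ico l u]
  apply Finset.card_nbij (fun p : Fin n => (p : ℕ))
  · intro p hp; simp only [Finset.mem_coe, mem_filter] at hp; simp only [Finset.mem_coe, Finset.mem_Ico]; omega
  · intro p _ q _ h; exact Fin.val_injective h
  · intro v hv
    rw [Finset.mem_coe, Finset.mem_Ico] at hv
    refine ⟨(⟨v, by omega⟩ : Fin n), ?_, rfl⟩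
    simp only [Finset.mem_coe, mem_filter, mem_univ, true_and]
    exact ⟨by simpa using hv.1, by simpa using hv.2⟩

lemma card_fin_lt (n u : ℕ) (hu : u ≤ n) :
    ((univ : Finset (Fin n)).filter (fun p : Fin n => (p : ℕ) < u)).card = u := by
  have := card_fin_band n 0 u hu
  simp only [Nat.zero_le, true_and, Nat.sub_zero] at this
  exact this

variable {n : ℕ}

def chainSet (σ : Equiv.Perm (Fin n)) (k : ℕ) : Finset (Fin n) :=
  univ.filter (fun e => (σ e : ℕ) < k)

lemma mem_chainSet {σ : Equiv.Perm (Fin n)} {k : ℕ} {e : Fin n} :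
    e ∈ chainSet σ k ↔ (σ e : ℕ) < k := by
  simp [chainSet]

lemma chainSet_mono (σ : Equiv.Perm (Fin n)) {k k' : ℕ} (h : k ≤ k') :
    chainSet σ k ⊆ chainSet σ k' := by
  intro e he
  rw [mem_chainSet] at *
  omega

lemma card_chainSet (σ : Equiv.Perm (Fin n)) {k : ℕ} (hk : k ≤ n) :
    (chainSet σ k).card = k := by
  have heq : (chainSet σ k).card
      = ((univ : Finset (Fin n)).filter (fun p : Fin n => (p : ℕ) < k)).card := by
    apply Finset.card_nbij (fun e => σ e)
    · intro e he
      rw [Finset.mem_coe, mem_chainSet] at he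
      rw [Finset.mem_coe, mem_filter]
      exact ⟨mem_univ _, he⟩
    · intro e _ e' _ h; exact σ.injective h
    · intro p hp
      rw [Finset.mem_coe, mem_filter] at hp
      refine ⟨σ.symm p, ?_, by simp⟩
      rw [Finset.mem_coe, mem_chainSet]
      simpa using hp.2
  rw [heq, card_fin_lt n k hk]

def wfix (n a c : ℕ) : Finset (Equiv.Perm (Fin n)) :=
  univ.filter (fun ρ => ∀ i : Fin n, ((i : ℕ) < a ∨ c ≤ (i : ℕ)) → ρ i = i)

lemma wfix_fix {a c : ℕ} {ρ : Equiv.Perm (Fin n)} (hρ : ρ ∈ wfix n a c) {i : Fin n}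
    (hi : (i : ℕ) < a ∨ c ≤ (i : ℕ)) : ρ i = i := by
  rw [wfix, mem_filter] at hρ
  exact hρ.2 i hi

lemma wfix_window {a c : ℕ} {ρ : Equiv.Perm (Fin n)} (hρ : ρ ∈ wfix n a c) {i : Fin n}
    (h1 : a ≤ (i : ℕ)) (h2 : (i : ℕ) < c) : a ≤ (ρ i : ℕ) ∧ (ρ i : ℕ) < c := by
  by_cases hin : a ≤ (ρ i : ℕ) ∧ (ρ i : ℕ) < c
  · exact hin
  · have hfix : ρ (ρ i) = ρ i := wfix_fix hρ (by omega)
    have heq : ρ i = i := ρ.injective hfix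
    rw [heq] at hin
    exact absurd ⟨h1, h2⟩ hin

lemma wfix_inv {a c : ℕ} {ρ : Equiv.Perm (Fin n)} (hρ : ρ ∈ wfix n a c) :
    ρ⁻¹ ∈ wfix n a c := by
  rw [wfix, mem_filter]
  refine ⟨mem_univ _, fun i hi => ?_⟩
  have h := wfix_fix hρ hi
  conv_lhs => rw [← h]
  exact ρ.symm_apply_apply i

lemma wfix_lt_iff {a c : ℕ} {ρ : Equiv.Perm (Fin n)} (hρ : ρ ∈ wfix n a c) (x : Fin n)
    {k : ℕ} (hk : k ≤ a ∨ c ≤ k) : ((ρ x : ℕ) < k ↔ (x : ℕ) < k) := by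
  by_cases h1 : (x : ℕ) < a
  · rw [wfix_fix hρ (Or.inl h1)]
  · by_cases h2 : c ≤ (x : ℕ)
    · rw [wfix_fix hρ (Or.inr h2)]
    · have hw := wfix_window hρ (Nat.le_of_not_lt h1) (Nat.lt_of_not_le h2)
      omega

lemma wfix_chainSet {a c : ℕ} {ρ : Equiv.Perm (Fin n)} (hρ : ρ ∈ wfix n a c)
    (σ : Equiv.Perm (Fin n)) {k : ℕ} (hk : k ≤ a ∨ c ≤ k) :
    chainSet (ρ * σ) k = chainSet σ k := by
  ext e
  simp only [mem_chainSet, Equiv.Perm.mul_apply]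
  exact wfix_lt_iff hρ (σ e) hk

lemma wfix_card_ge {a c : ℕ} (hac : a ≤ c) (hc : c ≤ n) :
    (c - a).factorial ≤ (wfix n a c).card := by
  classical
  set p : Fin n → Prop := fun i => a ≤ (i : ℕ) ∧ (i : ℕ) < c with hp
  have hcardsub : Fintype.card {i : Fin n // p i} = c - a := by
    rw [Fintype.card_subtype]
    exact card_fin_band n a c hc
  have hcardperm : Fintype.card (Equiv.Perm {i : Fin n // p i}) = (c - a).factorial := by
    rw [Fintype.card_perm, hcardsub]
  set ι : Equiv.Perm {i : Fin n // p i} → Equiv.Perm (Fin n) :=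
    fun f => Equiv.Perm.subtypeCongr f (Equiv.refl _) with hι
  have hmaps : ∀ f, ι f ∈ wfix n a c := by
    intro f
    rw [wfix, mem_filter]
    refine ⟨mem_univ _, fun i hi => ?_⟩
    have hnp : ¬ p i := by rw [hp]; dsimp only; omega
    rw [hι]; dsimp only
    rw [Equiv.Perm.subtypeCongr.right_apply _ _ hnp]
    rfl
  have hinj : Function.Injective ι := by
    intro f g hfg
    ext x
    have h1 : ι f (x : Fin n) = f x := Equiv.Perm.subtypeCongr.left_apply_subtype _ _ x
    have h2 : ι g (x : Fin n) = g x := Equiv.Perm.subtypeCongr.left_apply_subtype _ _ x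
    have : ((f x : {i : Fin n // p i}) : Fin n) = ((g x : {i : Fin n // p i}) : Fin n) := by
      rw [← h1, ← h2, hfg]
    exact congrArg Fin.val this
  calc (c - a).factorial = (univ : Finset (Equiv.Perm {i : Fin n // p i})).card := by
        rw [Finset.card_univ, hcardperm]
    _ ≤ (wfix n a c).card := Finset.card_le_card_of_injOn ι (fun f _ => hmaps f)
        hinj.injOn

end BRDaux

namespace BRDaux2
open BRDaux
variable {n : ℕ}

lemma ssubset_of_subset_card_lt {A B : Finset (Fin n)} (h : A ⊆ B) (hc : A.card < B.card) :
    A ⊂ B := by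
  rw [Finset.ssubset_iff_subset_ne]
  exact ⟨h, fun he => by rw [he] at hc; omega⟩

lemma hit_count_le {a c k : ℕ} (σ : Equiv.Perm (Fin n)) (A C X : Finset (Fin n))
    (hA : chainSet σ a = A) (hC : chainSet σ c = C)
    (hAX : A ⊆ X) (hXC : X ⊆ C) (hXcard : X.card = k)
    (hak : a ≤ k) (hkc : k ≤ c) (hcn : c ≤ n) :
    ((wfix n a c).filter (fun ρ => chainSet (ρ * σ) k = X)).card
      ≤ (k - a).factorial * (c - k).factorial := by
  classical
  set W : Finset (Fin n) := univ.filter (fun p : Fin n => a ≤ (p : ℕ) ∧ (p : ℕ) < c) with hW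
  set T : Finset (Fin n) := univ.filter (fun p : Fin n => a ≤ (p : ℕ) ∧ (p : ℕ) < k) with hT
  set T2 : Finset (Fin n) := univ.filter (fun p : Fin n => k ≤ (p : ℕ) ∧ (p : ℕ) < c) with hT2
  set I : Finset (Fin n) := X.image σ with hI
  set S : Finset (Fin n) := I \ (univ.filter (fun p : Fin n => (p : ℕ) < a)) with hS
  set U : Finset (Fin n) := W \ I with hU
  have hmemI : ∀ p : Fin n, p ∈ I ↔ σ.symm p ∈ X := by
    intro p; rw [hI, Finset.mem_image]
    constructor
    · rintro ⟨e, he, rfl⟩; simpa using he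
    · intro h; exact ⟨σ.symm p, h, by simp⟩
  have hIc : ∀ p ∈ I, (p : ℕ) < c := by
    intro p hp
    rw [hmemI] at hp
    have h1 : σ.symm p ∈ chainSet σ c := hC ▸ hXC hp
    rw [mem_chainSet] at h1; simpa using h1
  have hlowI : ∀ p : Fin n, (p : ℕ) < a → p ∈ I := by
    intro p hp
    rw [hmemI]
    apply hAX
    rw [← hA, mem_chainSet]
    simpa using hp
  have hIcard : I.card = k := by rw [hI, Finset.card_image_of_injective _ σ.injective, hXcard]
  have hScard : S.card = k - a := by
    rw [hS, Finset.card_sdiff_of_subset (by intro p hp; rw [mem_filter] at hp; exact hlowI p hp.2),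
      hIcard, card_fin_lt n a (by omega)]
  have hTScard : T.card = k - a := card_fin_band n a k (by omega)
  have hT2card : T2.card = c - k := card_fin_band n k c hcn
  have hWcard : W.card = c - a := card_fin_band n a c hcn
  have hWS : W ∩ I = S := by
    ext p
    rw [Finset.mem_inter, hS, Finset.mem_sdiff, hW, mem_filter, mem_filter]
    constructor
    · rintro ⟨⟨_, hpa, _⟩, hi⟩
      exact ⟨hi, fun hcon => by omega⟩
    · rintro ⟨hi, hna⟩
      have : ¬ ((p : ℕ) < a) := fun hcon => hna ⟨mem_univ _, hcon⟩
      exact ⟨⟨mem_univ _, by omega, hIc p hi⟩, hi⟩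
  have hUcard : U.card = c - k := by
    have hsub : W ∩ I ⊆ W := Finset.inter_subset_left
    have := Finset.card_sdiff_add_card_inter W I
    rw [hWS, hScard, hWcard] at this
    rw [hU]
    omega
  have hcount : ((wfix n a c).filter (fun ρ => chainSet (ρ * σ) k = X)).card
      = Fintype.card {ρ : Equiv.Perm (Fin n) //
          (∀ i : Fin n, ((i : ℕ) < a ∨ c ≤ (i : ℕ)) → ρ i = i) ∧ chainSet (ρ * σ) k = X} := by
    rw [wfix, Finset.filter_filter, Fintype.card_subtype]
  rw [hcount]
  -- membership facts for such ρ
  have hwfix_mem : ∀ (ρ : Equiv.Perm (Fin n)),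
      (∀ i : Fin n, ((i : ℕ) < a ∨ c ≤ (i : ℕ)) → ρ i = i) → ρ ∈ wfix n a c := by
    intro ρ h
    rw [wfix, mem_filter]
    exact ⟨mem_univ _, h⟩
  have hmaps1 : ∀ (ρ : Equiv.Perm (Fin n)),
      (∀ i : Fin n, ((i : ℕ) < a ∨ c ≤ (i : ℕ)) → ρ i = i) → chainSet (ρ * σ) k = X →
      ∀ p ∈ S, ρ p ∈ T := by
    intro ρ hP hQ p hp
    rw [hS, Finset.mem_sdiff, mem_filter] at hp
    obtain ⟨hpI, hpa⟩ := hp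
    have hpa' : a ≤ (p : ℕ) := by
      by_contra hcon
      exact hpa ⟨mem_univ _, by omega⟩
    have hpc : (p : ℕ) < c := hIc p hpI
    have hwin := wfix_window (hwfix_mem ρ hP) hpa' hpc
    have hXp : σ.symm p ∈ X := (hmemI p).mp hpI
    have hlt : ((ρ * σ) (σ.symm p) : ℕ) < k := by
      rw [← mem_chainSet, hQ]; exact hXp
    rw [Equiv.Perm.mul_apply, Equiv.apply_symm_apply] at hlt
    rw [hT, mem_filter]
    exact ⟨mem_univ _, hwin.1, hlt⟩
  have hmaps2 : ∀ (ρ : Equiv.Perm (Fin n)),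
      (∀ i : Fin n, ((i : ℕ) < a ∨ c ≤ (i : ℕ)) → ρ i = i) → chainSet (ρ * σ) k = X →
      ∀ p ∈ U, ρ p ∈ T2 := by
    intro ρ hP hQ p hp
    rw [hU, Finset.mem_sdiff, hW, mem_filter] at hp
    obtain ⟨⟨_, hpa, hpc⟩, hpI⟩ := hp
    have hwin := wfix_window (hwfix_mem ρ hP) hpa hpc
    have hXp : σ.symm p ∉ X := fun hcon => hpI ((hmemI p).mpr hcon)
    have hge : ¬ ((ρ * σ) (σ.symm p) : ℕ) < k := by
      rw [← mem_chainSet, hQ]; exact hXp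
    rw [Equiv.Perm.mul_apply, Equiv.apply_symm_apply] at hge
    rw [hT2, mem_filter]
    exact ⟨mem_univ _, by omega, hwin.2⟩
  -- the injection
  set Ψ : {ρ : Equiv.Perm (Fin n) //
      (∀ i : Fin n, ((i : ℕ) < a ∨ c ≤ (i : ℕ)) → ρ i = i) ∧ chainSet (ρ * σ) k = X} →
      (↥S ↪ ↥T) × (↥U ↪ ↥T2) :=
    fun ρ => (⟨fun s => ⟨ρ.1 s.1, hmaps1 ρ.1 ρ.2.1 ρ.2.2 s.1 s.2⟩,
        fun s1 s2 h12 => Subtype.ext (ρ.1.injective (congrArg Subtype.val h12))⟩,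
      ⟨fun u => ⟨ρ.1 u.1, hmaps2 ρ.1 ρ.2.1 ρ.2.2 u.1 u.2⟩,
        fun u1 u2 h12 => Subtype.ext (ρ.1.injective (congrArg Subtype.val h12))⟩) with hΨ
  have hΨinj : Function.Injective Ψ := by
    intro ρ1 ρ2 h
    have h1 := congrArg Prod.fst h
    have h2 := congrArg Prod.snd h
    apply Subtype.ext
    apply Equiv.ext
    intro i
    by_cases hi : (i : ℕ) < a ∨ c ≤ (i : ℕ)
    · rw [ρ1.2.1 i hi, ρ2.2.1 i hi]
    · push_neg at hi
      by_cases hiI : i ∈ I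
      · have hiS : i ∈ S := by
          rw [hS, Finset.mem_sdiff, mem_filter]
          exact ⟨hiI, fun hcon => by omega⟩
        have := DFunLike.congr_fun h1 ⟨i, hiS⟩
        exact congrArg Subtype.val this
      · have hiU : i ∈ U := by
          rw [hU, Finset.mem_sdiff, hW, mem_filter]
          exact ⟨⟨mem_univ _, by omega, by omega⟩, hiI⟩
        have := DFunLike.congr_fun h2 ⟨i, hiU⟩
        exact congrArg Subtype.val this
  calc Fintype.card {ρ : Equiv.Perm (Fin n) //
          (∀ i : Fin n, ((i : ℕ) < a ∨ c ≤ (i : ℕ)) → ρ i = i) ∧ chainSet (ρ * σ) k = X}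
      ≤ Fintype.card ((↥S ↪ ↥T) × (↥U ↪ ↥T2)) := Fintype.card_le_of_injective Ψ hΨinj
    _ = (k - a).factorial * (c - k).factorial := by
        rw [Fintype.card_prod, Fintype.card_embedding_eq, Fintype.card_embedding_eq]
        rw [Fintype.card_coe, Fintype.card_coe, Fintype.card_coe, Fintype.card_coe]
        rw [hScard, hTScard, hUcard, hT2card]
        rw [Nat.descFactorial_self, Nat.descFactorial_self]

end BRDaux2

namespace BRDaux3
open BRDaux BRDaux2

variable {n : ℕ}

lemma kcl_all (m d r : ℕ) (hm : 2 ≤ m) (hr : 1 ≤ r)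
    (h2 : r + m.choose (m / 2) + 1 ≤ 2 ^ m)
    (g : ℕ → ℕ) (hg : ∀ j, g j ≤ d.choose j)
    (hsum : (∑ j ∈ Ico 1 d, g j) + 1 ≤ r) :
    (∑ j ∈ Ico 1 d, g j * (j.factorial * (d - j).factorial)) ≤ (m - 2) * d.factorial := by
  rcases lt_or_ge d m with h | h
  · exact kcl_small m d hm h g hg
  · exact kcl_main m d r hm h h2 hr g hg hsum

lemma class_sum_bound (m r : ℕ) (hm : 2 ≤ m) (hr : 1 ≤ r)
    (h2 : r + m.choose (m / 2) + 1 ≤ 2 ^ m)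
    (F : Finset (Finset (Fin n)))
    (hF : ∀ A C : Finset (Fin n), A ∈ F → C ∈ F → A ⊂ C →
      (F.filter (fun X => A ⊂ X ∧ X ⊂ C)).card + 1 ≤ r)
    (A C : Finset (Fin n)) (hA : A ∈ F) (hC : C ∈ F) (hAC : A ⊆ C)
    (Tp : Finset (Equiv.Perm (Fin n)))
    (hTp : ∀ σ ∈ Tp, chainSet σ A.card = A ∧ chainSet σ C.card = C)
    (hTclosed : ∀ ρ ∈ wfix n A.card C.card, ∀ σ ∈ Tp, ρ * σ ∈ Tp) :
    ∑ σ ∈ Tp, ((Ioo A.card C.card).filter (fun k => chainSet σ k ∈ F)).card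
      ≤ (m - 2) * Tp.card := by
  classical
  set a := A.card with ha
  set c := C.card with hc
  have hcn : c ≤ n := by
    rw [hc]
    calc C.card ≤ (univ : Finset (Fin n)).card := Finset.card_le_card (subset_univ C)
      _ = n := by rw [card_univ, Fintype.card_fin]
  have hac : a ≤ c := Finset.card_le_card hAC
  rcases Nat.lt_or_ge a c with haltc | hcge
  swap
  · have hempty : Ioo a c = ∅ := Finset.Ioo_eq_empty (by omega)
    simp [hempty]
  have hAC' : A ⊂ C := ssubset_of_subset_card_lt hAC (by omega)
  set d := c - a with hd
  set G := F.filter (fun X => A ⊂ X ∧ X ⊂ C) with hG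
  have hGcard : G.card + 1 ≤ r := hF A C hA hC hAC'
  have hGmem : ∀ X ∈ G, X ∈ F ∧ A ⊂ X ∧ X ⊂ C := by
    intro X hX; rw [hG, mem_filter] at hX; exact ⟨hX.1, hX.2.1, hX.2.2⟩
  have hGcards : ∀ X ∈ G, a < X.card ∧ X.card < c := by
    intro X hX
    obtain ⟨_, h1, h2⟩ := hGmem X hX
    exact ⟨Finset.card_lt_card h1, Finset.card_lt_card h2⟩
  set g : ℕ → ℕ := fun j => (G.filter (fun X => X.card - a = j)).card with hgdef
  have hg : ∀ j, g j ≤ d.choose j := by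
    intro j
    rw [hgdef]
    dsimp only
    have hdd : (C \ A).card = d := by rw [Finset.card_sdiff_of_subset hAC, ← hc, ← ha, ← hd]
    calc (G.filter (fun X => X.card - a = j)).card
        ≤ (Finset.powersetCard j (C \ A)).card := by
          apply Finset.card_le_card_of_injOn (fun X => X \ A)
          · intro X hX
            rw [Finset.mem_coe, mem_filter] at hX
            obtain ⟨hXG, hXj⟩ := hX
            obtain ⟨_, h1, h2⟩ := hGmem X hXG
            have hcards := hGcards X hXG
            show X \ A ∈ Finset.powersetCard j (C \ A); rw [Finset.mem_powersetCard]
            constructor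
            · exact Finset.sdiff_subset_sdiff h2.subset (le_refl A)
            · rw [Finset.card_sdiff_of_subset h1.subset, ← ha]
              omega
          · intro X1 hX1 X2 hX2 h12
            rw [Finset.mem_coe, mem_filter] at hX1 hX2
            have e1 : A ∪ (X1 \ A) = X1 :=
              Finset.union_sdiff_of_subset (hGmem X1 hX1.1).2.1.subset
            have e2 : A ∪ (X2 \ A) = X2 :=
              Finset.union_sdiff_of_subset (hGmem X2 hX2.1).2.1.subset
            rw [← e1, ← e2]
            dsimp only at h12
            rw [h12]
      _ = d.choose j := by rw [Finset.card_powersetCard, hdd]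
  have hsum : (∑ j ∈ Ico 1 d, g j) + 1 ≤ r := by
    have hfib : G.card = ∑ j ∈ Ico 1 d, g j := by
      apply Finset.card_eq_sum_card_fiberwise
      intro X hX
      have := hGcards X hX
      show X.card - a ∈ Ico 1 d; rw [mem_Ico]
      omega
    omega
  have hKCL := kcl_all m d r hm hr h2 g hg hsum
  have per_sigma : ∀ σ ∈ Tp,
      ∑ ρ ∈ wfix n a c, ((Ioo a c).filter (fun k => chainSet (ρ * σ) k ∈ F)).card
        ≤ (m - 2) * d.factorial := by
    intro σ hσ
    obtain ⟨hσA, hσC⟩ := hTp σ hσ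
    have swap1 : ∑ ρ ∈ wfix n a c, ((Ioo a c).filter (fun k => chainSet (ρ * σ) k ∈ F)).card
        = ∑ k ∈ Ioo a c, ((wfix n a c).filter (fun ρ => chainSet (ρ * σ) k ∈ F)).card := by
      simp_rw [Finset.card_filter]
      exact Finset.sum_comm
    rw [swap1]
    have per_k : ∀ k ∈ Ioo a c,
        ((wfix n a c).filter (fun ρ => chainSet (ρ * σ) k ∈ F)).card
          ≤ (G.filter (fun X => X.card = k)).card
            * ((k - a).factorial * (c - k).factorial) := by
      intro k hk
      rw [mem_Ioo] at hk
      have hkn : k ≤ n := by omega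
      have hfib : ((wfix n a c).filter (fun ρ => chainSet (ρ * σ) k ∈ F)).card
          = ∑ X ∈ G.filter (fun X => X.card = k),
              (((wfix n a c).filter (fun ρ => chainSet (ρ * σ) k ∈ F)).filter
                (fun ρ => chainSet (ρ * σ) k = X)).card := by
        apply Finset.card_eq_sum_card_fiberwise
        intro ρ hρ
        rw [Finset.mem_coe, mem_filter] at hρ
        obtain ⟨hρw, hρF⟩ := hρ
        have hchA : chainSet (ρ * σ) a = A := by
          rw [wfix_chainSet hρw σ (Or.inl le_rfl), hσA]
        have hchC : chainSet (ρ * σ) c = C := by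
          rw [wfix_chainSet hρw σ (Or.inr le_rfl), hσC]
        have hcard : (chainSet (ρ * σ) k).card = k := card_chainSet _ hkn
        have hsub1 : A ⊆ chainSet (ρ * σ) k := by
          rw [← hchA]; exact chainSet_mono _ (by omega)
        have hsub2 : chainSet (ρ * σ) k ⊆ C := by
          rw [← hchC]; exact chainSet_mono _ (by omega)
        show chainSet (ρ * σ) k ∈ G.filter (fun X => X.card = k)
        rw [mem_filter, hG, mem_filter]
        refine ⟨⟨hρF, ?_, ?_⟩, hcard⟩
        · exact ssubset_of_subset_card_lt hsub1 (by rw [hcard, ← ha]; omega)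
        · exact ssubset_of_subset_card_lt hsub2 (by rw [hcard, ← hc]; omega)
      rw [hfib]
      have hbound : ∀ X ∈ G.filter (fun X => X.card = k),
          (((wfix n a c).filter (fun ρ => chainSet (ρ * σ) k ∈ F)).filter
            (fun ρ => chainSet (ρ * σ) k = X)).card
            ≤ (k - a).factorial * (c - k).factorial := by
        intro X hX
        rw [mem_filter] at hX
        obtain ⟨hXG, hXk⟩ := hX
        obtain ⟨hXF, hXA, hXC⟩ := hGmem X hXG
        calc (((wfix n a c).filter (fun ρ => chainSet (ρ * σ) k ∈ F)).filter
            (fun ρ => chainSet (ρ * σ) k = X)).card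
            ≤ ((wfix n a c).filter (fun ρ => chainSet (ρ * σ) k = X)).card := by
              apply Finset.card_le_card
              exact Finset.filter_subset_filter _ (Finset.filter_subset _ _)
          _ ≤ (k - a).factorial * (c - k).factorial :=
              hit_count_le σ A C X hσA hσC hXA.subset hXC.subset hXk
                (by omega) (by omega) hcn
      calc ∑ X ∈ G.filter (fun X => X.card = k),
            (((wfix n a c).filter (fun ρ => chainSet (ρ * σ) k ∈ F)).filter
              (fun ρ => chainSet (ρ * σ) k = X)).card
          ≤ ∑ _X ∈ G.filter (fun X => X.card = k),
              (k - a).factorial * (c - k).factorial := Finset.sum_le_sum hbound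
        _ = (G.filter (fun X => X.card = k)).card
            * ((k - a).factorial * (c - k).factorial) := by
            rw [Finset.sum_const, smul_eq_mul]
    calc ∑ k ∈ Ioo a c, ((wfix n a c).filter (fun ρ => chainSet (ρ * σ) k ∈ F)).card
        ≤ ∑ k ∈ Ioo a c, (G.filter (fun X => X.card = k)).card
            * ((k - a).factorial * (c - k).factorial) := Finset.sum_le_sum per_k
      _ = ∑ j ∈ Ico 1 d, g j * (j.factorial * (d - j).factorial) := by
          refine Finset.sum_nbij' (fun k => k - a) (fun j => a + j) ?_ ?_ ?_ ?_ ?_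
          · intro k hk; rw [mem_Ioo] at hk; rw [mem_Ico]; omega
          · intro j hj; rw [mem_Ico] at hj; rw [mem_Ioo]; omega
          · intro k hk; rw [mem_Ioo] at hk; omega
          · intro j hj; rw [mem_Ico] at hj; omega
          · intro k hk; rw [mem_Ioo] at hk
            have hck : c - k = d - (k - a) := by omega
            rw [hck]
            have hfe : G.filter (fun X => X.card = k)
                = G.filter (fun X => X.card - a = k - a) := by
              apply Finset.filter_congr
              intro X hX
              have := hGcards X hX
              constructor
              · intro hh; omega
              · intro hh; omega
            rw [hfe]
      _ ≤ (m - 2) * d.factorial := hKCL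
  have reindex : ∀ ρ ∈ wfix n a c,
      ∑ σ ∈ Tp, ((Ioo a c).filter (fun k => chainSet (ρ * σ) k ∈ F)).card
        = ∑ σ ∈ Tp, ((Ioo a c).filter (fun k => chainSet σ k ∈ F)).card := by
    intro ρ hρ
    refine Finset.sum_nbij' (fun σ => ρ * σ) (fun τ => ρ⁻¹ * τ) ?_ ?_ ?_ ?_ ?_
    · intro σ hσ; exact hTclosed ρ hρ σ hσ
    · intro τ hτ; exact hTclosed ρ⁻¹ (wfix_inv hρ) τ hτ
    · intro σ hσ; rw [inv_mul_cancel_left]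
    · intro τ hτ; rw [mul_inv_cancel_left]
    · intro σ hσ; rfl
  have big : (wfix n a c).card * (∑ σ ∈ Tp, ((Ioo a c).filter (fun k => chainSet σ k ∈ F)).card)
      ≤ Tp.card * ((m - 2) * d.factorial) := by
    calc (wfix n a c).card * (∑ σ ∈ Tp, ((Ioo a c).filter (fun k => chainSet σ k ∈ F)).card)
        = ∑ _ρ ∈ wfix n a c, ∑ σ ∈ Tp, ((Ioo a c).filter (fun k => chainSet σ k ∈ F)).card := by
          rw [Finset.sum_const, smul_eq_mul]
      _ = ∑ ρ ∈ wfix n a c, ∑ σ ∈ Tp, ((Ioo a c).filter (fun k => chainSet (ρ * σ) k ∈ F)).card :=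
          Finset.sum_congr rfl (fun ρ hρ => (reindex ρ hρ).symm)
      _ = ∑ σ ∈ Tp, ∑ ρ ∈ wfix n a c, ((Ioo a c).filter (fun k => chainSet (ρ * σ) k ∈ F)).card :=
          Finset.sum_comm
      _ ≤ ∑ _σ ∈ Tp, (m - 2) * d.factorial := Finset.sum_le_sum per_sigma
      _ = Tp.card * ((m - 2) * d.factorial) := by rw [Finset.sum_const, smul_eq_mul]
  have hwcard : d.factorial ≤ (wfix n a c).card := by
    have := wfix_card_ge (n := n) (a := a) (c := c) (by omega) hcn
    rw [← hd] at this
    exact this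
  have hdpos : 0 < d.factorial := Nat.factorial_pos d
  have final : d.factorial * (∑ σ ∈ Tp, ((Ioo a c).filter (fun k => chainSet σ k ∈ F)).card)
      ≤ d.factorial * ((m - 2) * Tp.card) := by
    calc d.factorial * (∑ σ ∈ Tp, ((Ioo a c).filter (fun k => chainSet σ k ∈ F)).card)
        ≤ (wfix n a c).card
          * (∑ σ ∈ Tp, ((Ioo a c).filter (fun k => chainSet σ k ∈ F)).card) :=
          Nat.mul_le_mul_right _ hwcard
      _ ≤ Tp.card * ((m - 2) * d.factorial) := big
      _ = d.factorial * ((m - 2) * Tp.card) := by ring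
  exact Nat.le_of_mul_le_mul_left final hdpos

end BRDaux3

namespace BRDaux4
open BRDaux BRDaux2 BRDaux3

variable {n : ℕ}

lemma mass_le (m r : ℕ) (hm : 2 ≤ m) (hr : 1 ≤ r)
    (h2 : r + m.choose (m / 2) + 1 ≤ 2 ^ m)
    (F : Finset (Finset (Fin n)))
    (hF : ∀ A C : Finset (Fin n), A ∈ F → C ∈ F → A ⊂ C →
      (F.filter (fun X => A ⊂ X ∧ X ⊂ C)).card + 1 ≤ r) :
    ∑ σ : Equiv.Perm (Fin n), ((range (n+1)).filter (fun k => chainSet σ k ∈ F)).card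
      ≤ m * n.factorial := by
  classical
  set hs : Equiv.Perm (Fin n) → Finset ℕ :=
    fun σ => (range (n+1)).filter (fun k => chainSet σ k ∈ F) with hhs
  have hmemhs : ∀ σ k, k ∈ hs σ ↔ (k ≤ n ∧ chainSet σ k ∈ F) := by
    intro σ k
    rw [hhs]
    dsimp only
    rw [mem_filter, mem_range]
    constructor
    · rintro ⟨h1, h2⟩; exact ⟨by omega, h2⟩
    · rintro ⟨h1, h2⟩; exact ⟨by omega, h2⟩
  set D : Finset (Equiv.Perm (Fin n)) := univ.filter (fun σ => (hs σ).Nonempty) with hD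
  set kmin : Equiv.Perm (Fin n) → ℕ :=
    fun σ => if h : (hs σ).Nonempty then (hs σ).min' h else 0 with hkmin
  set kmax : Equiv.Perm (Fin n) → ℕ :=
    fun σ => if h : (hs σ).Nonempty then (hs σ).max' h else 0 with hkmax
  set key : Equiv.Perm (Fin n) → Finset (Fin n) × Finset (Fin n) :=
    fun σ => (chainSet σ (kmin σ), chainSet σ (kmax σ)) with hkey
  have hDfacts : ∀ σ ∈ D, kmin σ ∈ hs σ ∧ kmax σ ∈ hs σ ∧
      (∀ k ∈ hs σ, kmin σ ≤ k ∧ k ≤ kmax σ) := by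
    intro σ hσ
    rw [hD, mem_filter] at hσ
    have hne := hσ.2
    rw [hkmin, hkmax]
    dsimp only
    rw [dif_pos hne, dif_pos hne]
    exact ⟨Finset.min'_mem _ _, Finset.max'_mem _ _,
      fun k hk => ⟨Finset.min'_le _ _ hk, Finset.le_max' _ _ hk⟩⟩
  -- restrict to D
  have step1 : ∑ σ : Equiv.Perm (Fin n), (hs σ).card = ∑ σ ∈ D, (hs σ).card := by
    refine (Finset.sum_subset (Finset.subset_univ D) ?_).symm
    intro σ _ hσ
    have hne : ¬ (hs σ).Nonempty := by
      intro hcon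
      exact hσ (by rw [hD, mem_filter]; exact ⟨mem_univ _, hcon⟩)
    rw [Finset.not_nonempty_iff_eq_empty.mp hne, Finset.card_empty]
  rw [step1]
  -- fiber over key
  have step2 : ∑ σ ∈ D, (hs σ).card
      = ∑ p ∈ D.image key, ∑ σ ∈ D.filter (fun σ => key σ = p), (hs σ).card :=
    (Finset.sum_fiberwise_of_maps_to (fun σ hσ => Finset.mem_image_of_mem key hσ) _).symm
  rw [step2]
  -- per class bound
  have step3 : ∀ p ∈ D.image key,
      ∑ σ ∈ D.filter (fun σ => key σ = p), (hs σ).card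
        ≤ m * (D.filter (fun σ => key σ = p)).card := by
    intro p hp
    obtain ⟨σ₁, hσ₁D, hσ₁key⟩ := Finset.mem_image.mp hp
    set Tp := D.filter (fun σ => key σ = p) with hTpdef
    set A := chainSet σ₁ (kmin σ₁) with hAdef
    set C := chainSet σ₁ (kmax σ₁) with hCdef
    have hpAC : p = (A, C) := by rw [← hσ₁key, hkey]
    obtain ⟨hmin1, hmax1, hbnd1⟩ := hDfacts σ₁ hσ₁D
    have hminn : kmin σ₁ ≤ n := ((hmemhs σ₁ _).mp hmin1).1
    have hmaxn : kmax σ₁ ≤ n := ((hmemhs σ₁ _).mp hmax1).1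
    have hAF : A ∈ F := ((hmemhs σ₁ _).mp hmin1).2
    have hCF : C ∈ F := ((hmemhs σ₁ _).mp hmax1).2
    have hminmax : kmin σ₁ ≤ kmax σ₁ := (hbnd1 _ hmax1).1
    have hACsub : A ⊆ C := by rw [hAdef, hCdef]; exact chainSet_mono _ hminmax
    set a := A.card with hadef
    set c := C.card with hcdef
    have hAcard : a = kmin σ₁ := by rw [hadef, hAdef]; exact card_chainSet _ hminn
    have hCcard : c = kmax σ₁ := by rw [hcdef, hCdef]; exact card_chainSet _ hmaxn
    -- facts for every σ ∈ Tp
    have hTpfacts : ∀ σ ∈ Tp, σ ∈ D ∧ chainSet σ a = A ∧ chainSet σ c = C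
        ∧ kmin σ = a ∧ kmax σ = c := by
      intro σ hσ
      rw [hTpdef, mem_filter] at hσ
      obtain ⟨hσD, hσkey⟩ := hσ
      rw [hpAC, hkey] at hσkey
      dsimp only at hσkey
      have h1 : chainSet σ (kmin σ) = A := congrArg Prod.fst hσkey
      have h2 : chainSet σ (kmax σ) = C := congrArg Prod.snd hσkey
      obtain ⟨hmins, hmaxs, _⟩ := hDfacts σ hσD
      have hminsn : kmin σ ≤ n := ((hmemhs σ _).mp hmins).1
      have hmaxsn : kmax σ ≤ n := ((hmemhs σ _).mp hmaxs).1
      have ha1 : kmin σ = a := by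
        have hcc : (chainSet σ (kmin σ)).card = kmin σ := card_chainSet _ hminsn
        rw [h1] at hcc
        rw [hadef]
        omega
      have hc1 : kmax σ = c := by
        have hcc : (chainSet σ (kmax σ)).card = kmax σ := card_chainSet _ hmaxsn
        rw [h2] at hcc
        rw [hcdef]
        omega
      refine ⟨hσD, ?_, ?_, ha1, hc1⟩
      · rw [← ha1, h1]
      · rw [← hc1, h2]
    -- closure under the window group
    have hTclosed : ∀ ρ ∈ wfix n a c, ∀ σ ∈ Tp, ρ * σ ∈ Tp := by
      intro ρ hρ σ hσ
      obtain ⟨hσD, hchA, hchC, hkm, hkM⟩ := hTpfacts σ hσ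
      have han : a ≤ n := by rw [hAcard]; exact hminn
      have hcn : c ≤ n := by rw [hCcard]; exact hmaxn
      have hchA' : chainSet (ρ * σ) a = A := by
        rw [wfix_chainSet hρ σ (Or.inl le_rfl), hchA]
      have hchC' : chainSet (ρ * σ) c = C := by
        rw [wfix_chainSet hρ σ (Or.inr le_rfl), hchC]
      have hahs : a ∈ hs (ρ * σ) := (hmemhs _ _).mpr ⟨han, by rw [hchA']; exact hAF⟩
      have hne : (hs (ρ * σ)).Nonempty := ⟨a, hahs⟩
      have hρσD : ρ * σ ∈ D := by rw [hD, mem_filter]; exact ⟨mem_univ _, hne⟩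
      -- kmin (ρ*σ) = a
      have hlow : ∀ k ∈ hs (ρ * σ), a ≤ k := by
        intro k hk
        by_contra hcon
        push_neg at hcon
        obtain ⟨hkn, hkF⟩ := (hmemhs _ _).mp hk
        rw [wfix_chainSet hρ σ (Or.inl (by omega))] at hkF
        have : k ∈ hs σ := (hmemhs _ _).mpr ⟨hkn, hkF⟩
        have := (hDfacts σ hσD).2.2 k this
        omega
      have hhigh : ∀ k ∈ hs (ρ * σ), k ≤ c := by
        intro k hk
        by_contra hcon
        push_neg at hcon
        obtain ⟨hkn, hkF⟩ := (hmemhs _ _).mp hk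
        rw [wfix_chainSet hρ σ (Or.inr (by omega))] at hkF
        have : k ∈ hs σ := (hmemhs _ _).mpr ⟨hkn, hkF⟩
        have := (hDfacts σ hσD).2.2 k this
        omega
      have hkmin' : kmin (ρ * σ) = a := by
        rw [hkmin]
        dsimp only
        rw [dif_pos hne]
        exact le_antisymm (Finset.min'_le _ _ hahs) (Finset.le_min' _ _ _ hlow)
      have hchs : c ∈ hs (ρ * σ) := (hmemhs _ _).mpr ⟨hcn, by rw [hchC']; exact hCF⟩
      have hkmax' : kmax (ρ * σ) = c := by
        rw [hkmax]
        dsimp only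
        rw [dif_pos hne]
        exact le_antisymm (Finset.max'_le _ _ _ hhigh) (Finset.le_max' _ _ hchs)
      rw [hTpdef, mem_filter]
      refine ⟨hρσD, ?_⟩
      rw [hkey]
      dsimp only
      rw [hkmin', hkmax', hchA', hchC', hpAC]
    -- bound hits by 2 + interior count
    have hhits : ∀ σ ∈ Tp, (hs σ).card
        ≤ ((Ioo a c).filter (fun k => chainSet σ k ∈ F)).card + 2 := by
      intro σ hσ
      obtain ⟨hσD, hchA, hchC, hkm, hkM⟩ := hTpfacts σ hσ
      have hsub : hs σ ⊆ insert a (insert c ((Ioo a c).filter (fun k => chainSet σ k ∈ F))) := by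
        intro k hk
        have hb := (hDfacts σ hσD).2.2 k hk
        rw [hkm, hkM] at hb
        rcases eq_or_ne k a with hka | hka
        · rw [hka]; exact Finset.mem_insert_self _ _
        · rcases eq_or_ne k c with hkc | hkc
          · rw [hkc]; exact Finset.mem_insert_of_mem (Finset.mem_insert_self _ _)
          · refine Finset.mem_insert_of_mem (Finset.mem_insert_of_mem ?_)
            rw [mem_filter, mem_Ioo]
            exact ⟨⟨by omega, by omega⟩, ((hmemhs _ _).mp hk).2⟩
      calc (hs σ).card ≤ (insert a (insert c
            ((Ioo a c).filter (fun k => chainSet σ k ∈ F)))).card := Finset.card_le_card hsub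
        _ ≤ (insert c ((Ioo a c).filter (fun k => chainSet σ k ∈ F))).card + 1 :=
            Finset.card_insert_le _ _
        _ ≤ ((Ioo a c).filter (fun k => chainSet σ k ∈ F)).card + 2 := by
            have := Finset.card_insert_le c ((Ioo a c).filter (fun k => chainSet σ k ∈ F))
            omega
    -- apply class bound
    have hclass := class_sum_bound m r hm hr h2 F hF A C hAF hCF hACsub Tp
      (fun σ hσ => ⟨(hTpfacts σ hσ).2.1, (hTpfacts σ hσ).2.2.1⟩) hTclosed
    rw [← hadef, ← hcdef] at hclass
    calc ∑ σ ∈ Tp, (hs σ).card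
        ≤ ∑ σ ∈ Tp, (((Ioo a c).filter (fun k => chainSet σ k ∈ F)).card + 2) :=
          Finset.sum_le_sum hhits
      _ = (∑ σ ∈ Tp, ((Ioo a c).filter (fun k => chainSet σ k ∈ F)).card) + 2 * Tp.card := by
          rw [Finset.sum_add_distrib, Finset.sum_const, smul_eq_mul]; ring
      _ ≤ (m - 2) * Tp.card + 2 * Tp.card := by
          have := hclass
          omega
      _ = m * Tp.card := by
          rw [← add_mul]
          congr 1
          omega
  calc ∑ p ∈ D.image key, ∑ σ ∈ D.filter (fun σ => key σ = p), (hs σ).card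
      ≤ ∑ p ∈ D.image key, m * (D.filter (fun σ => key σ = p)).card :=
        Finset.sum_le_sum step3
    _ = m * ∑ p ∈ D.image key, (D.filter (fun σ => key σ = p)).card := by
        rw [Finset.mul_sum]
    _ = m * D.card := by rw [← Finset.card_eq_sum_card_image key D]
    _ ≤ m * n.factorial := by
        apply Nat.mul_le_mul_left
        calc D.card ≤ (univ : Finset (Equiv.Perm (Fin n))).card :=
              Finset.card_le_card (Finset.filter_subset _ _)
          _ = n.factorial := by
              rw [Finset.card_univ, Fintype.card_perm, Fintype.card_fin]

end BRDaux4

open BRDaux BRDaux2 BRDaux3 BRDaux4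

/-- for `r ≥ 1`, `m = ⌈log₂(r+2)⌉` (i.e. `Nat.clog 2 (r+2)`), if
`2^{m−1} − 1 ≤ r ≤ 2^m − (m choose ⌊m/2⌋) − 1` (stated in subtraction-free form),
then for every `t ≥ 1`, `BR^1_t(⋄_r) = t·m`: `t·m` is the least `N` such that every
`t`-coloring of the elements of `B_N` contains a monochromatic copy of the
`r`-diamond, i.e. distinct subsets `A, B 1, …, B r, C` of the same color with
`A ⊂ B k ⊂ C` for all `k`. -/
theorem boolean_ramsey_diamond_uniformly_L_bounded
    (r : ℕ) (hr : 1 ≤ r) (m : ℕ) (hm : m = Nat.clog 2 (r + 2))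
    (h1 : 2 ^ (m - 1) ≤ r + 1)
    (h2 : r + m.choose (m / 2) + 1 ≤ 2 ^ m)
    (t : ℕ) (ht : 1 ≤ t) :
    IsLeast
      {N : ℕ | ∀ c : Finset (Fin N) → Fin t,
        ∃ (i : Fin t) (A C : Finset (Fin N)) (B : Fin r → Finset (Fin N)),
          Function.Injective B ∧
          (∀ k, A ⊂ B k ∧ B k ⊂ C) ∧
          c A = i ∧ c C = i ∧ (∀ k, c (B k) = i)}
      (t * m) := by
  classical
  have hchoosepos : 0 < m.choose (m / 2) := Nat.choose_pos (Nat.div_le_self m 2)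
  have hm2 : 2 ≤ m := by
    by_contra hcon
    push_neg at hcon
    have hple : (2 : ℕ) ^ m ≤ 2 ^ 1 := Nat.pow_le_pow_right (by norm_num) (by omega)
    have : (2:ℕ)^1 = 2 := by norm_num
    omega
  constructor
  · -- membership : every coloring of B_{tm} has a monochromatic diamond
    intro cc
    by_contra hno
    set F : Fin t → Finset (Finset (Fin (t * m))) :=
      fun i => univ.filter (fun X => cc X = i) with hF
    have hmemF : ∀ i X, X ∈ F i ↔ cc X = i := by
      intro i X
      rw [hF]
      dsimp only
      rw [mem_filter]
      exact ⟨fun h => h.2, fun h => ⟨mem_univ _, h⟩⟩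
    have hFfree : ∀ i, ∀ A C : Finset (Fin (t * m)), A ∈ F i → C ∈ F i → A ⊂ C →
        ((F i).filter (fun X => A ⊂ X ∧ X ⊂ C)).card + 1 ≤ r := by
      intro i A C hA hC hAC
      by_contra hcon
      push_neg at hcon
      obtain ⟨T, hTsub, hTcard⟩ := Finset.exists_subset_card_eq
        (show r ≤ ((F i).filter (fun X => A ⊂ X ∧ X ⊂ C)).card by omega)
      set B : Fin r → Finset (Fin (t * m)) :=
        fun k => (T.equivFin.symm (Fin.cast hTcard.symm k) : {x // x ∈ T}).1 with hB
      have hBmem : ∀ k, B k ∈ (F i).filter (fun X => A ⊂ X ∧ X ⊂ C) := by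
        intro k
        exact hTsub (T.equivFin.symm (Fin.cast hTcard.symm k)).2
      have hBinj : Function.Injective B := by
        intro k1 k2 hk
        rw [hB] at hk
        dsimp only at hk
        have h1' := T.equivFin.symm.injective (Subtype.coe_injective hk)
        have h2' := congrArg Fin.val h1'
        simp only [Fin.coe_cast] at h2'
        exact Fin.val_injective h2'
      refine hno ⟨i, A, C, B, hBinj, ?_, (hmemF i A).mp hA, (hmemF i C).mp hC, ?_⟩
      · intro k
        have := hBmem k
        rw [mem_filter] at this
        exact this.2
      · intro k
        have := hBmem k
        rw [mem_filter] at this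
        exact (hmemF i (B k)).mp this.1
    -- counting contradiction
    have hcolor : ∀ σ : Equiv.Perm (Fin (t * m)),
        ∑ i : Fin t, ((range (t * m + 1)).filter (fun k => chainSet σ k ∈ F i)).card
          = t * m + 1 := by
      intro σ
      have hfib := Finset.card_eq_sum_card_fiberwise
        (s := range (t * m + 1)) (t := (univ : Finset (Fin t)))
        (f := fun k => cc (chainSet σ k)) (fun k _ => mem_univ _)
      rw [Finset.card_range] at hfib
      have hfe : ∀ i : Fin t, (range (t * m + 1)).filter (fun k => chainSet σ k ∈ F i)
          = (range (t * m + 1)).filter (fun k => cc (chainSet σ k) = i) := by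
        intro i
        apply Finset.filter_congr
        intro k _
        rw [hmemF]
      calc ∑ i : Fin t, ((range (t * m + 1)).filter (fun k => chainSet σ k ∈ F i)).card
          = ∑ i : Fin t, ((range (t * m + 1)).filter (fun k => cc (chainSet σ k) = i)).card :=
            Finset.sum_congr rfl (fun i _ => by rw [hfe i])
        _ = t * m + 1 := hfib.symm
    have hmass : ∀ i : Fin t,
        ∑ σ : Equiv.Perm (Fin (t * m)),
          ((range (t * m + 1)).filter (fun k => chainSet σ k ∈ F i)).card
            ≤ m * (t * m).factorial :=
      fun i => mass_le m r hm2 hr h2 (F i) (hFfree i)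
    have htotal : (t * m + 1) * (t * m).factorial
        ≤ t * (m * (t * m).factorial) := by
      calc (t * m + 1) * (t * m).factorial
          = ∑ _σ : Equiv.Perm (Fin (t * m)), (t * m + 1) := by
            rw [Finset.sum_const, Finset.card_univ, Fintype.card_perm, Fintype.card_fin,
              smul_eq_mul, mul_comm]
        _ = ∑ σ : Equiv.Perm (Fin (t * m)), ∑ i : Fin t,
              ((range (t * m + 1)).filter (fun k => chainSet σ k ∈ F i)).card :=
            Finset.sum_congr rfl (fun σ _ => (hcolor σ).symm)
        _ = ∑ i : Fin t, ∑ σ : Equiv.Perm (Fin (t * m)),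
              ((range (t * m + 1)).filter (fun k => chainSet σ k ∈ F i)).card :=
            Finset.sum_comm
        _ ≤ ∑ _i : Fin t, m * (t * m).factorial :=
            Finset.sum_le_sum (fun i _ => hmass i)
        _ = t * (m * (t * m).factorial) := by
            rw [Finset.sum_const, Finset.card_univ, Fintype.card_fin, smul_eq_mul]
    have hfp : 0 < (t * m).factorial := Nat.factorial_pos _
    have hexp : (t * m + 1) * (t * m).factorial
        = t * m * (t * m).factorial + (t * m).factorial := by ring
    have hexp2 : t * (m * (t * m).factorial) = t * m * (t * m).factorial := by ring
    omega
  · -- lower bound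
    intro N hN
    by_contra hlt
    push_neg at hlt
    have hm0 : 0 < m := by omega
    set cc : Finset (Fin N) → Fin t :=
      fun S => ⟨min (S.card / m) (t - 1), by
        have := min_le_right (S.card / m) (t - 1)
        omega⟩ with hcc
    obtain ⟨i, A, C, B, hBinj, hmid, hcA, hcC, hcB⟩ := hN cc
    have hveq : min (A.card / m) (t - 1) = min (C.card / m) (t - 1) := by
      have := congrArg Fin.val (hcA.trans hcC.symm)
      exact this
    have hk0 : A ⊂ B ⟨0, by omega⟩ ∧ B ⟨0, by omega⟩ ⊂ C := hmid ⟨0, by omega⟩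
    have hAC : A ⊂ C := hk0.1.trans hk0.2
    have hACsub : A ⊆ C := hAC.subset
    have hCN : C.card ≤ N := by
      calc C.card ≤ (univ : Finset (Fin N)).card := Finset.card_le_card (subset_univ C)
        _ = N := by rw [card_univ, Fintype.card_fin]
    have hcomm : t * m = m * t := Nat.mul_comm t m
    have hCdiv : C.card / m ≤ t - 1 := by
      have hlt2 : C.card / m < t := Nat.div_lt_of_lt_mul (by omega)
      omega
    have hAdiv : A.card / m ≤ t - 1 := by
      have hle : A.card ≤ C.card := Finset.card_le_card hACsub
      have hlt2 : A.card / m < t := Nat.div_lt_of_lt_mul (by omega)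
      omega
    have hdiveq : A.card / m = C.card / m := by
      rw [min_eq_left hAdiv, min_eq_left hCdiv] at hveq
      exact hveq
    have hCb : C.card < A.card + m := by
      have hx := Nat.lt_mul_div_succ C.card hm0
      have hy : m * (A.card / m) ≤ A.card := Nat.mul_div_le A.card m
      rw [← hdiveq] at hx
      have : m * (A.card / m + 1) = m * (A.card / m) + m := by ring
      omega
    -- count middles
    have hmidcount : r ≤ 2 ^ (C.card - A.card) - 2 := by
      have htarget : (((Finset.Icc A C).erase A).erase C).card
          = 2 ^ (C.card - A.card) - 2 := by
        have hCmem : C ∈ (Finset.Icc A C).erase A := by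
          rw [Finset.mem_erase, Finset.mem_Icc]
          exact ⟨(hAC.ne).symm, hACsub, Finset.Subset.refl C⟩
        have hAmem : A ∈ Finset.Icc A C := by
          rw [Finset.mem_Icc]
          exact ⟨Finset.Subset.refl A, hACsub⟩
        rw [Finset.card_erase_of_mem hCmem, Finset.card_erase_of_mem hAmem,
          Finset.card_Icc_finset hACsub]
        omega
      rw [← htarget]
      have hrcard : (univ : Finset (Fin r)).card = r := by
        rw [card_univ, Fintype.card_fin]
      rw [← hrcard]
      apply Finset.card_le_card_of_injOn B
      · intro k _
        rw [Finset.mem_coe, Finset.mem_erase, Finset.mem_erase, Finset.mem_Icc]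
        obtain ⟨hk1, hk2⟩ := hmid k
        exact ⟨(hk2.ne), (hk1.ne).symm, hk1.subset, hk2.subset⟩
      · intro k1 _ k2 _ hk
        exact hBinj hk
    have hexplt : C.card - A.card ≤ m - 1 := by omega
    have hple : (2:ℕ) ^ (C.card - A.card) ≤ 2 ^ (m - 1) :=
      Nat.pow_le_pow_right (by norm_num) hexplt
    have hpow2 : (2:ℕ) ^ (C.card - A.card) ≥ 2 := by
      have h01 : 1 ≤ C.card - A.card := by
        have := Finset.card_lt_card hAC
        omega
      calc (2:ℕ) ^ (C.card - A.card) ≥ 2 ^ 1 := Nat.pow_le_pow_right (by norm_num) h01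
        _ = 2 := by norm_num
    omega
end

section
/- For every integer t ≥ 1, the least integer N such that every t-coloring of the elements of the Boolean lattice B_N contains a monochromatic copy of the butterfly poset is 2t + 1. (That is, BR^1_t(⋈) = 2t + 1.) -/
namespace BRB

open Finset Equiv Nat

lemma le_choose_succ {m k : ℕ} (h : k + 1 < m) : m ≤ m.choose (k + 1) := by
  induction m with
  | zero => omega
  | succ m ih =>
    rcases Nat.lt_succ_iff_lt_or_eq.mp h with h' | h'
    · have h1 : m ≤ m.choose (k + 1) := ih h'
      have h2 : 1 ≤ m.choose k := Nat.choose_pos (by omega)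
      have h3 : (m + 1).choose (k + 1) = m.choose k + m.choose (k + 1) :=
        Nat.choose_succ_succ m k
      omega
    · rw [h', Nat.choose_succ_self_right]

lemma le_choose {m r : ℕ} (h1 : 1 ≤ r) (h2 : r < m) : m ≤ m.choose r := by
  obtain ⟨k, rfl⟩ : ∃ k, r = k + 1 := ⟨r - 1, by omega⟩
  exact le_choose_succ (by omega)

lemma mul_fact_le {x y : ℕ} (h1 : 1 ≤ x) (h2 : x < y) : y * (x ! * (y - x)!) ≤ y ! := by
  have h3 := Nat.choose_mul_factorial_mul_factorial (le_of_lt h2)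
  calc y * (x ! * (y - x)!) ≤ y.choose x * (x ! * (y - x)!) :=
        Nat.mul_le_mul_right _ (le_choose h1 h2)
    _ = y ! := by rw [← h3]; ring

lemma exists_three_lt {s : Finset ℕ} (h : 3 ≤ s.card) :
    ∃ a ∈ s, ∃ b ∈ s, ∃ c ∈ s, a < b ∧ b < c := by
  have h1 : s.Nonempty := card_pos.mp (by omega)
  set a := s.min' h1 with ha
  have hae : (s.erase a).card = s.card - 1 := card_erase_of_mem (s.min'_mem h1)
  have h2 : (s.erase a).Nonempty := card_pos.mp (by omega)
  set b := (s.erase a).min' h2 with hb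
  have hbe : ((s.erase a).erase b).card = s.card - 2 := by
    rw [card_erase_of_mem ((s.erase a).min'_mem h2), hae]; omega
  have h3 : ((s.erase a).erase b).Nonempty := card_pos.mp (by omega)
  set c := ((s.erase a).erase b).min' h3 with hc
  have hbs : b ∈ s.erase a := (s.erase a).min'_mem h2
  have hcs : c ∈ (s.erase a).erase b := ((s.erase a).erase b).min'_mem h3
  refine ⟨a, s.min'_mem h1, b, mem_of_mem_erase hbs, c,
    mem_of_mem_erase (mem_of_mem_erase hcs), ?_, ?_⟩
  · exact lt_of_le_of_ne (s.min'_le b (mem_of_mem_erase hbs)) (Ne.symm (ne_of_mem_erase hbs))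
  · exact lt_of_le_of_ne ((s.erase a).min'_le c (mem_of_mem_erase hcs))
      (Ne.symm (ne_of_mem_erase hcs))

lemma exists_four_lt {s : Finset ℕ} (h : 4 ≤ s.card) :
    ∃ a ∈ s, ∃ b ∈ s, ∃ c ∈ s, ∃ d ∈ s, a < b ∧ b < c ∧ c < d := by
  have h1 : s.Nonempty := card_pos.mp (by omega)
  set a := s.min' h1 with ha
  have hae : (s.erase a).card = s.card - 1 := card_erase_of_mem (s.min'_mem h1)
  obtain ⟨b, hb, c, hc, d, hd, hbc, hcd⟩ := exists_three_lt (s := s.erase a) (by omega)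
  refine ⟨a, s.min'_mem h1, b, mem_of_mem_erase hb, c, mem_of_mem_erase hc,
    d, mem_of_mem_erase hd, ?_, hbc, hcd⟩
  exact lt_of_le_of_ne (s.min'_le b (mem_of_mem_erase hb)) (Ne.symm (ne_of_mem_erase hb))

variable {n : ℕ}

/-- The `j`-th set of the maximal chain associated with permutation `τ`. -/
def ch (τ : Equiv.Perm (Fin n)) (j : ℕ) : Finset (Fin n) :=
  univ.filter (fun i => (τ i : ℕ) < j)

lemma mem_ch {τ : Equiv.Perm (Fin n)} {j : ℕ} {i : Fin n} :
    i ∈ ch τ j ↔ (τ i : ℕ) < j := by simp [ch]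

lemma card_filter_lt {m : ℕ} (hm : m ≤ n) :
    (univ.filter (fun v : Fin n => (v : ℕ) < m)).card = m := by
  have h2 : (univ.filter (fun v : Fin n => (v : ℕ) < m)).card = (Finset.range m).card := by
    refine Finset.card_bij' (fun v _ => (v : ℕ))
      (fun b hb => (⟨b, by rw [Finset.mem_range] at hb; omega⟩ : Fin n)) ?_ ?_ ?_ ?_
    · intro v hv; simp only [mem_filter] at hv; exact Finset.mem_range.mpr hv.2
    · intro b hb; rw [Finset.mem_range] at hb; simpa using hb
    · intro v hv; simp
    · intro b hb; simp
  simpa using h2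

lemma ch_card (τ : Equiv.Perm (Fin n)) {j : ℕ} (hj : j ≤ n) : (ch τ j).card = j := by
  have h : (ch τ j).card = (univ.filter (fun v : Fin n => (v : ℕ) < j)).card := by
    refine Finset.card_bij' (fun i _ => τ i) (fun v _ => τ.symm v) ?_ ?_ ?_ ?_
    · intro i hi; rw [mem_ch] at hi; simp [hi]
    · intro v hv; simp only [mem_filter] at hv; rw [mem_ch]; simpa using hv.2
    · intro i _; simp
    · intro v _; simp
  rw [h, card_filter_lt hj]

lemma ch_subset (τ : Equiv.Perm (Fin n)) {j j' : ℕ} (h : j ≤ j') : ch τ j ⊆ ch τ j' := by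
  intro i hi; rw [mem_ch] at hi ⊢; omega

lemma ch_ssubset (τ : Equiv.Perm (Fin n)) {j j' : ℕ} (h : j < j') (h' : j' ≤ n) :
    ch τ j ⊂ ch τ j' := by
  refine (ch_subset τ h.le).ssubset_of_ne (fun he => ?_)
  have h2 := ch_card τ (le_trans h.le h')
  rw [he, ch_card τ h'] at h2
  omega

lemma card_subtype_lt {m : ℕ} (hm : m ≤ n) :
    Fintype.card {v : Fin n // (v : ℕ) < m} = m := by
  rw [Fintype.card_subtype]; exact card_filter_lt hm

lemma card_subtype_band {a b : ℕ} (hab : a ≤ b) (hb : b ≤ n) :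
    Fintype.card {v : Fin n // (v : ℕ) < b ∧ ¬(v : ℕ) < a} = b - a := by
  rw [Fintype.card_subtype]
  have he : (univ.filter (fun v : Fin n => (v : ℕ) < b ∧ ¬(v : ℕ) < a)) =
      (univ.filter (fun v : Fin n => (v : ℕ) < b)) \
        (univ.filter (fun v : Fin n => (v : ℕ) < a)) := by
    ext v; simp only [mem_filter, mem_sdiff, mem_univ, true_and]; try omega
  have hsub : (univ.filter (fun v : Fin n => (v : ℕ) < a)) ⊆
      (univ.filter (fun v : Fin n => (v : ℕ) < b)) := by
    intro v hv; simp only [mem_filter, mem_univ, true_and] at hv ⊢; omega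
  rw [he, card_sdiff_of_subset hsub, card_filter_lt (le_trans hab hb), card_filter_lt hb]

lemma card_subtype_nlt {m : ℕ} (hm : m ≤ n) :
    Fintype.card {v : Fin n // ¬(v : ℕ) < m} = n - m := by
  rw [Fintype.card_subtype]
  have he : (univ.filter (fun v : Fin n => ¬(v : ℕ) < m)) =
      univ \ (univ.filter (fun v : Fin n => (v : ℕ) < m)) := by
    ext v; simp only [mem_filter, mem_sdiff, mem_univ, true_and]
  rw [he, card_sdiff_of_subset (filter_subset _ _), card_filter_lt hm, Finset.card_univ,
    Fintype.card_fin]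

lemma card_subtype_sdiff {A B : Finset (Fin n)} (hAB : A ⊆ B) :
    Fintype.card {i : Fin n // i ∈ B ∧ i ∉ A} = B.card - A.card := by
  rw [Fintype.card_subtype]
  have he : (univ.filter (fun i : Fin n => i ∈ B ∧ i ∉ A)) = B \ A := by
    ext i; simp only [mem_filter, mem_sdiff, mem_univ, true_and]
  rw [he, card_sdiff_of_subset hAB]

lemma card_subtype_notmem (A : Finset (Fin n)) :
    Fintype.card {i : Fin n // i ∉ A} = n - A.card := by
  rw [Fintype.card_subtype]
  have he : (univ.filter (fun i : Fin n => i ∉ A)) = univ \ A := by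
    ext i; simp only [mem_filter, mem_sdiff, mem_univ, true_and]
  rw [he, card_sdiff_of_subset (subset_univ A), Finset.card_univ, Fintype.card_fin]

lemma card_subtype_mem (A : Finset (Fin n)) :
    Fintype.card {i : Fin n // i ∈ A} = A.card := Fintype.card_coe A

/-- Counting upper bound: permutations whose chain passes through `X ⊆ Y ⊆ Z`. -/
lemma count_upper (X Y Z : Finset (Fin n)) (hXY : X ⊆ Y) (hYZ : Y ⊆ Z) :
    ((univ : Finset (Equiv.Perm (Fin n))).filter
      (fun τ => ch τ X.card = X ∧ ch τ Y.card = Y ∧ ch τ Z.card = Z)).card ≤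
    X.card ! * ((Y.card - X.card)! * ((Z.card - Y.card)! * (n - Z.card)!)) := by
  classical
  have hzn : Z.card ≤ n := by simpa using Z.card_le_univ
  have hyn : Y.card ≤ n := le_trans (card_le_card hYZ) hzn
  have hxn : X.card ≤ n := le_trans (card_le_card hXY) hyn
  have hxy : X.card ≤ Y.card := card_le_card hXY
  have hyz : Y.card ≤ Z.card := card_le_card hYZ
  rw [← Fintype.card_subtype]
  have inj : Function.Injective (fun p : {τ : Equiv.Perm (Fin n) //
      ch τ X.card = X ∧ ch τ Y.card = Y ∧ ch τ Z.card = Z} =>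
      ((p.1.subtypeEquiv (fun i => (Finset.ext_iff.mp p.2.1 i).symm.trans mem_ch),
        p.1.subtypeEquiv (fun i =>
          and_congr ((Finset.ext_iff.mp p.2.2.1 i).symm.trans mem_ch)
            (not_congr ((Finset.ext_iff.mp p.2.1 i).symm.trans mem_ch))),
        p.1.subtypeEquiv (fun i =>
          and_congr ((Finset.ext_iff.mp p.2.2.2 i).symm.trans mem_ch)
            (not_congr ((Finset.ext_iff.mp p.2.2.1 i).symm.trans mem_ch))),
        p.1.subtypeEquiv (fun i =>
          not_congr ((Finset.ext_iff.mp p.2.2.2 i).symm.trans mem_ch))) :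
      ({i : Fin n // i ∈ X} ≃ {v : Fin n // (v : ℕ) < X.card}) ×
      ({i : Fin n // i ∈ Y ∧ i ∉ X} ≃ {v : Fin n // (v : ℕ) < Y.card ∧ ¬(v : ℕ) < X.card}) ×
      ({i : Fin n // i ∈ Z ∧ i ∉ Y} ≃ {v : Fin n // (v : ℕ) < Z.card ∧ ¬(v : ℕ) < Y.card}) ×
      ({i : Fin n // i ∉ Z} ≃ {v : Fin n // ¬(v : ℕ) < Z.card}))) := by
    rintro ⟨τ, hτ⟩ ⟨τ', hτ'⟩ hpq
    simp only [Prod.mk.injEq] at hpq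
    obtain ⟨e1, e2, e3, e4⟩ := hpq
    refine Subtype.ext (Equiv.ext (fun i => ?_))
    by_cases hX : i ∈ X
    · have h := DFunLike.congr_fun e1 ⟨i, hX⟩
      rw [Equiv.subtypeEquiv_apply, Equiv.subtypeEquiv_apply] at h
      exact congrArg Subtype.val h
    · by_cases hY : i ∈ Y
      · have h := DFunLike.congr_fun e2 ⟨i, hY, hX⟩
        rw [Equiv.subtypeEquiv_apply, Equiv.subtypeEquiv_apply] at h
        exact congrArg Subtype.val h
      · by_cases hZ : i ∈ Z
        · have h := DFunLike.congr_fun e3 ⟨i, hZ, hY⟩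
          rw [Equiv.subtypeEquiv_apply, Equiv.subtypeEquiv_apply] at h
          exact congrArg Subtype.val h
        · have h := DFunLike.congr_fun e4 ⟨i, hZ⟩
          rw [Equiv.subtypeEquiv_apply, Equiv.subtypeEquiv_apply] at h
          exact congrArg Subtype.val h
  refine le_trans (Fintype.card_le_of_injective _ inj) ?_
  rw [Fintype.card_prod, Fintype.card_prod, Fintype.card_prod,
    Fintype.card_equiv (Fintype.equivOfCardEq
      (by rw [card_subtype_mem, card_subtype_lt hxn])),
    Fintype.card_equiv (Fintype.equivOfCardEq
      (by rw [card_subtype_sdiff hXY, card_subtype_band hxy hyn])),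
    Fintype.card_equiv (Fintype.equivOfCardEq
      (by rw [card_subtype_sdiff hYZ, card_subtype_band hyz hzn])),
    Fintype.card_equiv (Fintype.equivOfCardEq
      (by rw [card_subtype_notmem, card_subtype_nlt hzn])),
    card_subtype_mem, card_subtype_sdiff hXY, card_subtype_sdiff hYZ, card_subtype_notmem]

lemma antichain_sum_fact {A : Finset (Finset (Fin n))}
    (hA : IsAntichain (· ⊆ ·) (A : Set (Finset (Fin n)))) :
    ∑ Y ∈ A, (Y.card)! * (n - Y.card)! ≤ n ! := by
  classical
  have hcard : ∀ Y : Finset (Fin n), Y.card ≤ n := fun Y => by simpa using Y.card_le_univ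
  have key : ∀ Y ∈ A, ((Y.card)! * (n - Y.card)! : ℚ) = n ! / (n.choose Y.card) := by
    intro Y _
    have h0 : (0 : ℚ) < n.choose Y.card := by
      exact_mod_cast Nat.choose_pos (hcard Y)
    rw [eq_div_iff (ne_of_gt h0), mul_comm]
    have hnat : n.choose Y.card * ((Y.card)! * (n - Y.card)!) = n ! := by
      rw [← mul_assoc]; exact Nat.choose_mul_factorial_mul_factorial (hcard Y)
    exact_mod_cast hnat
  have hq : (∑ Y ∈ A, ((Y.card)! * (n - Y.card)! : ℚ)) ≤ n ! := by
    rw [Finset.sum_congr rfl key]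
    have maps : ∀ Y ∈ A, Y.card ∈ Finset.range (n + 1) :=
      fun Y _ => Finset.mem_range.mpr (by have := hcard Y; omega)
    rw [← Finset.sum_fiberwise_of_maps_to maps (fun Y => (n ! / (n.choose Y.card) : ℚ))]
    have step : ∀ r ∈ Finset.range (n + 1),
        (∑ Y ∈ A.filter (fun Y => Y.card = r), (n ! / (n.choose Y.card) : ℚ)) =
        (n ! : ℚ) * ((A # r).card / (n.choose r)) := by
      intro r _
      rw [Finset.sum_congr rfl (fun Y hY => by
        rw [(Finset.mem_filter.mp hY).2]), Finset.sum_const]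
      have : A # r = A.filter (fun Y => Y.card = r) := rfl
      rw [this]
      ring
    rw [Finset.sum_congr rfl step, ← Finset.mul_sum]
    have lym := Finset.sum_card_slice_div_choose_le_one (𝕜 := ℚ) hA
    rw [Fintype.card_fin] at lym
    calc (n ! : ℚ) * (∑ r ∈ Finset.range (n + 1), ((A # r).card / (n.choose r) : ℚ)) ≤
        (n ! : ℚ) * 1 := by
          apply mul_le_mul_of_nonneg_left lym (by positivity)
      _ = n ! := by ring
  exact_mod_cast hq

variable {t : ℕ}

def Bfly (c : Finset (Fin n) → Fin t) : Prop :=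
  ∃ X₁ X₂ Y₁ Y₂ : Finset (Fin n),
    X₁ ≠ X₂ ∧ X₁ ≠ Y₁ ∧ X₁ ≠ Y₂ ∧ X₂ ≠ Y₁ ∧ X₂ ≠ Y₂ ∧ Y₁ ≠ Y₂ ∧
    X₁ ⊆ Y₁ ∧ X₁ ⊆ Y₂ ∧ X₂ ⊆ Y₁ ∧ X₂ ⊆ Y₂ ∧
    c X₂ = c X₁ ∧ c Y₁ = c X₁ ∧ c Y₂ = c X₁

lemma nb4 {c : Finset (Fin n) → Fin t} (hB : ¬ Bfly c) {W X Y Z : Finset (Fin n)}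
    (h1 : W ⊂ X) (h2 : X ⊂ Y) (h3 : Y ⊂ Z)
    (e1 : c X = c W) (e2 : c Y = c W) (e3 : c Z = c W) : False :=
  hB ⟨W, X, Y, Z, h1.ne, (h1.trans h2).ne, ((h1.trans h2).trans h3).ne, h2.ne,
    (h2.trans h3).ne, h3.ne, (h1.trans h2).subset, ((h1.trans h2).trans h3).subset,
    h2.subset, (h2.trans h3).subset, e1, e2, e3⟩

def Ch3 (c : Finset (Fin n) → Fin t) (X Y Z : Finset (Fin n)) (k : Fin t) : Prop :=
  X ⊂ Y ∧ Y ⊂ Z ∧ c X = k ∧ c Y = k ∧ c Z = k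

lemma ends_eq {c : Finset (Fin n) → Fin t} (hB : ¬ Bfly c)
    {X Y Z X' Z' : Finset (Fin n)} {k : Fin t}
    (h : Ch3 c X Y Z k) (h' : Ch3 c X' Y Z' k) : X = X' ∧ Z = Z' := by
  obtain ⟨h1, h2, e1, e2, e3⟩ := h
  obtain ⟨h1', h2', e1', e2', e3'⟩ := h'
  constructor
  · by_contra hne
    exact hB ⟨X, X', Y, Z, hne, h1.ne, (h1.trans h2).ne, h1'.ne, (h1'.trans h2).ne, h2.ne,
      h1.subset, (h1.trans h2).subset, h1'.subset, (h1'.trans h2).subset,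
      e1'.trans e1.symm, e2.trans e1.symm, e3.trans e1.symm⟩
  · by_contra hne
    exact hB ⟨X, Y, Z, Z', h1.ne, (h1.trans h2).ne, (h1.trans h2').ne, h2.ne, h2'.ne, hne,
      (h1.trans h2).subset, (h1.trans h2').subset, h2.subset, h2'.subset,
      e2.trans e1.symm, e3.trans e1.symm, e3'.trans e1.symm⟩

lemma mids_antichain {c : Finset (Fin n) → Fin t} (hB : ¬ Bfly c)
    {X Y Z X' Y' Z' : Finset (Fin n)} {k : Fin t}
    (h : Ch3 c X Y Z k) (h' : Ch3 c X' Y' Z' k) (hne : Y ≠ Y') (hsub : Y ⊆ Y') : False :=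
  nb4 hB h.1 (hsub.ssubset_of_ne hne) h'.2.1
    (h.2.2.2.1.trans h.2.2.1.symm) (h'.2.2.2.1.trans h.2.2.1.symm)
    (h'.2.2.2.2.trans h.2.2.1.symm)

open scoped Classical in
noncomputable def Bad (c : Finset (Fin n) → Fin t) (k : Fin t) :
    Finset (Equiv.Perm (Fin n)) :=
  univ.filter (fun τ => ∃ j₁ j₂ j₃, j₁ < j₂ ∧ j₂ < j₃ ∧ j₃ ≤ n ∧
    c (ch τ j₁) = k ∧ c (ch τ j₂) = k ∧ c (ch τ j₃) = k)

lemma mem_bad {c : Finset (Fin n) → Fin t} {k : Fin t} {τ : Equiv.Perm (Fin n)} :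
    τ ∈ Bad c k ↔ ∃ j₁ j₂ j₃, j₁ < j₂ ∧ j₂ < j₃ ∧ j₃ ≤ n ∧
      c (ch τ j₁) = k ∧ c (ch τ j₂) = k ∧ c (ch τ j₃) = k := by
  classical
  simp [Bad]

lemma bad_spec {c : Finset (Fin n) → Fin t} {k : Fin t} {τ : Equiv.Perm (Fin n)}
    (hτ : τ ∈ Bad c k) :
    ∃ X Y Z : Finset (Fin n), Ch3 c X Y Z k ∧
      ch τ X.card = X ∧ ch τ Y.card = Y ∧ ch τ Z.card = Z := by
  obtain ⟨j₁, j₂, j₃, h12, h23, h3n, e1, e2, e3⟩ := mem_bad.mp hτ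
  refine ⟨ch τ j₁, ch τ j₂, ch τ j₃,
    ⟨ch_ssubset τ h12 (by omega), ch_ssubset τ h23 h3n, e1, e2, e3⟩, ?_, ?_, ?_⟩
  · rw [ch_card τ (by omega : j₁ ≤ n)]
  · rw [ch_card τ (by omega : j₂ ≤ n)]
  · rw [ch_card τ h3n]

open scoped Classical in
noncomputable def mid (c : Finset (Fin n) → Fin t) (k : Fin t)
    (τ : Equiv.Perm (Fin n)) : Finset (Fin n) :=
  if h : ∃ X Y Z : Finset (Fin n), Ch3 c X Y Z k ∧
      ch τ X.card = X ∧ ch τ Y.card = Y ∧ ch τ Z.card = Z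
  then h.choose_spec.choose else ∅

lemma mid_spec {c : Finset (Fin n) → Fin t} {k : Fin t} {τ : Equiv.Perm (Fin n)}
    (hτ : τ ∈ Bad c k) :
    ∃ X Z : Finset (Fin n), Ch3 c X (mid c k τ) Z k ∧
      ch τ X.card = X ∧ ch τ ((mid c k τ).card) = mid c k τ ∧ ch τ Z.card = Z := by
  have h := bad_spec hτ
  classical
  rw [mid, dif_pos h]
  obtain ⟨hC, d1, d2, d3⟩ := h.choose_spec.choose_spec.choose_spec
  exact ⟨h.choose, h.choose_spec.choose_spec.choose, hC, d1, d2, d3⟩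

lemma color_bound {c : Finset (Fin n) → Fin t} (hB : ¬ Bfly c) (k : Fin t) (D : ℕ)
    (hD : ∀ X Y Z : Finset (Fin n), Ch3 c X Y Z k →
      D * (X.card ! * ((Y.card - X.card)! * ((Z.card - Y.card)! * (n - Z.card)!))) ≤
        Y.card ! * (n - Y.card)!) :
    D * (Bad c k).card ≤ n ! := by
  classical
  have hpart : (Bad c k).card =
      ∑ Y ∈ (Bad c k).image (mid c k), ((Bad c k).filter (fun τ => mid c k τ = Y)).card :=
    card_eq_sum_card_fiberwise (fun τ hτ => mem_image_of_mem _ hτ)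
  have hmain : ∀ Y ∈ (Bad c k).image (mid c k),
      D * ((Bad c k).filter (fun τ => mid c k τ = Y)).card ≤
        Y.card ! * (n - Y.card)! := by
    intro Y hY
    obtain ⟨τ₀, hτ₀, hφ₀⟩ := mem_image.mp hY
    obtain ⟨X₀, Z₀, h₀, hc1, hc2, hc3⟩ := mid_spec hτ₀
    rw [hφ₀] at h₀
    have hsub : (Bad c k).filter (fun τ => mid c k τ = Y) ⊆
        univ.filter (fun τ => ch τ X₀.card = X₀ ∧ ch τ Y.card = Y ∧ ch τ Z₀.card = Z₀) := by
      intro τ hτf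
      obtain ⟨hτB, hφτ⟩ := mem_filter.mp hτf
      obtain ⟨X, Z, h, d1, d2, d3⟩ := mid_spec hτB
      rw [hφτ] at h d2
      obtain ⟨hXe, hZe⟩ := ends_eq hB h h₀
      rw [hXe] at d1; rw [hZe] at d3
      exact mem_filter.mpr ⟨mem_univ _, d1, d2, d3⟩
    calc D * ((Bad c k).filter (fun τ => mid c k τ = Y)).card
        ≤ D * (X₀.card ! * ((Y.card - X₀.card)! *
            ((Z₀.card - Y.card)! * (n - Z₀.card)!))) :=
          Nat.mul_le_mul_left D (le_trans (card_le_card hsub)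
            (count_upper X₀ Y Z₀ h₀.1.subset h₀.2.1.subset))
      _ ≤ Y.card ! * (n - Y.card)! := hD X₀ Y Z₀ h₀
  have hanti : IsAntichain (· ⊆ ·)
      (((Bad c k).image (mid c k) : Finset (Finset (Fin n))) : Set (Finset (Fin n))) := by
    intro Y hY Y' hY' hne hsub
    obtain ⟨τ₁, hτ₁, hφ₁⟩ := mem_image.mp (mem_coe.mp hY)
    obtain ⟨τ₂, hτ₂, hφ₂⟩ := mem_image.mp (mem_coe.mp hY')
    obtain ⟨X₁, Z₁, h₁, -, -, -⟩ := mid_spec hτ₁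
    obtain ⟨X₂, Z₂, h₂, -, -, -⟩ := mid_spec hτ₂
    rw [hφ₁] at h₁; rw [hφ₂] at h₂
    exact mids_antichain hB h₁ h₂ hne hsub
  calc D * (Bad c k).card
      = ∑ Y ∈ (Bad c k).image (mid c k),
          D * ((Bad c k).filter (fun τ => mid c k τ = Y)).card := by
        rw [hpart, mul_sum]
    _ ≤ ∑ Y ∈ (Bad c k).image (mid c k), Y.card ! * (n - Y.card)! := sum_le_sum hmain
    _ ≤ n ! := antichain_sum_fact hanti

lemma two_bad {c : Finset (Fin n) → Fin t} (hB : ¬ Bfly c) (hn : n = 2 * t + 1)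
    (τ : Equiv.Perm (Fin n)) :
    2 ≤ (univ.filter (fun k : Fin t => τ ∈ Bad c k)).card := by
  classical
  set fib : Fin t → Finset ℕ :=
    fun k => (Finset.range (n + 1)).filter (fun j => c (ch τ j) = k) with hfib
  have hsum : n + 1 = ∑ k : Fin t, (fib k).card := by
    have := card_eq_sum_card_fiberwise
      (f := fun j => c (ch τ j)) (s := Finset.range (n + 1)) (t := univ)
      (fun j _ => mem_univ _)
    simpa using this
  have hle3 : ∀ k : Fin t, (fib k).card ≤ 3 := by
    intro k
    by_contra hgt
    obtain ⟨a, ha, b, hb, d, hd, e, he, hab, hbd, hde⟩ :=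
      exists_four_lt (s := fib k) (by omega)
    simp only [hfib, mem_filter, Finset.mem_range] at ha hb hd he
    exact nb4 hB (ch_ssubset τ hab (by omega)) (ch_ssubset τ hbd (by omega))
      (ch_ssubset τ hde (by omega)) (hb.2.trans ha.2.symm) (hd.2.trans ha.2.symm)
      (he.2.trans ha.2.symm)
  have hTsub : univ.filter (fun k : Fin t => 3 ≤ (fib k).card) ⊆
      univ.filter (fun k : Fin t => τ ∈ Bad c k) := by
    intro k hk
    rw [mem_filter] at hk ⊢
    obtain ⟨a, ha, b, hb, d, hd, hab, hbd⟩ := exists_three_lt hk.2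
    simp only [hfib, mem_filter, Finset.mem_range] at ha hb hd
    exact ⟨mem_univ _, mem_bad.mpr ⟨a, b, d, hab, hbd, by omega, ha.2, hb.2, hd.2⟩⟩
  have hTcard : 2 ≤ (univ.filter (fun k : Fin t => 3 ≤ (fib k).card)).card := by
    have h1 : ∑ k : Fin t, (fib k).card ≤
        ∑ k : Fin t, (if 3 ≤ (fib k).card then 3 else 2) := by
      refine sum_le_sum (fun k _ => ?_)
      split
      · exact hle3 k
      · omega
    rw [Finset.sum_ite, Finset.sum_const, Finset.sum_const, smul_eq_mul, smul_eq_mul] at h1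
    have h2 := Finset.card_filter_add_card_filter_not
      (s := (univ : Finset (Fin t))) (p := fun k => 3 ≤ (fib k).card)
    rw [Finset.card_univ, Fintype.card_fin] at h2
    omega
  exact le_trans hTcard (card_le_card hTsub)

set_option maxHeartbeats 1000000 in
lemma upper (ht : 1 ≤ t) (c : Finset (Fin (2 * t + 1)) → Fin t) : Bfly c := by
  classical
  by_contra hB
  have hglob : 2 * (2 * t + 1)! ≤ ∑ k : Fin t, (Bad c k).card := by
    calc 2 * (2 * t + 1)! = ∑ _τ : Equiv.Perm (Fin (2 * t + 1)), 2 := by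
          rw [Finset.sum_const, Finset.card_univ, Fintype.card_perm, Fintype.card_fin,
            smul_eq_mul, mul_comm]
      _ ≤ ∑ τ : Equiv.Perm (Fin (2 * t + 1)),
            (univ.filter (fun k : Fin t => τ ∈ Bad c k)).card :=
          sum_le_sum (fun τ _ => two_bad hB rfl τ)
      _ = ∑ τ : Equiv.Perm (Fin (2 * t + 1)), ∑ k : Fin t,
            (if τ ∈ Bad c k then 1 else 0) := by
          refine sum_congr rfl (fun τ _ => ?_)
          rw [Finset.card_filter]
      _ = ∑ k : Fin t, ∑ τ : Equiv.Perm (Fin (2 * t + 1)),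
            (if τ ∈ Bad c k then 1 else 0) := Finset.sum_comm
      _ = ∑ k : Fin t, (Bad c k).card := by
          refine sum_congr rfl (fun k _ => ?_)
          rw [← Finset.card_filter]
          congr 1
          rw [Finset.filter_mem_eq_inter, Finset.univ_inter]
  have hone : ∀ k : Fin t, (Bad c k).card ≤ (2 * t + 1)! := by
    intro k
    calc (Bad c k).card ≤ (univ : Finset (Equiv.Perm (Fin (2 * t + 1)))).card :=
          card_le_card (filter_subset _ _)
      _ = (2 * t + 1)! := by rw [Finset.card_univ, Fintype.card_perm, Fintype.card_fin]
  have hgen : ∀ k : Fin t, k ≠ c ∅ → k ≠ c univ →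
      (4 * t - 2) * (Bad c k).card ≤ (2 * t + 1)! := by
    intro k hk0 hk1
    apply color_bound hB k
    rintro X Y Z ⟨h1, h2, e1, e2, e3⟩
    have hXne : X ≠ ∅ := fun he => hk0 (by rw [← e1, he])
    have hZne : Z ≠ univ := fun he => hk1 (by rw [← e3, he])
    have hx1 : 1 ≤ X.card := card_pos.mpr (nonempty_iff_ne_empty.mpr hXne)
    have hxy : X.card < Y.card := card_lt_card h1
    have hyz : Y.card < Z.card := card_lt_card h2
    have hzn : Z.card ≤ 2 * t + 1 := by simpa using Z.card_le_univ
    have hzn' : Z.card ≠ 2 * t + 1 := by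
      intro he
      apply hZne
      apply (Finset.card_eq_iff_eq_univ Z).mp
      rw [Fintype.card_fin]
      exact he
    have i1 : Y.card * (X.card ! * (Y.card - X.card)!) ≤ Y.card ! :=
      mul_fact_le hx1 hxy
    have i2 : (2 * t + 1 - Y.card) * ((Z.card - Y.card)! * (2 * t + 1 - Z.card)!) ≤
        (2 * t + 1 - Y.card)! := by
      have h := mul_fact_le (x := Z.card - Y.card) (y := 2 * t + 1 - Y.card)
        (by omega) (by omega)
      rwa [show (2 * t + 1 - Y.card) - (Z.card - Y.card) = 2 * t + 1 - Z.card by omega] at h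
    have i3 : 4 * t - 2 ≤ Y.card * (2 * t + 1 - Y.card) := by
      obtain ⟨a, ha⟩ : ∃ a, Y.card = a + 2 := ⟨Y.card - 2, by omega⟩
      obtain ⟨b, hb⟩ : ∃ b, 2 * t + 1 - Y.card = b + 2 := ⟨2 * t + 1 - Y.card - 2, by omega⟩
      have hprod : (a + 2) * (b + 2) = a * b + 2 * a + 2 * b + 4 := by ring
      have h0 := Nat.zero_le (a * b)
      rw [hb, ha, hprod]
      omega
    calc (4 * t - 2) * (X.card ! * ((Y.card - X.card)! *
            ((Z.card - Y.card)! * (2 * t + 1 - Z.card)!)))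
        ≤ (Y.card * (2 * t + 1 - Y.card)) * (X.card ! * ((Y.card - X.card)! *
            ((Z.card - Y.card)! * (2 * t + 1 - Z.card)!))) := Nat.mul_le_mul_right _ i3
      _ = (Y.card * (X.card ! * (Y.card - X.card)!)) *
            ((2 * t + 1 - Y.card) * ((Z.card - Y.card)! * (2 * t + 1 - Z.card)!)) := by
          ring
      _ ≤ Y.card ! * (2 * t + 1 - Y.card)! := Nat.mul_le_mul i1 i2
  have hemp : c ∅ ≠ c univ → 2 * (Bad c (c ∅)).card ≤ (2 * t + 1)! := by
    intro hne
    apply color_bound hB (c ∅)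
    rintro X Y Z ⟨h1, h2, e1, e2, e3⟩
    have hXe : X = ∅ := by
      by_contra hXne
      have h0 : (∅ : Finset (Fin (2 * t + 1))) ⊂ X :=
        (empty_subset X).ssubset_of_ne (Ne.symm hXne)
      exact nb4 hB h0 h1 h2 e1 (e2.trans e1.symm ▸ e2) e3
    have hZne : Z ≠ univ := fun he => hne (by rw [← e3, he])
    subst hXe
    rw [Finset.card_empty]
    have hyz : Y.card < Z.card := card_lt_card h2
    have hzn : Z.card ≤ 2 * t + 1 := by simpa using Z.card_le_univ
    have hzn' : Z.card ≠ 2 * t + 1 := by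
      intro he
      apply hZne
      apply (Finset.card_eq_iff_eq_univ Z).mp
      rw [Fintype.card_fin]
      exact he
    have i2 : (2 * t + 1 - Y.card) * ((Z.card - Y.card)! * (2 * t + 1 - Z.card)!) ≤
        (2 * t + 1 - Y.card)! := by
      have h := mul_fact_le (x := Z.card - Y.card) (y := 2 * t + 1 - Y.card)
        (by omega) (by omega)
      rwa [show (2 * t + 1 - Y.card) - (Z.card - Y.card) = 2 * t + 1 - Z.card by omega] at h
    have h2n : 2 ≤ 2 * t + 1 - Y.card := by omega
    calc 2 * ((0)! * ((Y.card - 0)! * ((Z.card - Y.card)! * (2 * t + 1 - Z.card)!)))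
        = Y.card ! * (2 * ((Z.card - Y.card)! * (2 * t + 1 - Z.card)!)) := by
          simp only [Nat.factorial_zero, Nat.sub_zero]; ring
      _ ≤ Y.card ! * ((2 * t + 1 - Y.card) *
            ((Z.card - Y.card)! * (2 * t + 1 - Z.card)!)) :=
          Nat.mul_le_mul_left _ (Nat.mul_le_mul_right _ h2n)
      _ ≤ Y.card ! * (2 * t + 1 - Y.card)! := Nat.mul_le_mul_left _ i2
  have hful : c ∅ ≠ c univ → 2 * (Bad c (c univ)).card ≤ (2 * t + 1)! := by
    intro hne
    apply color_bound hB (c univ)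
    rintro X Y Z ⟨h1, h2, e1, e2, e3⟩
    have hZe : Z = univ := by
      by_contra hZne
      have h3 : Z ⊂ univ := (subset_univ Z).ssubset_of_ne hZne
      exact nb4 hB h1 h2 h3 (e2.trans e1.symm) (e3.trans e1.symm) e1.symm
    have hXne : X ≠ ∅ := fun he => hne (by rw [← e1, he])
    subst hZe
    rw [Finset.card_univ, Fintype.card_fin]
    have hx1 : 1 ≤ X.card := card_pos.mpr (nonempty_iff_ne_empty.mpr hXne)
    have hxy : X.card < Y.card := card_lt_card h1
    have hyn : Y.card < 2 * t + 1 := by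
      have := card_lt_card h2
      have h4 : (Finset.univ : Finset (Fin (2 * t + 1))).card = 2 * t + 1 := by
        rw [Finset.card_univ, Fintype.card_fin]
      omega
    have i1 : Y.card * (X.card ! * (Y.card - X.card)!) ≤ Y.card ! :=
      mul_fact_le hx1 hxy
    have h2y : 2 ≤ Y.card := by omega
    calc 2 * (X.card ! * ((Y.card - X.card)! *
            ((2 * t + 1 - Y.card)! * (2 * t + 1 - (2 * t + 1))!)))
        = (2 * (X.card ! * (Y.card - X.card)!)) * (2 * t + 1 - Y.card)! := by
          simp only [Nat.sub_self, Nat.factorial_zero]; ring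
      _ ≤ (Y.card * (X.card ! * (Y.card - X.card)!)) * (2 * t + 1 - Y.card)! :=
          Nat.mul_le_mul_right _ (Nat.mul_le_mul_right _ h2y)
      _ ≤ Y.card ! * (2 * t + 1 - Y.card)! := Nat.mul_le_mul_right _ i1
  -- final arithmetic
  have hfactpos : 0 < (2 * t + 1)! := Nat.factorial_pos _
  by_cases hks : c (∅ : Finset (Fin (2 * t + 1))) = c univ
  · have hsplit : (Bad c (c ∅)).card + ∑ k ∈ univ.erase (c ∅), (Bad c k).card =
        ∑ k : Fin t, (Bad c k).card :=
      Finset.add_sum_erase univ (fun k => (Bad c k).card) (mem_univ _)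
    have hrest : (4 * t - 2) * (∑ k ∈ univ.erase (c ∅), (Bad c k).card) ≤
        (t - 1) * (2 * t + 1)! := by
      rw [Finset.mul_sum]
      calc ∑ k ∈ univ.erase (c ∅), (4 * t - 2) * (Bad c k).card
          ≤ ∑ _k ∈ univ.erase (c ∅), (2 * t + 1)! :=
            sum_le_sum (fun k hk => hgen k (ne_of_mem_erase hk)
              (fun h => (ne_of_mem_erase hk) (h.trans hks.symm)))
        _ = (t - 1) * (2 * t + 1)! := by
            rw [Finset.sum_const, card_erase_of_mem (mem_univ _), Finset.card_univ,
              Fintype.card_fin, smul_eq_mul]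
    have hA : (4 * t - 2) * (2 * (2 * t + 1)!) ≤
        (4 * t - 2) * (2 * t + 1)! + (t - 1) * (2 * t + 1)! := by
      calc (4 * t - 2) * (2 * (2 * t + 1)!) ≤
          (4 * t - 2) * ∑ k : Fin t, (Bad c k).card := Nat.mul_le_mul_left _ hglob
        _ = (4 * t - 2) * (Bad c (c ∅)).card +
            (4 * t - 2) * ∑ k ∈ univ.erase (c ∅), (Bad c k).card := by
            rw [← hsplit, Nat.mul_add]
        _ ≤ (4 * t - 2) * (2 * t + 1)! + (t - 1) * (2 * t + 1)! :=
            Nat.add_le_add (Nat.mul_le_mul_left _ (hone _)) hrest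
    have hA' : (8 * t - 4) * (2 * t + 1)! ≤ (5 * t - 3) * (2 * t + 1)! := by
      calc (8 * t - 4) * (2 * t + 1)! = (4 * t - 2) * (2 * (2 * t + 1)!) := by
            rw [show (8 * t - 4) = (4 * t - 2) * 2 by omega, mul_assoc]
        _ ≤ (4 * t - 2) * (2 * t + 1)! + (t - 1) * (2 * t + 1)! := hA
        _ = (5 * t - 3) * (2 * t + 1)! := by
            rw [← Nat.add_mul, show (4 * t - 2) + (t - 1) = 5 * t - 3 by omega]
    have := Nat.le_of_mul_le_mul_right hA' hfactpos
    omega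
  · have ht2 : 2 ≤ t := by
      by_contra hlt
      have htt : t = 1 := by omega
      apply hks
      apply Fin.ext
      have hv1 := (c (∅ : Finset (Fin (2 * t + 1)))).2
      have hv2 := (c (univ : Finset (Fin (2 * t + 1)))).2
      omega
    have h10 : c univ ∈ univ.erase (c (∅ : Finset (Fin (2 * t + 1)))) :=
      mem_erase.mpr ⟨Ne.symm hks, mem_univ _⟩
    have hsplit1 : (Bad c (c ∅)).card + ∑ k ∈ univ.erase (c ∅), (Bad c k).card =
        ∑ k : Fin t, (Bad c k).card :=
      Finset.add_sum_erase univ (fun k => (Bad c k).card) (mem_univ _)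
    have hsplit2 : (Bad c (c univ)).card +
        ∑ k ∈ (univ.erase (c ∅)).erase (c univ), (Bad c k).card =
        ∑ k ∈ univ.erase (c ∅), (Bad c k).card :=
      Finset.add_sum_erase _ (fun k => (Bad c k).card) h10
    have hrest : (4 * t - 2) *
        (∑ k ∈ (univ.erase (c ∅)).erase (c univ), (Bad c k).card) ≤
        (t - 2) * (2 * t + 1)! := by
      rw [Finset.mul_sum]
      calc ∑ k ∈ (univ.erase (c ∅)).erase (c univ), (4 * t - 2) * (Bad c k).card
          ≤ ∑ _k ∈ (univ.erase (c ∅)).erase (c univ), (2 * t + 1)! :=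
            sum_le_sum (fun k hk => hgen k
              (ne_of_mem_erase (mem_of_mem_erase hk)) (ne_of_mem_erase hk))
        _ = (t - 2) * (2 * t + 1)! := by
            rw [Finset.sum_const, card_erase_of_mem h10, card_erase_of_mem (mem_univ _),
              Finset.card_univ, Fintype.card_fin, smul_eq_mul,
              show t - 1 - 1 = t - 2 by omega]
    have hA : (4 * t - 2) * (2 * (2 * t + 1)!) ≤
        (2 * t - 1) * (2 * t + 1)! + ((2 * t - 1) * (2 * t + 1)! +
          (t - 2) * (2 * t + 1)!) := by
      calc (4 * t - 2) * (2 * (2 * t + 1)!) ≤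
          (4 * t - 2) * ∑ k : Fin t, (Bad c k).card := Nat.mul_le_mul_left _ hglob
        _ = (4 * t - 2) * (Bad c (c ∅)).card +
            ((4 * t - 2) * (Bad c (c univ)).card +
              (4 * t - 2) * ∑ k ∈ (univ.erase (c ∅)).erase (c univ), (Bad c k).card) := by
            rw [← hsplit1, ← hsplit2, Nat.mul_add, Nat.mul_add]
        _ ≤ (2 * t - 1) * (2 * t + 1)! + ((2 * t - 1) * (2 * t + 1)! +
              (t - 2) * (2 * t + 1)!) := by
            refine Nat.add_le_add ?_ (Nat.add_le_add ?_ hrest)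
            · calc (4 * t - 2) * (Bad c (c ∅)).card
                  = (2 * t - 1) * (2 * (Bad c (c ∅)).card) := by
                    rw [show (4 * t - 2) = (2 * t - 1) * 2 by omega, mul_assoc]
                _ ≤ (2 * t - 1) * (2 * t + 1)! := Nat.mul_le_mul_left _ (hemp hks)
            · calc (4 * t - 2) * (Bad c (c univ)).card
                  = (2 * t - 1) * (2 * (Bad c (c univ)).card) := by
                    rw [show (4 * t - 2) = (2 * t - 1) * 2 by omega, mul_assoc]
                _ ≤ (2 * t - 1) * (2 * t + 1)! := Nat.mul_le_mul_left _ (hful hks)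
    have hA' : (8 * t - 4) * (2 * t + 1)! ≤ (5 * t - 4) * (2 * t + 1)! := by
      calc (8 * t - 4) * (2 * t + 1)! = (4 * t - 2) * (2 * (2 * t + 1)!) := by
            rw [show (8 * t - 4) = (4 * t - 2) * 2 by omega, mul_assoc]
        _ ≤ (2 * t - 1) * (2 * t + 1)! + ((2 * t - 1) * (2 * t + 1)! +
              (t - 2) * (2 * t + 1)!) := hA
        _ = (5 * t - 4) * (2 * t + 1)! := by
            rw [← Nat.add_mul, ← Nat.add_mul,
              show (2 * t - 1) + ((2 * t - 1) + (t - 2)) = 5 * t - 4 by omega]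
    have := Nat.le_of_mul_le_mul_right hA' hfactpos
    omega

lemma lower {N : ℕ} (ht : 1 ≤ t) (hN : N ≤ 2 * t)
    (h : ∀ c : Finset (Fin N) → Fin t, Bfly c) : False := by
  have htpos : 0 < 2 * t := by omega
  set c : Finset (Fin N) → Fin t :=
    fun A => ⟨A.card % (2 * t) / 2, by
      have := Nat.mod_lt A.card htpos
      omega⟩ with hc
  obtain ⟨X₁, X₂, Y₁, Y₂, h12, hXY1, hXY2, hXY3, hXY4, hYY,
    s11, s12, s21, s22, e2, e3, e4⟩ := h c
  set v := (c X₁).val with hv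
  have hval : ∀ A : Finset (Fin N), c A = c X₁ → A.card % (2 * t) / 2 = v := by
    intro A hA
    have := congrArg Fin.val hA
    simpa [hc] using this
  have hcardle : ∀ A : Finset (Fin N), A.card ≤ N := fun A => by
    simpa using A.card_le_univ
  have hbranch : ∀ A : Finset (Fin N), c A = c X₁ →
      (A.card = 2 * v ∨ A.card = 2 * v + 1) ∨ (A = univ ∧ v = 0 ∧ N = 2 * t) := by
    intro A hA
    have h1 := hval A hA
    have h2 := hcardle A
    rcases Nat.lt_or_ge A.card (2 * t) with hlt | hge
    · left
      rw [Nat.mod_eq_of_lt hlt] at h1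
      omega
    · right
      have hA2 : A.card = 2 * t := by omega
      have hN2 : N = 2 * t := by omega
      have hAu : A = univ := by
        apply (Finset.card_eq_iff_eq_univ A).mp
        rw [Fintype.card_fin]; omega
      refine ⟨hAu, ?_, hN2⟩
      rw [hA2, Nat.mod_self] at h1
      omega
  have hbX1 := hbranch X₁ rfl
  have hbX2 := hbranch X₂ e2
  have hbY1 := hbranch Y₁ e3
  have hbY2 := hbranch Y₂ e4
  have huniv_case : ∀ Ya Yb : Finset (Fin N), Ya = univ → v = 0 →
      Yb ≠ Ya → ((Yb.card = 2 * v ∨ Yb.card = 2 * v + 1) ∨ (Yb = univ ∧ v = 0 ∧ N = 2 * t)) →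
      X₁ ⊆ Yb → X₂ ⊆ Yb → X₁ ≠ Yb → X₂ ≠ Yb → False := by
    intro Ya Yb hYa hv0 hne hb hs1 hs2 hne1 hne2
    have hYbcard : Yb.card ≤ 1 := by
      rcases hb with (h | h) | ⟨h, -, -⟩
      · omega
      · omega
      · exact absurd (h.trans hYa.symm) hne
    have hb1 : X₁ ⊂ Yb := hs1.ssubset_of_ne hne1
    have hb2 : X₂ ⊂ Yb := hs2.ssubset_of_ne hne2
    have c1 : X₁.card < Yb.card := card_lt_card hb1
    have c2 : X₂.card < Yb.card := card_lt_card hb2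
    have hx1 : X₁.card = 0 := by omega
    have hx2 : X₂.card = 0 := by omega
    exact h12 ((card_eq_zero.mp hx1).trans (card_eq_zero.mp hx2).symm)
  rcases hbY1 with hb1 | ⟨hY1u, hv0, hN2⟩
  · rcases hbY2 with hb2 | ⟨hY2u, hv0, hN2⟩
    · have hbX1' : X₁.card = 2 * v ∨ X₁.card = 2 * v + 1 := by
        rcases hbX1 with h | ⟨hXu, hv0', hN2'⟩
        · exact h
        · exfalso
          have hY1u : Y₁ = univ := univ_subset_iff.mp (hXu ▸ s11)
          have hcN : Y₁.card = N := by rw [hY1u, Finset.card_univ, Fintype.card_fin]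
          omega
      have hbX2' : X₂.card = 2 * v ∨ X₂.card = 2 * v + 1 := by
        rcases hbX2 with h | ⟨hXu, hv0', hN2'⟩
        · exact h
        · exfalso
          have hY1u : Y₁ = univ := univ_subset_iff.mp (hXu ▸ s21)
          have hcN : Y₁.card = N := by rw [hY1u, Finset.card_univ, Fintype.card_fin]
          omega
      have hZW : X₁ ∪ X₂ ⊆ Y₁ ∩ Y₂ :=
        union_subset (subset_inter s11 s12) (subset_inter s21 s22)
      have hZc : 2 * v + 1 ≤ (X₁ ∪ X₂).card := by
        by_cases hz : X₁ ∪ X₂ = X₁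
        · have hss : X₂ ⊂ X₁ :=
            (hz ▸ subset_union_right).ssubset_of_ne (Ne.symm h12)
          have hcc := card_lt_card hss
          have hc2 : (X₁ ∪ X₂).card = X₁.card := by rw [hz]
          omega
        · have hss : X₁ ⊂ X₁ ∪ X₂ :=
            subset_union_left.ssubset_of_ne (fun he => hz he.symm)
          have hcc := card_lt_card hss
          omega
      have hWc : (Y₁ ∩ Y₂).card ≤ 2 * v := by
        by_cases hw : Y₁ ∩ Y₂ = Y₁
        · have hsub : Y₁ ⊆ Y₂ := inter_eq_left.mp hw
          have hss : Y₁ ⊂ Y₂ := hsub.ssubset_of_ne hYY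
          have hcc := card_lt_card hss
          have hc2 : (Y₁ ∩ Y₂).card = Y₁.card := by rw [hw]
          omega
        · have hss : Y₁ ∩ Y₂ ⊂ Y₁ := inter_subset_left.ssubset_of_ne hw
          have hcc := card_lt_card hss
          omega
      have hfin := card_le_card hZW
      omega
    · exact huniv_case Y₂ Y₁ hY2u hv0 hYY (Or.inl hb1) s11 s21 hXY1 hXY3
  · exact huniv_case Y₁ Y₂ hY1u hv0 (Ne.symm hYY) hbY2 s12 s22 hXY2 hXY4

end BRB

/-- `BR^1_t(⋈) = 2t + 1`: for every `t ≥ 1`, `2t+1` is the least `N`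
such that every `t`-coloring of the elements of the Boolean lattice `B_N`
contains a monochromatic copy of the butterfly poset, i.e. four distinct subsets
`X₁, X₂, Y₁, Y₂` of the same color with `Xᵢ ⊆ Yⱼ` for all `i, j`. -/
theorem boolean_ramsey_butterfly
    (t : ℕ) (ht : 1 ≤ t) :
    IsLeast
      {N : ℕ | ∀ c : Finset (Fin N) → Fin t,
        ∃ X₁ X₂ Y₁ Y₂ : Finset (Fin N),
          X₁ ≠ X₂ ∧ X₁ ≠ Y₁ ∧ X₁ ≠ Y₂ ∧ X₂ ≠ Y₁ ∧ X₂ ≠ Y₂ ∧ Y₁ ≠ Y₂ ∧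
          X₁ ⊆ Y₁ ∧ X₁ ⊆ Y₂ ∧ X₂ ⊆ Y₁ ∧ X₂ ⊆ Y₂ ∧
          c X₂ = c X₁ ∧ c Y₁ = c X₁ ∧ c Y₂ = c X₁}
      (2 * t + 1) := by
  constructor
  · intro c
    exact BRB.upper ht c
  · intro N hN
    by_contra hlt
    push_neg at hlt
    exact BRB.lower ht (by omega) hN
end

section
/- For all integers d ≥ 1 and t ≥ 1, every t-coloring of the elements of the Boolean lattice B_{2d²t} contains a monochromatic copy of the Boolean lattice B_d. (That is, BR^1_t(B_d) ≤ 2d²t.) -/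
namespace BooleanRamseyAux

/-- The "cell" of block `j` with pattern `W`: all coordinates below `j*d` together with
the coordinates `j*d + x` for `x ∈ W`. -/
def cellF (n d j : ℕ) (W : Finset (Fin d)) : Finset (Fin n) :=
  Finset.univ.filter (fun v => v.val < j * d ∨ ∃ x : Fin d, x ∈ W ∧ v.val = j * d + x.val)

lemma mem_cellF {n d j : ℕ} {W : Finset (Fin d)} {v : Fin n} :
    v ∈ cellF n d j W ↔ (v.val < j * d ∨ ∃ x ∈ W, v.val = j * d + x.val) := by
  simp [cellF]

lemma cellF_subset {n d : ℕ} {j j' : ℕ} {W W' : Finset (Fin d)} (h : j < j') :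
    cellF n d j W ⊆ cellF n d j' W' := by
  intro v hv
  rw [mem_cellF] at hv ⊢
  left
  have h1 : (j + 1) * d ≤ j' * d := Nat.mul_le_mul_right d h
  have h2 : (j + 1) * d = j * d + d := by ring
  rcases hv with hv | ⟨x, _, hx⟩
  · omega
  · have := x.isLt; omega

lemma mem_cellF_mk {n d j : ℕ} {W : Finset (Fin d)} (x : Fin d) (h : j * d + x.val < n) :
    (⟨j * d + x.val, h⟩ : Fin n) ∈ cellF n d j W ↔ x ∈ W := by
  rw [mem_cellF]
  simp only [Fin.val_mk]
  constructor
  · rintro (hv | ⟨y, hy, hxy⟩)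
    · omega
    · have : x = y := Fin.ext (by omega)
      rwa [this]
  · intro hx
    exact Or.inr ⟨x, hx, rfl⟩

lemma cellF_injW {n d j : ℕ} (hj : j * d + d ≤ n) {W W' : Finset (Fin d)}
    (h : cellF n d j W = cellF n d j W') : W = W' := by
  ext x
  have hx : j * d + x.val < n := by have := x.isLt; omega
  rw [← mem_cellF_mk (n := n) (j := j) (W := W) x hx, h, mem_cellF_mk]

lemma cellF_ne {n d : ℕ} {j j' : ℕ} (hj : j * d + d ≤ n) (hjj : j < j')
    {W W' : Finset (Fin d)} (hW : W ≠ Finset.univ) :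
    cellF n d j W ≠ cellF n d j' W' := by
  intro h
  obtain ⟨x, hx⟩ : ∃ x : Fin d, x ∉ W := by
    by_contra hc
    push_neg at hc
    exact hW (Finset.eq_univ_iff_forall.mpr hc)
  have hxn : j * d + x.val < n := by have := x.isLt; omega
  have h1 : (⟨j * d + x.val, hxn⟩ : Fin n) ∉ cellF n d j W := by
    rw [mem_cellF_mk]; exact hx
  have h2 : (⟨j * d + x.val, hxn⟩ : Fin n) ∈ cellF n d j' W' := by
    rw [mem_cellF]
    simp only [Fin.val_mk]
    left
    have h3 : (j + 1) * d ≤ j' * d := Nat.mul_le_mul_right d hjj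
    have h4 : (j + 1) * d = j * d + d := by ring
    have := x.isLt; omega
  rw [h] at h1
  exact h1 h2

end BooleanRamseyAux

open BooleanRamseyAux in
/-- `BR^1_t(B_d) ≤ 2d²t`: for all `d, t ≥ 1`, every `t`-coloring of the
elements of the Boolean lattice `B_{2d²t}` contains a monochromatic copy of the
Boolean lattice `B_d`. -/
theorem boolean_ramsey_Bd_upper (d t : ℕ) (hd : 1 ≤ d) (ht : 1 ≤ t) :
    ∀ c : Finset (Fin (2 * d ^ 2 * t)) → Fin t,
      ∃ (i : Fin t) (f : Finset (Fin d) → Finset (Fin (2 * d ^ 2 * t))),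
        Function.Injective f ∧
        (∀ S T : Finset (Fin d), S ⊆ T → f S ⊆ f T) ∧
        (∀ S : Finset (Fin d), c (f S) = i) := by
  intro c
  have h2d : 2 ≤ 2 ^ d := by
    calc 2 = 2 ^ 1 := rfl
    _ ≤ 2 ^ d := Nat.pow_le_pow_right (by norm_num) hd
  -- number of blocks
  set m : ℕ := 2 * d * t with hm
  have hmd : m * d = 2 * d ^ 2 * t := by rw [hm]; ring
  -- proper subsets of univ
  set Props : Finset (Finset (Fin d)) := (Finset.univ : Finset (Fin d)).ssubsets with hProps
  have hProps_card : Props.card = 2 ^ d - 1 := by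
    rw [hProps, Finset.ssubsets, Finset.card_erase_of_mem (Finset.mem_powerset_self _),
      Finset.card_powerset, Finset.card_univ, Fintype.card_fin]
  have hProps_ne : ∀ {W : Finset (Fin d)}, W ∈ Props → W ≠ Finset.univ := by
    intro W hW
    rw [hProps, Finset.mem_ssubsets] at hW
    exact hW.ne
  -- capacities and prefix sums
  set cap : Fin t → ℕ → ℕ := fun i j =>
    (Props.filter (fun W => c (cellF (2 * d ^ 2 * t) d j W) = i)).card with hcap
  set s : Fin t → ℕ → ℕ := fun i J => ∑ j ∈ Finset.range J, cap i j with hs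
  have hcap_le : ∀ i j, cap i j ≤ 2 ^ d - 1 := fun i j =>
    (Finset.card_filter_le _ _).trans (le_of_eq hProps_card)
  have hcap_sum : ∀ j, ∑ i, cap i j = 2 ^ d - 1 := by
    intro j
    rw [← hProps_card]
    exact (Finset.card_eq_sum_card_fiberwise
      (f := fun W => c (cellF (2 * d ^ 2 * t) d j W)) (fun x _ => Finset.mem_univ _)).symm
  have htot : ∑ i, s i m = m * (2 ^ d - 1) := by
    rw [hs]
    calc ∑ i, ∑ j ∈ Finset.range m, cap i j
        = ∑ j ∈ Finset.range m, ∑ i, cap i j := Finset.sum_comm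
    _ = ∑ _j ∈ Finset.range m, (2 ^ d - 1) := by
        exact Finset.sum_congr rfl (fun j _ => hcap_sum j)
    _ = m * (2 ^ d - 1) := by simp [mul_comm]
  -- pigeonhole: a color with many cells
  obtain ⟨i, hsi⟩ : ∃ i : Fin t, 2 * d * (2 ^ d - 1) ≤ s i m := by
    by_contra h
    push_neg at h
    have hlt : ∑ i, s i m < ∑ _i : Fin t, 2 * d * (2 ^ d - 1) :=
      Finset.sum_lt_sum_of_nonempty (Finset.univ_nonempty_iff.mpr ⟨⟨0, ht⟩⟩)
        (fun i _ => h i)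
    rw [htot, Finset.sum_const, Finset.card_univ, Fintype.card_fin, smul_eq_mul] at hlt
    have heq2 : m * (2 ^ d - 1) = t * (2 * d * (2 ^ d - 1)) := by rw [hm]; ring
    rw [heq2] at hlt
    exact lt_irrefl _ hlt
  -- thresholds
  set T : ℕ → ℕ := fun ℓ => (∑ k ∈ Finset.range (ℓ + 1), d.choose k) + ℓ * (2 ^ d - 2)
    with hT
  have hT1 : ∀ ℓ, 1 ≤ T ℓ := by
    intro ℓ
    have h0 : d.choose 0 ≤ ∑ k ∈ Finset.range (ℓ + 1), d.choose k :=
      Finset.single_le_sum (f := fun k => d.choose k) (fun _ _ => Nat.zero_le _)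
        (Finset.mem_range.mpr (by omega))
    simp only [Nat.choose_zero_right] at h0
    simp only [hT]
    omega
  have hTmono : Monotone T := by
    intro a b hab
    simp only [hT]
    exact Nat.add_le_add
      (Finset.sum_le_sum_of_subset (Finset.range_subset_range.mpr (by omega)))
      (Nat.mul_le_mul_right _ hab)
  have hTsucc : ∀ ℓ, T (ℓ + 1) = T ℓ + (d.choose (ℓ + 1) + (2 ^ d - 2)) := by
    intro ℓ
    simp only [hT, Finset.sum_range_succ]
    ring
  have hTd : T d ≤ 2 * d * (2 ^ d - 1) := by
    simp only [hT, Nat.sum_range_choose]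
    obtain ⟨e, he⟩ : ∃ e, 2 ^ d = e + 2 := ⟨2 ^ d - 2, by omega⟩
    rw [he]
    have h6 : e + 2 - 2 = e := by omega
    have h7 : e + 2 - 1 = e + 1 := by omega
    rw [h6, h7]
    have h1 : e + 2 ≤ d * (e + 2) := Nat.le_mul_of_pos_left _ (by omega)
    have h2 : d * (e + 2) = d * e + 2 * d := by ring
    have h3 : 2 * d * (e + 1) = 2 * (d * e) + 2 * d := by ring
    omega
  have hsTd : T d ≤ s i m := hTd.trans hsi
  -- greedy boundaries
  have hex : ∀ ℓ, ∃ j, min (T ℓ) (T d) ≤ s i j :=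
    fun ℓ => ⟨m, (min_le_right _ _).trans hsTd⟩
  set b : ℕ → ℕ := fun ℓ => Nat.find (hex ℓ) with hb
  have hbT : ∀ ℓ, ℓ ≤ d → T ℓ ≤ s i (b ℓ) := by
    intro ℓ hℓ
    have h1 := Nat.find_spec (hex ℓ)
    exact le_trans (le_of_eq (min_eq_left (hTmono hℓ)).symm) h1
  have hblt : ∀ ℓ, ℓ ≤ d → ∀ j, j < b ℓ → s i j < T ℓ := by
    intro ℓ hℓ j hj
    have h1 := Nat.find_min (hex ℓ) hj
    have h2 : min (T ℓ) (T d) = T ℓ := min_eq_left (hTmono hℓ)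
    omega
  have hbm : ∀ ℓ, b ℓ ≤ m :=
    fun ℓ => Nat.find_min' (hex ℓ) ((min_le_right _ _).trans hsTd)
  have hsmono : ∀ a b' : ℕ, a ≤ b' → s i a ≤ s i b' := by
    intro a b' h
    simp only [hs]
    exact Finset.sum_le_sum_of_subset (Finset.range_subset_range.mpr h)
  have hs_succ : ∀ j, s i (j + 1) = s i j + cap i j := by
    intro j
    simp only [hs]
    exact Finset.sum_range_succ _ _
  have hs0 : s i 0 = 0 := by simp only [hs]; simp
  have hstep : ∀ ℓ, ℓ ≤ d → s i (b ℓ) ≤ T ℓ + (2 ^ d - 2) := by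
    intro ℓ hℓ
    have hbpos : 0 < b ℓ := by
      rcases Nat.eq_zero_or_pos (b ℓ) with h0 | h0
      · exfalso
        have := hbT ℓ hℓ
        rw [h0, hs0] at this
        have := hT1 ℓ
        omega
      · exact h0
    obtain ⟨k, hk⟩ : ∃ k, b ℓ = k + 1 := ⟨b ℓ - 1, by omega⟩
    have h1 : s i k < T ℓ := hblt ℓ hℓ k (by omega)
    have h2 : cap i k ≤ 2 ^ d - 1 := hcap_le i k
    have h3 : s i (b ℓ) = s i k + cap i k := by rw [hk]; exact hs_succ k
    omega
  have hbstrict : ∀ ℓ, ℓ + 1 ≤ d → b ℓ < b (ℓ + 1) := by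
    intro ℓ hℓ
    by_contra h
    push_neg at h
    have h1 : T (ℓ + 1) ≤ s i (b (ℓ + 1)) := hbT _ hℓ
    have h2 : s i (b (ℓ + 1)) ≤ s i (b ℓ) := hsmono _ _ h
    have h3 : s i (b ℓ) ≤ T ℓ + (2 ^ d - 2) := hstep ℓ (by omega)
    have h4 : T (ℓ + 1) = T ℓ + (d.choose (ℓ + 1) + (2 ^ d - 2)) := hTsucc ℓ
    have h5 : 0 < d.choose (ℓ + 1) := Nat.choose_pos hℓ
    omega
  have hbmono : ∀ k, k ≤ d → ∀ a, a ≤ k → b a ≤ b k := by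
    intro k
    induction k with
    | zero =>
      intro _ a ha
      have : a = 0 := by omega
      rw [this]
    | succ k ih =>
      intro hk a ha
      rcases Nat.eq_or_lt_of_le ha with h | h
      · rw [h]
      · exact (ih (by omega) a (by omega)).trans (hbstrict k hk).le
  -- block groups
  set B : ℕ → ℕ := fun ℓ => match ℓ with | 0 => 0 | (k + 1) => b k with hB
  have hgroup : ∀ ℓ, ℓ ≤ d →
      d.choose ℓ ≤ ∑ j ∈ Finset.Ico (B ℓ) (B (ℓ + 1)), cap i j := by
    intro ℓ hℓ
    match ℓ with
    | 0 =>
      have h1 : T 0 ≤ s i (b 0) := hbT 0 (by omega)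
      have h2 : T 0 = 1 := by simp only [hT]; simp
      have h3 : ∑ j ∈ Finset.Ico (B 0) (B 1), cap i j = s i (b 0) := by
        have hB0 : B 0 = 0 := rfl
        have hB1 : B 1 = b 0 := rfl
        rw [hB0, hB1]
        simp only [hs]
        rw [Finset.range_eq_Ico]
      have h5 : 1 ≤ s i (b 0) := le_trans (le_of_eq h2.symm) h1
      rw [Nat.choose_zero_right, h3]
      exact h5
    | (k + 1) =>
      have hbk : b k ≤ b (k + 1) := (hbstrict k hℓ).le
      have hcons : s i (b k) + ∑ j ∈ Finset.Ico (b k) (b (k + 1)), cap i j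
          = s i (b (k + 1)) := by
        simp only [hs]
        rw [Finset.range_eq_Ico, Finset.range_eq_Ico]
        exact Finset.sum_Ico_consecutive _ (Nat.zero_le _) hbk
      have h1 : T (k + 1) ≤ s i (b (k + 1)) := hbT _ hℓ
      have h2 : s i (b k) ≤ T k + (2 ^ d - 2) := hstep k (by omega)
      have h3 : T (k + 1) = T k + (d.choose (k + 1) + (2 ^ d - 2)) := hTsucc k
      have h4 : ∑ j ∈ Finset.Ico (B (k + 1)) (B (k + 2)), cap i j
          = ∑ j ∈ Finset.Ico (b k) (b (k + 1)), cap i j := rfl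
      rw [h4]
      omega
  -- the finsets of good cells per level
  set P : ℕ → Finset ((_ : ℕ) × Finset (Fin d)) := fun ℓ =>
    (Finset.Ico (B ℓ) (B (ℓ + 1))).sigma
      (fun j => Props.filter (fun W => c (cellF (2 * d ^ 2 * t) d j W) = i)) with hP
  have hPcard : ∀ ℓ, ((Finset.univ : Finset (Fin d)).powersetCard ℓ).card ≤ (P ℓ).card := by
    intro ℓ
    simp only [hP]
    rw [Finset.card_sigma, Finset.card_powersetCard, Finset.card_univ, Fintype.card_fin]
    rcases le_or_gt ℓ d with hℓ | hℓ
    · exact hgroup ℓ hℓ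
    · rw [Nat.choose_eq_zero_of_lt hℓ]
      exact Nat.zero_le _
  have hemb : ∀ ℓ, Nonempty
      ({S // S ∈ (Finset.univ : Finset (Fin d)).powersetCard ℓ} ↪ {p // p ∈ P ℓ}) := by
    intro ℓ
    apply Function.Embedding.nonempty_of_card_le
    simpa [Fintype.card_coe] using hPcard ℓ
  have e : ∀ ℓ, {S // S ∈ (Finset.univ : Finset (Fin d)).powersetCard ℓ} ↪ {p // p ∈ P ℓ} :=
    fun ℓ => (hemb ℓ).some
  have hmemP : ∀ S : Finset (Fin d), S ∈ (Finset.univ : Finset (Fin d)).powersetCard S.card :=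
    fun S => Finset.mem_powersetCard.mpr ⟨Finset.subset_univ S, rfl⟩
  set q : Finset (Fin d) → ((_ : ℕ) × Finset (Fin d)) :=
    fun S => (e S.card ⟨S, hmemP S⟩).val with hq
  have hqP : ∀ S, q S ∈ P S.card := fun S => (e S.card ⟨S, hmemP S⟩).property
  have hqP' : ∀ S : Finset (Fin d), (q S).1 ∈ Finset.Ico (B S.card) (B (S.card + 1)) ∧
      (q S).2 ∈ Props.filter (fun W => c (cellF (2 * d ^ 2 * t) d (q S).1 W) = i) := by
    intro S
    have h1 := hqP S
    simp only [hP] at h1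
    exact Finset.mem_sigma.mp h1
  have hq1 : ∀ S, B S.card ≤ (q S).1 ∧ (q S).1 < B (S.card + 1) :=
    fun S => Finset.mem_Ico.mp (hqP' S).1
  have hq2 : ∀ S, (q S).2 ∈ Props ∧ c (cellF (2 * d ^ 2 * t) d (q S).1 (q S).2) = i :=
    fun S => Finset.mem_filter.mp (hqP' S).2
  have hcardle : ∀ S : Finset (Fin d), S.card ≤ d := by
    intro S
    have := Finset.card_le_card (Finset.subset_univ S)
    simpa using this
  have hjm : ∀ S : Finset (Fin d), (q S).1 * d + d ≤ 2 * d ^ 2 * t := by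
    intro S
    have h1 : (q S).1 < B (S.card + 1) := (hq1 S).2
    have h2 : B (S.card + 1) = b S.card := rfl
    have h3 : b S.card ≤ m := hbm _
    have h4 : (q S).1 + 1 ≤ m := by omega
    calc (q S).1 * d + d = ((q S).1 + 1) * d := by ring
    _ ≤ m * d := Nat.mul_le_mul_right d h4
    _ = 2 * d ^ 2 * t := hmd
  have hblocklt : ∀ S U : Finset (Fin d), S.card < U.card → (q S).1 < (q U).1 := by
    intro S U hSU
    have h1 : (q S).1 < b S.card := (hq1 S).2
    obtain ⟨k, hk⟩ : ∃ k, U.card = k + 1 := ⟨U.card - 1, by omega⟩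
    have h2 : b k ≤ (q U).1 := by
      have := (hq1 U).1
      rw [hk] at this
      exact this
    have h3 : b S.card ≤ b k := by
      have hkd : k ≤ d := by have := hcardle U; omega
      exact hbmono k hkd S.card (by omega)
    omega
  -- cast lemma for dependent equal-card case
  have ecast : ∀ (a a' : ℕ) (hab : a = a') (U : Finset (Fin d))
      (ha : U ∈ (Finset.univ : Finset (Fin d)).powersetCard a)
      (ha' : U ∈ (Finset.univ : Finset (Fin d)).powersetCard a'),
      (e a ⟨U, ha⟩).val = (e a' ⟨U, ha'⟩).val := by
    rintro a a' rfl U ha ha'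
    rfl
  refine ⟨i, fun S => cellF (2 * d ^ 2 * t) d (q S).1 (q S).2, ?_, ?_, ?_⟩
  · -- injectivity
    intro S U hfeq
    simp only [] at hfeq
    by_contra hne
    rcases lt_trichotomy S.card U.card with h | h | h
    · exact cellF_ne (hjm S) (hblocklt S U h) (hProps_ne (hq2 S).1) hfeq
    · -- equal cards
      rcases lt_trichotomy (q S).1 (q U).1 with hb' | hb' | hb'
      · exact cellF_ne (hjm S) hb' (hProps_ne (hq2 S).1) hfeq
      · -- same block
        have hW : (q S).2 = (q U).2 := by
          rw [← hb'] at hfeq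
          exact cellF_injW (hjm S) hfeq
        have hqq : q S = q U := Sigma.ext hb' (heq_of_eq hW)
        have hU' : U ∈ (Finset.univ : Finset (Fin d)).powersetCard S.card := by
          rw [h]; exact hmemP U
        have hv : (e S.card ⟨S, hmemP S⟩).val = (e S.card ⟨U, hU'⟩).val := by
          simp only [hq] at hqq
          rw [hqq]
          exact (ecast U.card S.card h.symm U (hmemP U) hU')
        have : (⟨S, hmemP S⟩ : {x // x ∈ (Finset.univ : Finset (Fin d)).powersetCard S.card})
            = ⟨U, hU'⟩ := (e S.card).injective (Subtype.ext hv)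
        exact hne (congrArg Subtype.val this)
      · exact cellF_ne (hjm U) hb' (hProps_ne (hq2 U).1) hfeq.symm
    · exact cellF_ne (hjm U) (hblocklt U S h) (hProps_ne (hq2 U).1) hfeq.symm
  · -- monotonicity
    intro S U hSU
    rcases eq_or_ne S U with h | h
    · rw [h]
    · have hss : S ⊂ U := Finset.ssubset_iff_subset_ne.mpr ⟨hSU, h⟩
      have hcc : S.card < U.card := Finset.card_lt_card hss
      exact cellF_subset (hblocklt S U hcc)
  · -- color
    intro S
    exact (hq2 S).2
end

section
/- Let k ≥ 2 and let G_1, …, G_t be k-uniform pographs. Then: (i) if N is an integer such that every t-coloring of the k-chains of the chain C_N contains a copy of G_i in color i for some i, then every t-coloring of the k-chains of the Boolean lattice B_{N−1} contains a copy of G_i in color i for some i (so BR^k(G_1,…,G_t) ≤ CR^k(G_1,…,G_t) − 1); and (ii) if n is an integer such that every t-coloring of the k-chains of B_n contains a copy of G_i in color i for some i, then every t-coloring of the k-chains of the chain C_{2^n} contains a copy of G_i in color i for some i (so log_2 CR^k(G_1,…,G_t) ≤ BR^k(G_1,…,G_t)). -/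
def HasPographCopy {Q : Type*} [Preorder Q] {V : Type*} [Preorder V]
    {k t : ℕ} (E : Set (Fin k → V)) (c : (Fin k → Q) → Fin t) (i : Fin t) : Prop :=
  ∃ f : V → Q,
    Function.Injective f ∧
    (∀ x y : V, x ≤ y → f x ≤ f y) ∧
    (∀ e ∈ E, c (f ∘ e) = i)

lemma copy_comp {Q Q' : Type*} [Preorder Q] [Preorder Q'] {V : Type*} [Preorder V]
    {k t : ℕ} {E : Set (Fin k → V)} {c : (Fin k → Q') → Fin t} {i : Fin t}
    (g : Q → Q') (hg : Function.Injective g) (hm : Monotone g)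
    (h : HasPographCopy E (fun e => c (g ∘ e)) i) : HasPographCopy E c i := by
  obtain ⟨f, hf, hmono, hcol⟩ := h
  exact ⟨g ∘ f, hg.comp hf, fun x y hxy => hm (hmono x y hxy),
    fun e he => by simpa [Function.comp_assoc] using hcol e he⟩

/-- `log₂ CR^k(G_1,…,G_t) ≤ BR^k(G_1,…,G_t) ≤ CR^k(G_1,…,G_t) − 1`.
(i) If every `t`-coloring of the `k`-chains of the chain `C_N` contains a copy of
`G i` in color `i` for some `i`, then so does every `t`-coloring of the `k`-chains
of the Boolean lattice `B_{N−1}`.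
(ii) If every `t`-coloring of the `k`-chains of `B_n` contains a copy of `G i` in
color `i` for some `i`, then so does every `t`-coloring of the `k`-chains of the
chain `C_{2^n}`. -/
theorem boolean_vs_chain_ramsey
    (k t : ℕ) (hk : 2 ≤ k)
    (V : Fin t → Type) [∀ i, PartialOrder (V i)] [∀ i, Fintype (V i)]
    (E : ∀ i, Set (Fin k → V i)) (hE : ∀ i, ∀ e ∈ E i, StrictMono e) :
    (∀ N : ℕ,
      (∀ c : (Fin k → Fin N) → Fin t, ∃ i, HasPographCopy (E i) c i) →
      (∀ c : (Fin k → Finset (Fin (N - 1))) → Fin t, ∃ i, HasPographCopy (E i) c i)) ∧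
    (∀ n : ℕ,
      (∀ c : (Fin k → Finset (Fin n)) → Fin t, ∃ i, HasPographCopy (E i) c i) →
      (∀ c : (Fin k → Fin (2 ^ n)) → Fin t, ∃ i, HasPographCopy (E i) c i)) := by
  constructor
  · intro N hN c
    set g : Fin N → Finset (Fin (N - 1)) :=
      fun a => Finset.univ.filter (fun j : Fin (N - 1) => (j : ℕ) < a) with hgdef
    have hgs : StrictMono g := by
      intro a b hab
      refine Finset.ssubset_iff_of_subset ?_ |>.mpr ?_
      · intro j hj
        simp only [hgdef, Finset.mem_filter, Finset.mem_univ, true_and] at hj ⊢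
        exact hj.trans hab
      · have hav : (a : ℕ) < N - 1 := by
          have := a.isLt; have := b.isLt; have : (a:ℕ) < (b:ℕ) := hab; omega
        refine ⟨⟨(a : ℕ), hav⟩, ?_, ?_⟩
        · simp only [hgdef, Finset.mem_filter, Finset.mem_univ, true_and]
          exact hab
        · simp [hgdef]
    obtain ⟨i, hi⟩ := hN (fun e => c (g ∘ e))
    exact ⟨i, copy_comp g hgs.injective hgs.monotone hi⟩
  · intro n hn c
    have hbound : ∀ S : Finset (Fin n), (∑ j ∈ S, 2 ^ (j : ℕ)) < 2 ^ n := by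
      intro S
      calc (∑ j ∈ S, 2 ^ (j : ℕ)) ≤ ∑ j : Fin n, 2 ^ (j : ℕ) :=
            Finset.sum_le_sum_of_subset (Finset.subset_univ S)
        _ = ∑ j ∈ Finset.range n, 2 ^ j := Fin.sum_univ_eq_sum_range _ _
        _ < 2 ^ n := by
            have h : ∀ m : ℕ, ∑ j ∈ Finset.range m, 2 ^ j = 2 ^ m - 1 := by
              intro m
              induction m with
              | zero => simp
              | succ m ih =>
                  rw [Finset.sum_range_succ, ih]
                  have := Nat.one_le_two_pow (n := m)
                  omega
            have := Nat.one_le_two_pow (n := n)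
            rw [h]; omega
    set g : Finset (Fin n) → Fin (2 ^ n) :=
      fun S => ⟨∑ j ∈ S, 2 ^ (j : ℕ), hbound S⟩ with hgdef
    have hginj : Function.Injective g := by
      intro S T hST
      have h1 : (∑ j ∈ S.image Fin.val, 2 ^ j) = ∑ j ∈ T.image Fin.val, 2 ^ j := by
        rw [Finset.sum_image (fun a _ b _ h => Fin.val_injective h),
            Finset.sum_image (fun a _ b _ h => Fin.val_injective h)]
        exact congrArg Fin.val hST
      have h2 := Finset.geomSum_injective le_rfl h1
      exact Finset.image_injective Fin.val_injective h2
    have hgm : Monotone g := by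
      intro S T hST
      simp only [hgdef, Fin.mk_le_mk]
      exact Finset.sum_le_sum_of_subset hST
    obtain ⟨i, hi⟩ := hn (fun e => c (g ∘ e))
    exact ⟨i, copy_comp g hginj hgm hi⟩
end

section
/- Let k ≥ 2 and let G_1, …, G_t be totally-ordered k-uniform pographs, where G_i has vertex set {1 < 2 < … < m_i}. For every integer n ≥ 1: every t-coloring of the k-chains of the Boolean lattice B_n contains a copy of G_i in color i for some i, if and only if every t-coloring of the k-chains of the chain C_{n+1} contains a copy of G_i in color i for some i. (Consequently BR^k(G_1,…,G_t) = CR^k(G_1,…,G_t) − 1.) -/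
/-- for totally-ordered `k`-uniform pographs `G i` (with vertex set
`Fin (m i)` in its linear order and edge set `E i` of strictly increasing
`k`-tuples), and every `n ≥ 1`: every `t`-coloring of the `k`-chains of the Boolean
lattice `B_n` contains a copy of `G i` in color `i` for some `i`, if and only if
every `t`-coloring of the `k`-chains of the chain `C_{n+1}` does.
(Consequently `BR^k(G_1,…,G_t) = CR^k(G_1,…,G_t) − 1`.) -/
theorem boolean_eq_chain_ramsey_totally_ordered
    (k t : ℕ) (hk : 2 ≤ k)
    (m : Fin t → ℕ)
    (E : ∀ i, Set (Fin k → Fin (m i))) (hE : ∀ i, ∀ e ∈ E i, StrictMono e)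
    (n : ℕ) (hn : 1 ≤ n) :
    (∀ c : (Fin k → Finset (Fin n)) → Fin t,
      ∃ (i : Fin t) (φ : Fin (m i) → Finset (Fin n)),
        StrictMono φ ∧ ∀ e ∈ E i, c (φ ∘ e) = i) ↔
    (∀ c : (Fin k → Fin (n + 1)) → Fin t,
      ∃ (i : Fin t) (φ : Fin (m i) → Fin (n + 1)),
        StrictMono φ ∧ ∀ e ∈ E i, c (φ ∘ e) = i) := by
  -- cardinality map B_n → C_{n+1}
  set π : Finset (Fin n) → Fin (n + 1) :=
    fun s => ⟨s.card, Nat.lt_succ_of_le (by simpa using Finset.card_le_card (Finset.subset_univ s))⟩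
    with hπ
  have hπmono : StrictMono π := by
    intro a b hab
    exact Finset.card_lt_card hab
  -- initial segment map C_{n+1} → B_n
  set ι : Fin (n + 1) → Finset (Fin n) :=
    fun a => Finset.univ.filter (fun x : Fin n => (x : ℕ) < (a : ℕ)) with hι
  have hιmono : StrictMono ι := by
    intro a b hab
    constructor
    · intro x hx
      simp only [hι, Finset.mem_filter] at hx ⊢
      exact ⟨hx.1, lt_trans hx.2 hab⟩
    · intro hsub
      have hav : (a : ℕ) < n := lt_of_lt_of_le hab (Nat.lt_succ_iff.mp b.isLt)
      have hxb : (⟨(a : ℕ), hav⟩ : Fin n) ∈ ι b := by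
        simp [hι]
        exact hab
      have hxa := hsub hxb
      simp [hι] at hxa
  constructor
  · intro H c
    obtain ⟨i, φ, hφ, hc⟩ := H (fun f => c (fun j => π (f j)))
    refine ⟨i, fun j => π (φ j), hπmono.comp hφ, fun e he => ?_⟩
    simpa [Function.comp_def] using hc e he
  · intro H c
    obtain ⟨i, φ, hφ, hc⟩ := H (fun f => c (fun j => ι (f j)))
    refine ⟨i, fun j => ι (φ j), hιmono.comp hφ, fun e he => ?_⟩
    simpa [Function.comp_def] using hc e he
end

section
/- Let k ≥ 2 and m_1 ≥ m_2 ≥ … ≥ m_t ≥ 1 be integers. Then: (i) for every integer n with 2^n < k·m_1 + ∑_{i=2}^t (m_i − 1), there exists a t-coloring of the k-chains of the Boolean lattice B_n containing no copy of the k-uniform matching of size m_i in color i for any i; and (ii) for N = ⌈log_2(1 + ∑_{i=1}^t (m_i − 1))⌉ + k − 1, every t-coloring of the k-chains of B_N contains a copy of the k-uniform matching of size m_i in color i for some i. (That is, log_2(k m_1 + ∑_{i=2}^t (m_i−1)) ≤ BR^k(M^k_{m_1},…,M^k_{m_t}) ≤ ⌈log_2(1 + ∑_{i=1}^t (m_i−1))⌉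 + k − 1.) -/
open Finset

/-- A copy of the `k`-uniform matching of size `mm` in color `i`, inside the Boolean
lattice `B_n` whose `k`-tuples are colored by `c`: `mm` strictly increasing
`k`-chains of subsets, all `mm·k` subsets pairwise distinct, each `k`-chain having
color `i`. -/
def HasMatchingCopy {n k t : ℕ} (mm : ℕ)
    (c : (Fin k → Finset (Fin n)) → Fin t) (i : Fin t) : Prop :=
  ∃ A : Fin mm → Fin k → Finset (Fin n),
    (∀ j, StrictMono (A j)) ∧
    Function.Injective (fun p : Fin mm × Fin k => A p.1 p.2) ∧
    (∀ j, c (A j) = i)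

/-- The "binary value" of a subset of `Fin n`. -/
def vvAux {n : ℕ} (S : Finset (Fin n)) : ℕ := ∑ x ∈ S, 2 ^ (x : ℕ)

lemma vvAux_inj {n : ℕ} : Function.Injective (vvAux (n := n)) := by
  intro S T h
  have h' : ∑ i ∈ S.image Fin.val, 2 ^ i = ∑ i ∈ T.image Fin.val, 2 ^ i := by
    rw [Finset.sum_image (by intro a _ b _ hab; exact Fin.val_injective hab),
      Finset.sum_image (by intro a _ b _ hab; exact Fin.val_injective hab)]
    exact h
  have := Finset.geomSum_injective le_rfl h'
  exact Finset.image_injective Fin.val_injective this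

lemma sum_range_two_pow (n : ℕ) : ∑ i ∈ Finset.range n, 2 ^ i = 2 ^ n - 1 := by
  induction n with
  | zero => simp
  | succ n ih => rw [Finset.sum_range_succ, ih]; have := Nat.one_le_two_pow (n := n); ring_nf; omega

lemma vvAux_lt {n : ℕ} (S : Finset (Fin n)) : vvAux S < 2 ^ n := by
  have h1 : vvAux S ≤ ∑ x : Fin n, 2 ^ (x : ℕ) :=
    Finset.sum_le_sum_of_subset (Finset.subset_univ S)
  rw [Fin.sum_univ_eq_sum_range (fun i => 2 ^ i) n, sum_range_two_pow] at h1
  have := Nat.one_le_two_pow (n := n)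
  omega

lemma vvAux_mono {n : ℕ} {S T : Finset (Fin n)} (h : S ⊆ T) : vvAux S ≤ vvAux T :=
  Finset.sum_le_sum_of_subset h

/-- for `k ≥ 2` and `m 0 ≥ m 1 ≥ … ≥ m t ≥ 1` (a `(t+1)`-tuple):
(i) if `2^n < k·(m 0) + ∑_{i=1}^{t} (m i − 1)` then some `(t+1)`-coloring of the
`k`-chains of `B_n` has no copy of the `k`-uniform matching of size `m i` in color
`i` for any `i`; and
(ii) for `N = ⌈log₂(1 + ∑ i (m i − 1))⌉ + k − 1`, every `(t+1)`-coloring of the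
`k`-chains of `B_N` contains a copy of the `k`-uniform matching of size `m i` in
color `i` for some `i`. -/
theorem boolean_ramsey_matchings
    (k t : ℕ) (hk : 2 ≤ k)
    (m : Fin (t + 1) → ℕ)
    (hmono : ∀ i j : Fin (t + 1), i ≤ j → m j ≤ m i)
    (hm : ∀ i, 1 ≤ m i) :
    (∀ n : ℕ, 2 ^ n < k * m 0 + ∑ i : Fin t, (m i.succ - 1) →
      ∃ c : (Fin k → Finset (Fin n)) → Fin (t + 1),
        ∀ i, ¬ HasMatchingCopy (m i) c i) ∧
    (∀ c : (Fin k → Finset (Fin (Nat.clog 2 (1 + ∑ i, (m i - 1)) + k - 1))) → Fin (t + 1),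
        ∃ i, HasMatchingCopy (m i) c i) := by
  constructor
  · -- Part (i): the lower-bound construction
    intro n hn
    -- prefix sums of block sizes
    set d : Fin t → ℕ := fun i => m i.succ - 1 with hd
    set Sm : ℕ → ℕ := fun a => ∑ j ∈ Finset.univ.filter (fun j : Fin t => (j : ℕ) < a), d j
      with hSm
    have hSmmono : ∀ {a b : ℕ}, a ≤ b → Sm a ≤ Sm b := by
      intro a b hab
      apply Finset.sum_le_sum_of_subset
      intro j hj
      simp only [Finset.mem_filter, Finset.mem_univ, true_and] at *
      omega
    have hSmt : Sm t = ∑ j : Fin t, d j := by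
      simp only [hSm]
      rw [Finset.filter_true_of_mem (fun j _ => j.isLt)]
    set L : ℕ := 2 ^ n - Sm t with hL
    have hLSm : 2 ^ n ≤ L + Sm t := le_tsub_add
    have hLlt : L < k * m 0 := by
      have h1 : 2 ^ n < k * m 0 + Sm t := by rw [hSmt]; exact hn
      have h2 : 1 ≤ k * m 0 :=
        Nat.one_le_iff_ne_zero.mpr (Nat.mul_ne_zero (by omega) (by have := hm 0; omega))
      omega
    set bi : ℕ → ℕ := fun q => (Finset.univ.filter (fun j : Fin t => Sm ((j : ℕ) + 1) ≤ q)).card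
      with hbi
    have hbi_lt : ∀ q, q < Sm t → bi q < t := by
      intro q hq
      have ht : 0 < t := by
        by_contra h
        have : t = 0 := by omega
        subst this
        simp [hSm] at hq
      have hnot : (⟨t - 1, by omega⟩ : Fin t) ∉
          Finset.univ.filter (fun j : Fin t => Sm ((j : ℕ) + 1) ≤ q) := by
        simp only [Finset.mem_filter, Finset.mem_univ, true_and]
        intro h
        have : t - 1 + 1 = t := by omega
        rw [this] at h
        omega
      have hss : Finset.univ.filter (fun j : Fin t => Sm ((j : ℕ) + 1) ≤ q) ⊂ Finset.univ := by
        rw [Finset.ssubset_iff_of_subset (Finset.subset_univ _)]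
        exact ⟨_, Finset.mem_univ _, hnot⟩
      have := Finset.card_lt_card hss
      simpa [hbi, Finset.card_univ] using this
    have hbi_mem : ∀ q (i : Fin t), bi q = (i : ℕ) → Sm i ≤ q ∧ q < Sm ((i : ℕ) + 1) := by
      intro q i hq
      rw [hbi] at hq
      simp only at hq
      constructor
      · by_contra h
        push_neg at h
        -- q < Sm i ; then the filter is contained in Iio ⟨i-1⟩ when i ≥ 1
        rcases Nat.eq_zero_or_pos (i : ℕ) with hi0 | hi0
        · rw [hi0] at h
          have : Sm 0 = 0 := by simp [hSm]
          omega
        · have hsub : Finset.univ.filter (fun j : Fin t => Sm ((j : ℕ) + 1) ≤ q) ⊆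
              Finset.Iio (⟨(i : ℕ) - 1, by omega⟩ : Fin t) := by
            intro j hj
            simp only [Finset.mem_filter, Finset.mem_univ, true_and] at hj
            simp only [Finset.mem_Iio, Fin.lt_def]
            show (j : ℕ) < (i : ℕ) - 1
            by_contra hji
            push_neg at hji
            have : (i : ℕ) ≤ (j : ℕ) + 1 := by omega
            have := hSmmono this
            omega
          have := Finset.card_le_card hsub
          rw [Fin.card_Iio] at this
          have h5 : (Finset.univ.filter (fun j : Fin t => Sm ((j : ℕ) + 1) ≤ q)).card ≤
              (i : ℕ) - 1 := this
          omega
      · by_contra h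
        push_neg at h
        have hsub : Finset.Iic i ⊆
            Finset.univ.filter (fun j : Fin t => Sm ((j : ℕ) + 1) ≤ q) := by
          intro j hj
          simp only [Finset.mem_Iic, Fin.le_def] at hj
          simp only [Finset.mem_filter, Finset.mem_univ, true_and]
          exact le_trans (hSmmono (by omega)) h
        have := Finset.card_le_card hsub
        rw [Fin.card_Iic] at this
        omega
    -- the coloring
    set g : ℕ → Fin (t + 1) := fun p =>
      if p < L then 0
      else if h : bi (p - L) < t then Fin.succ ⟨bi (p - L), h⟩ else 0 with hg
    have hg0 : ∀ p, p < 2 ^ n → g p = 0 → p < L := by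
      intro p hp hgp
      rw [hg] at hgp
      simp only at hgp
      split_ifs at hgp with h1 h2
      · exact h1
      · exact absurd hgp (Fin.succ_ne_zero _)
      · exfalso
        apply h2
        apply hbi_lt
        omega
    have hgsucc : ∀ p (i : Fin t), g p = i.succ → L + Sm i ≤ p ∧ p < L + Sm ((i : ℕ) + 1) := by
      intro p i hgp
      rw [hg] at hgp
      simp only at hgp
      split_ifs at hgp with h1 h2
      · exact absurd hgp.symm (Fin.succ_ne_zero _)
      · have : (⟨bi (p - L), h2⟩ : Fin t) = i := Fin.succ_injective _ hgp
        have hbieq : bi (p - L) = (i : ℕ) := by rw [← this]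
        have := hbi_mem _ _ hbieq
        omega
      · exact absurd hgp.symm (Fin.succ_ne_zero _)
    refine ⟨fun A => g (vvAux (A ⟨k - 1, by omega⟩)), ?_⟩
    intro i
    rintro ⟨A, hchain, hinj, hcol⟩
    set top : Fin k := ⟨k - 1, by omega⟩ with htop
    induction i using Fin.cases with
    | zero =>
      -- all m 0 * k sets have value < L
      have hsmall : ∀ j l, vvAux (A j l) < L := by
        intro j l
        have h1 : A j l ⊆ A j top := by
          have : l ≤ top := by
            rw [Fin.le_def]
            have := l.isLt
            simp only [htop]
            omega
          exact ((hchain j).monotone this : A j l ≤ A j top)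
        have h2 : vvAux (A j top) < L :=
          hg0 _ (vvAux_lt _) (hcol j)
        exact lt_of_le_of_lt (vvAux_mono h1) h2
      have hcard : (Finset.univ : Finset (Fin (m 0) × Fin k)).card ≤
          (Finset.range L).card := by
        apply Finset.card_le_card_of_injOn (fun p => vvAux (A p.1 p.2))
        · intro p _
          simp only [Finset.mem_coe, Finset.mem_range]
          exact hsmall p.1 p.2
        · intro p _ q _ hpq
          have h1 : A p.1 p.2 = A q.1 q.2 := vvAux_inj hpq
          exact hinj h1
      simp only [Finset.card_univ, Fintype.card_prod, Fintype.card_fin,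
        Finset.card_range] at hcard
      have : m 0 * k = k * m 0 := Nat.mul_comm _ _
      omega
    | succ i =>
      -- the m i.succ tops have values in an interval of size m i.succ - 1
      have hcard : (Finset.univ : Finset (Fin (m i.succ))).card ≤
          (Finset.Ico (L + Sm i) (L + Sm ((i : ℕ) + 1))).card := by
        apply Finset.card_le_card_of_injOn (fun j => vvAux (A j top))
        · intro j _
          simp only [Finset.mem_coe, Finset.mem_Ico]
          exact hgsucc _ _ (hcol j)
        · intro p _ q _ hpq
          have h1 : A p top = A q top := vvAux_inj hpq
          have h2 : ((p, top) : Fin (m i.succ) × Fin k) = (q, top) := hinj h1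
          exact congrArg Prod.fst h2
      have hSmsucc : Sm ((i : ℕ) + 1) = d i + Sm i := by
        rw [hSm]
        simp only
        have hins : Finset.univ.filter (fun j : Fin t => (j : ℕ) < (i : ℕ) + 1) =
            insert i (Finset.univ.filter (fun j : Fin t => (j : ℕ) < (i : ℕ))) := by
          ext j
          simp only [Finset.mem_filter, Finset.mem_univ, true_and, Finset.mem_insert]
          constructor
          · intro h
            rcases Nat.lt_succ_iff_lt_or_eq.mp h with h | h
            · exact Or.inr h
            · exact Or.inl (Fin.ext h)
          · rintro (rfl | h)
            · omega
            · omega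
        rw [hins, Finset.sum_insert (by simp)]
      simp only [Finset.card_univ, Fintype.card_fin, Nat.card_Ico] at hcard
      have hmi := hm i.succ
      rw [hd] at hSmsucc
      simp only at hSmsucc
      omega
  · -- Part (ii): the upper bound
    intro c
    revert c
    set M : ℕ := ∑ i, (m i - 1) with hM
    set n0 : ℕ := Nat.clog 2 (1 + M) with hn0
    set N : ℕ := n0 + k - 1 with hN
    intro c
    have hn0N : n0 + 1 ≤ N := by omega
    -- the chains
    set D : Finset (Fin n0) → Fin k → Finset (Fin N) := fun S j =>
      Finset.univ.filter (fun x : Fin N =>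
        (∃ y ∈ S, (y : ℕ) = (x : ℕ)) ∨ (n0 ≤ (x : ℕ) ∧ (x : ℕ) < n0 + (j : ℕ))) with hD
    have hmemD : ∀ S j (x : Fin N), x ∈ D S j ↔
        ((∃ y ∈ S, (y : ℕ) = (x : ℕ)) ∨ (n0 ≤ (x : ℕ) ∧ (x : ℕ) < n0 + (j : ℕ))) := by
      intro S j x
      rw [hD]
      simp
    have hDmono : ∀ S, StrictMono (D S) := by
      intro S j j' hjj'
      have hsub : D S j ⊆ D S j' := by
        intro x hx
        rw [hmemD] at hx ⊢
        rcases hx with h | h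
        · exact Or.inl h
        · refine Or.inr ⟨h.1, ?_⟩
          have : (j : ℕ) < (j' : ℕ) := hjj'
          omega
      rw [Finset.lt_iff_ssubset, Finset.ssubset_iff_of_subset hsub]
      have hjlt : (j : ℕ) < (j' : ℕ) := hjj'
      have hj'le : (j' : ℕ) ≤ k - 1 := by have := j'.isLt; omega
      refine ⟨⟨n0 + (j : ℕ), by omega⟩, ?_, ?_⟩
      · rw [hmemD]
        exact Or.inr ⟨Nat.le_add_right _ _, show n0 + (j : ℕ) < n0 + (j' : ℕ) by omega⟩
      · rw [hmemD]
        rintro (⟨y, _, hy⟩ | h)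
        · have hy2 : (y : ℕ) = n0 + (j : ℕ) := hy
          have := y.isLt; omega
        · exact absurd (h.2 : n0 + (j : ℕ) < n0 + (j : ℕ)) (lt_irrefl _)
    have hDle : ∀ S S' (j j' : Fin k), D S j = D S' j' → (j : ℕ) ≤ (j' : ℕ) := by
      intro S S' j j' heq
      by_contra h
      push_neg at h
      have hjle : (j : ℕ) ≤ k - 1 := by have := j.isLt; omega
      have hx : (⟨n0 + (j' : ℕ), by omega⟩ : Fin N) ∈ D S j := by
        rw [hmemD]
        exact Or.inr ⟨Nat.le_add_right _ _, show n0 + (j' : ℕ) < n0 + (j : ℕ) by omega⟩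
      rw [heq, hmemD] at hx
      rcases hx with ⟨y, _, hy⟩ | hx
      · have hy2 : (y : ℕ) = n0 + (j' : ℕ) := hy
        have := y.isLt; omega
      · exact absurd (hx.2 : n0 + (j' : ℕ) < n0 + (j' : ℕ)) (lt_irrefl _)
    have hDinj : ∀ S S' (j j' : Fin k), D S j = D S' j' → S = S' ∧ j = j' := by
      intro S S' j j' heq
      have hj : j = j' := Fin.ext (le_antisymm (hDle _ _ _ _ heq) (hDle _ _ _ _ heq.symm))
      refine ⟨?_, hj⟩
      ext y
      have hyN : (y : ℕ) < N := by have := y.isLt; omega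
      have hkey : ∀ (T : Finset (Fin n0)) (l : Fin k),
          y ∈ T ↔ (⟨(y : ℕ), hyN⟩ : Fin N) ∈ D T l := by
        intro T l
        rw [hmemD]
        constructor
        · intro h
          exact Or.inl ⟨y, h, rfl⟩
        · rintro (⟨y', hy', hyy'⟩ | h)
          · have h3 : (y' : ℕ) = (y : ℕ) := hyy'
            exact Fin.val_injective h3 ▸ hy'
          · have h4 : n0 ≤ (y : ℕ) := h.1
            have := y.isLt; omega
      rw [hkey S j, hkey S' j', heq]
    -- pigeonhole
    have key : ∃ i : Fin (t + 1),
        m i ≤ (Finset.univ.filter fun S : Finset (Fin n0) => c (D S) = i).card := by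
      by_contra h
      push_neg at h
      have h1 : (Finset.univ : Finset (Finset (Fin n0))).card =
          ∑ i : Fin (t + 1), (Finset.univ.filter fun S : Finset (Fin n0) => c (D S) = i).card :=
        Finset.card_eq_sum_card_fiberwise (fun S _ => Finset.mem_univ (c (D S)))
      have h2 : (Finset.univ : Finset (Finset (Fin n0))).card = 2 ^ n0 := by
        rw [Finset.card_univ, Fintype.card_finset, Fintype.card_fin]
      have h3 : 1 + M ≤ 2 ^ n0 := Nat.le_pow_clog one_lt_two _
      have h4 : ∑ i : Fin (t + 1),
          (Finset.univ.filter fun S : Finset (Fin n0) => c (D S) = i).card ≤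
          ∑ i : Fin (t + 1), (m i - 1) := by
        apply Finset.sum_le_sum
        intro i _
        have := h i
        have := hm i
        omega
      rw [← hM] at h4
      omega
    obtain ⟨i, hi⟩ := key
    obtain ⟨s, hssub, hscard⟩ := Finset.exists_subset_card_eq hi
    refine ⟨i, ?_⟩
    set e : Fin (m i) → Finset (Fin n0) := fun j => (s.equivFin.symm (Fin.cast hscard.symm j) : Finset (Fin n0)) with he
    have hemem : ∀ j, e j ∈ s := fun j => (s.equivFin.symm _).2
    have heinj : Function.Injective e := by
      intro p q hpq
      have : s.equivFin.symm (Fin.cast hscard.symm p) = s.equivFin.symm (Fin.cast hscard.symm q) :=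
        Subtype.ext hpq
      have := s.equivFin.symm.injective this
      exact Fin.cast_injective _ this
    refine ⟨fun j => D (e j), fun j => hDmono (e j), ?_, ?_⟩
    · intro p q hpq
      simp only at hpq
      obtain ⟨h1, h2⟩ := hDinj _ _ _ _ hpq
      exact Prod.ext (heinj h1) h2
    · intro j
      have := hssub (hemem j)
      simp only [Finset.mem_filter] at this
      exact this.2
end

section
/- For positive integers r_1, …, r_t, the least integer N such that every t-coloring of the 2-chains of the Boolean lattice B_N contains an r_i-cup in color i for some i ∈ {1,…,t} equals ⌈log_2(2 + ∑_{i=1}^t (r_i − 1))⌉; moreover the same value ⌈log_2(2 + ∑_{i=1}^t (r_i − 1))⌉ is the least integer N such that every t-coloring of the 2-chains of B_N contains an r_i-cap in color i for some i. (That is, BR^2(∨_{r_1},…,∨_{r_t}) = BR^2(∧_{r_1},…,∧_{r_t}) = ⌈log_2(2 + ∑_{i=1}^t (r_i − 1))⌉.) -/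
/-- An `r`-cup in color `i` for a coloring `c` of the 2-chains of a poset `Q`:
distinct elements `X, Y 1, …, Y r` with `X < Y k` and `c X (Y k) = i` for all `k`. -/
def IsCup {Q : Type*} [Preorder Q] {κ : Type*} (c : Q → Q → κ) (i : κ) (r : ℕ) : Prop :=
  ∃ (X : Q) (Y : Fin r → Q),
    Function.Injective Y ∧ ∀ k, X < Y k ∧ c X (Y k) = i

/-- An `s`-cap in color `i` for a coloring `c` of the 2-chains of a poset `Q`:
distinct elements `Y, X 1, …, X s` with `X k < Y` and `c (X k) Y = i` for all `k`. -/
def IsCap {Q : Type*} [Preorder Q] {κ : Type*} (c : Q → Q → κ) (i : κ) (s : ℕ) : Prop :=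
  ∃ (Y : Q) (X : Fin s → Q),
    Function.Injective X ∧ ∀ k, X k < Y ∧ c (X k) Y = i

/-- Pigeonhole: if a finite set has more than `∑ (r i - 1)` elements, some fiber of a
coloring `f` has at least `r i` elements. -/
lemma pigeon_fiber {Q : Type*} [DecidableEq Q] {t : ℕ} (r : Fin t → ℕ) (hr : ∀ i, 1 ≤ r i)
    (s : Finset Q) (f : Q → Fin t) (hs : 1 + ∑ i, (r i - 1) ≤ s.card) :
    ∃ i, r i ≤ (s.filter (fun x => f x = i)).card := by
  by_contra h
  push_neg at h
  have hsum : s.card = ∑ i : Fin t, (s.filter (fun x => f x = i)).card :=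
    Finset.card_eq_sum_card_fiberwise (fun x _ => Finset.mem_univ (f x))
  have : s.card ≤ ∑ i : Fin t, (r i - 1) := by
    rw [hsum]
    apply Finset.sum_le_sum
    intro i _
    have := h i
    have := hr i
    omega
  omega

/-- Spread: if a finite set has at most `∑ (r i - 1)` elements, there is a coloring `g`
all of whose fibers (within `s`) have at most `r i - 1` elements. -/
lemma spread_fiber {Q : Type*} [DecidableEq Q] {t : ℕ} (ht : 1 ≤ t) (r : Fin t → ℕ)
    (s : Finset Q) (hs : s.card ≤ ∑ i, (r i - 1)) :
    ∃ g : Q → Fin t, ∀ i, (s.filter (fun x => g x = i)).card ≤ r i - 1 := by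
  classical
  set T : Finset ((_ : Fin t) × ℕ) :=
    Finset.univ.sigma (fun i : Fin t => Finset.range (r i - 1)) with hT
  have hTcard : T.card = ∑ i, (r i - 1) := by
    rw [hT, Finset.card_sigma]
    simp
  have h2 : s.card ≤ T.card := by rw [hTcard]; exact hs
  set φ : {x // x ∈ s} → {p // p ∈ T} :=
    fun x => T.equivFin.symm (Fin.castLE h2 (s.equivFin x)) with hφdef
  have hφ : Function.Injective φ := by
    intro a b hab
    apply s.equivFin.injective
    apply Fin.castLE_injective h2
    apply T.equivFin.symm.injective
    exact hab
  refine ⟨fun x => if h : x ∈ s then (φ ⟨x, h⟩).1.1 else ⟨0, ht⟩, fun i => ?_⟩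
  rw [← Finset.card_range (r i - 1)]
  apply Finset.card_le_card_of_injOn
    (f := fun x => if h : x ∈ s then (φ ⟨x, h⟩).1.2 else 0) (t := Finset.range (r i - 1))
  · intro x hx
    rw [Finset.mem_coe, Finset.mem_filter] at hx
    obtain ⟨hxs, hgx⟩ := hx
    simp only [dif_pos hxs] at hgx ⊢
    have hmem : (φ ⟨x, hxs⟩).1 ∈ Finset.univ.sigma (fun i : Fin t => Finset.range (r i - 1)) :=
      (φ ⟨x, hxs⟩).2
    rw [Finset.mem_sigma] at hmem
    rw [← hgx]
    exact hmem.2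
  · intro x hx y hy hxy
    simp only [Finset.coe_filter, Set.mem_setOf_eq] at hx hy
    obtain ⟨hxs, hgx⟩ := hx
    obtain ⟨hys, hgy⟩ := hy
    simp only [dif_pos hxs] at hgx
    simp only [dif_pos hys] at hgy
    simp only [dif_pos hxs, dif_pos hys] at hxy
    have : (φ ⟨x, hxs⟩).1 = (φ ⟨y, hys⟩).1 :=
      Sigma.ext (hgx.trans hgy.symm) (heq_of_eq hxy)
    have := hφ (Subtype.ext this)
    exact congrArg Subtype.val this

/-- Extract an injective `Fin n`-indexed family from a finset of size at least `n`. -/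
lemma exists_inj_fin {Q : Type*} (u : Finset Q) {n : ℕ} (h : n ≤ u.card) :
    ∃ Y : Fin n → Q, Function.Injective Y ∧ ∀ k, Y k ∈ u := by
  refine ⟨fun k => (u.equivFin.symm (Fin.castLE h k)).1, ?_, fun k => (u.equivFin.symm _).2⟩
  intro a b hab
  exact Fin.castLE_injective h (u.equivFin.symm.injective (Subtype.ext hab))

/-- `BR^2(∨_{r 0},…,∨_{r (t-1)}) = BR^2(∧_{r 0},…,∧_{r (t-1)})
= ⌈log₂(2 + ∑ i (r i − 1))⌉`: this value is the least `N` such that every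
`t`-coloring of the 2-chains of the Boolean lattice `B_N` contains an `r i`-cup in
color `i` for some `i`, and also the least `N` for which the same holds with caps. -/
theorem boolean_ramsey_cups_and_caps
    (t : ℕ) (ht : 1 ≤ t) (r : Fin t → ℕ) (hr : ∀ i, 1 ≤ r i) :
    IsLeast
      {N : ℕ | ∀ c : Finset (Fin N) → Finset (Fin N) → Fin t,
        ∃ i, IsCup c i (r i)}
      (Nat.clog 2 (2 + ∑ i, (r i - 1))) ∧
    IsLeast
      {N : ℕ | ∀ c : Finset (Fin N) → Finset (Fin N) → Fin t,
        ∃ i, IsCap c i (r i)}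
      (Nat.clog 2 (2 + ∑ i, (r i - 1))) := by
  classical
  set S := ∑ i, (r i - 1) with hS
  set M := Nat.clog 2 (2 + S) with hM
  -- basic cardinality facts in B_M
  have hpow : 2 + S ≤ 2 ^ M := Nat.le_pow_clog (by norm_num) _
  have hcardM : (Finset.univ : Finset (Finset (Fin M))).card = 2 ^ M := by
    rw [Finset.card_univ, Fintype.card_finset, Fintype.card_fin]
  constructor
  · constructor
    · -- membership: every coloring of B_M has a cup
      intro c
      set s : Finset (Finset (Fin M)) := Finset.univ.filter (fun Y => Y ≠ ∅) with hs
      have hscard : s.card = 2 ^ M - 1 := by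
        rw [hs, Finset.filter_ne', Finset.card_erase_of_mem (Finset.mem_univ _), hcardM]
      have hbig : 1 + S ≤ s.card := by omega
      obtain ⟨i, hi⟩ := pigeon_fiber r hr s (fun Y => c ∅ Y) hbig
      obtain ⟨Y, hYinj, hYmem⟩ := exists_inj_fin _ hi
      refine ⟨i, ∅, Y, hYinj, fun k => ?_⟩
      have := hYmem k
      rw [Finset.mem_filter] at this
      obtain ⟨h1, h2⟩ := this
      rw [hs, Finset.mem_filter] at h1
      refine ⟨?_, h2⟩
      have : Y k ≠ ⊥ := by simpa using h1.2
      exact bot_lt_iff_ne_bot.mpr this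
    · -- lower bound for cups
      intro N hN
      rw [hM, Nat.clog_le_iff_le_pow (by norm_num : (1:ℕ) < 2)]
      by_contra hcon
      push_neg at hcon
      set s : Finset (Finset (Fin N)) := Finset.univ.filter (fun Y => Y ≠ ∅) with hs
      have hscard : s.card = 2 ^ N - 1 := by
        rw [hs, Finset.filter_ne', Finset.card_erase_of_mem (Finset.mem_univ _),
          Finset.card_univ, Fintype.card_finset, Fintype.card_fin]
      have hsmall : s.card ≤ S := by
        have : 1 ≤ 2 ^ N := Nat.one_le_two_pow
        omega
      obtain ⟨g, hg⟩ := spread_fiber ht r s hsmall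
      obtain ⟨i, X, Y, hYinj, hY⟩ := hN (fun _ Y => g Y)
      have hle : r i ≤ (s.filter (fun x => g x = i)).card := by
        have := Finset.card_le_card_of_injOn Y
          (t := s.filter (fun x => g x = i)) (s := (Finset.univ : Finset (Fin (r i))))
          (fun k _ => by
            rw [Finset.mem_coe, Finset.mem_filter, hs, Finset.mem_filter]
            refine ⟨⟨Finset.mem_univ _, ?_⟩, (hY k).2⟩
            have : (⊥ : Finset (Fin N)) < Y k := lt_of_le_of_lt bot_le (hY k).1
            simpa using bot_lt_iff_ne_bot.mp this)
          (fun a _ b _ hab => hYinj hab)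
        simpa using this
      have := hg i
      have := hr i
      omega
  · constructor
    · -- membership: every coloring of B_M has a cap
      intro c
      set s : Finset (Finset (Fin M)) := Finset.univ.filter (fun X => X ≠ Finset.univ) with hs
      have hscard : s.card = 2 ^ M - 1 := by
        rw [hs, Finset.filter_ne', Finset.card_erase_of_mem (Finset.mem_univ _), hcardM]
      have hbig : 1 + S ≤ s.card := by omega
      obtain ⟨i, hi⟩ := pigeon_fiber r hr s (fun X => c X Finset.univ) hbig
      obtain ⟨X, hXinj, hXmem⟩ := exists_inj_fin _ hi
      refine ⟨i, Finset.univ, X, hXinj, fun k => ?_⟩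
      have := hXmem k
      rw [Finset.mem_filter] at this
      obtain ⟨h1, h2⟩ := this
      rw [hs, Finset.mem_filter] at h1
      refine ⟨?_, h2⟩
      have : X k ≠ ⊤ := by simpa [Finset.top_eq_univ] using h1.2
      exact lt_top_iff_ne_top.mpr this
    · -- lower bound for caps
      intro N hN
      rw [hM, Nat.clog_le_iff_le_pow (by norm_num : (1:ℕ) < 2)]
      by_contra hcon
      push_neg at hcon
      set s : Finset (Finset (Fin N)) := Finset.univ.filter (fun X => X ≠ Finset.univ) with hs
      have hscard : s.card = 2 ^ N - 1 := by
        rw [hs, Finset.filter_ne', Finset.card_erase_of_mem (Finset.mem_univ _),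
          Finset.card_univ, Fintype.card_finset, Fintype.card_fin]
      have hsmall : s.card ≤ S := by
        have : 1 ≤ 2 ^ N := Nat.one_le_two_pow
        omega
      obtain ⟨g, hg⟩ := spread_fiber ht r s hsmall
      obtain ⟨i, Yt, X, hXinj, hX⟩ := hN (fun X _ => g X)
      have hle : r i ≤ (s.filter (fun x => g x = i)).card := by
        have := Finset.card_le_card_of_injOn X
          (t := s.filter (fun x => g x = i)) (s := (Finset.univ : Finset (Fin (r i))))
          (fun k _ => by
            rw [Finset.mem_coe, Finset.mem_filter, hs, Finset.mem_filter]
            refine ⟨⟨Finset.mem_univ _, ?_⟩, (hX k).2⟩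
            have : X k < (⊤ : Finset (Fin N)) := lt_of_lt_of_le (hX k).1 le_top
            simpa [Finset.top_eq_univ] using lt_top_iff_ne_top.mp this)
          (fun a _ b _ hab => hXinj hab)
        simpa using this
      have := hg i
      have := hr i
      omega
end
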